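/- arXiv:1003.1489 — 6 statements merged into one kernel-verified Lean document; each statement's English description precedes it below -/
import Mathlib

section
/- For every fixed integer d ≥ 2 and every nonempty finite set Q of prime numbers, the root α(Q,d) does not exceed the unique positive root of the equation 1/ζ(x) = (d−1)/d, where ζ is the Riemann zeta function; in particular, for d = 2 and any Q, α(Q,2) ≤ 1.7286…, the root of ζ(x) = 2. -/
open Filter

open Complex

noncomputable def etaAux (s : ℂ) : ℂ :=
  ∑' k : ℕ, (((2 * k + 1 : ℕ) : ℂ) ^ (-s) - ((2 * k + 2 : ℕ) : ℂ) ^ (-s))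

lemma etaTerm_norm_le {s : ℂ} (hs : 0 < s.re) (k : ℕ) :
    ‖((2 * k + 1 : ℕ) : ℂ) ^ (-s) - ((2 * k + 2 : ℕ) : ℂ) ^ (-s)‖
      ≤ ‖s‖ * ((2 * k + 1 : ℝ)) ^ (-s.re - 1) := by
  set a : ℝ := 2 * k + 1 with ha
  set b : ℝ := 2 * k + 2 with hb
  have hk : (0 : ℝ) ≤ (k : ℝ) := Nat.cast_nonneg k
  have ha1 : (1 : ℝ) ≤ a := by rw [ha]; linarith
  have hab : a ≤ b := by rw [ha, hb]; linarith
  have hderiv : ∀ t ∈ Set.Icc a b,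
      HasDerivWithinAt (fun t : ℝ => ((t : ℂ)) ^ (-s)) (-s * (t : ℂ) ^ (-s - 1)) (Set.Icc a b) t := by
    intro t ht
    have ht0 : (0 : ℝ) < t := lt_of_lt_of_le (by linarith) ht.1
    have hsl : (t : ℂ) ∈ Complex.slitPlane := Complex.ofReal_mem_slitPlane.2 ht0
    have := (Complex.hasStrictDerivAt_cpow_const (c := -s) hsl).hasDerivAt.comp_ofReal
    exact this.hasDerivWithinAt
  have hbound : ∀ t ∈ Set.Icc a b, ‖-s * (t : ℂ) ^ (-s - 1)‖ ≤ ‖s‖ * a ^ (-s.re - 1) := by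
    intro t ht
    have ht0 : (0 : ℝ) < t := lt_of_lt_of_le (by linarith) ht.1
    rw [norm_mul, norm_neg]
    gcongr
    rw [Complex.norm_cpow_eq_rpow_re_of_pos ht0]
    have : (-s - 1).re = -s.re - 1 := by simp
    rw [this]
    exact Real.rpow_le_rpow_of_nonpos (by linarith) ht.1 (by linarith)
  have key := (convex_Icc a b).norm_image_sub_le_of_norm_hasDerivWithin_le hderiv hbound
    (Set.left_mem_Icc.2 hab) (Set.right_mem_Icc.2 hab)
  have hcast1 : ((2 * k + 1 : ℕ) : ℂ) = ((a : ℝ) : ℂ) := by push_cast [ha]; ring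
  have hcast2 : ((2 * k + 2 : ℕ) : ℂ) = ((b : ℝ) : ℂ) := by push_cast [hb]; ring
  rw [hcast1, hcast2, norm_sub_rev]
  calc ‖((b:ℝ):ℂ) ^ (-s) - ((a:ℝ):ℂ) ^ (-s)‖ ≤ ‖s‖ * a ^ (-s.re - 1) * ‖b - a‖ := key
    _ = ‖s‖ * a ^ (-s.re - 1) := by
        have : b - a = 1 := by rw [ha, hb]; ring
        rw [this]; simp

lemma etaTerm_summable_bound {σ : ℝ} (hσ : 0 < σ) :
    Summable (fun k : ℕ => ((2 * k + 1 : ℝ)) ^ (-σ - 1)) := by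
  have h1 : Summable (fun k : ℕ => ((k : ℝ) + 1) ^ (-σ - 1)) := by
    have := (summable_nat_add_iff 1).mpr (Real.summable_nat_rpow.mpr (by linarith : -σ - 1 < -1))
    simpa using this
  refine h1.of_nonneg_of_le (fun k => Real.rpow_nonneg (by positivity) _) (fun k => ?_)
  have hk : (0 : ℝ) ≤ (k : ℝ) := Nat.cast_nonneg k
  exact Real.rpow_le_rpow_of_nonpos (by linarith) (by linarith) (by linarith)

lemma etaAux_differentiableAt {s₀ : ℂ} (h : 0 < s₀.re) : DifferentiableAt ℂ etaAux s₀ := by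
  set σ : ℝ := s₀.re / 2 with hσdef
  have hσ : 0 < σ := by positivity
  set U : Set ℂ := {s : ℂ | σ < s.re} ∩ Metric.ball s₀ 1 with hU
  have hUopen : IsOpen U := ((isOpen_lt continuous_const Complex.continuous_re).inter
    Metric.isOpen_ball)
  have hmem : s₀ ∈ U := ⟨by simp only [Set.mem_setOf_eq]; linarith, Metric.mem_ball_self one_pos⟩
  have hd : DifferentiableOn ℂ etaAux U := by
    have := differentiableOn_tsum_of_summable_norm
      (u := fun k : ℕ => (‖s₀‖ + 1) * ((2 * k + 1 : ℝ)) ^ (-σ - 1))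
      (F := fun (k : ℕ) (s : ℂ) => ((2 * k + 1 : ℕ) : ℂ) ^ (-s) - ((2 * k + 2 : ℕ) : ℂ) ^ (-s))
      (U := U) ((etaTerm_summable_bound hσ).mul_left _) ?_ hUopen ?_
    · exact this.congr (fun s _ => rfl)
    · intro k
      refine DifferentiableOn.sub ?_ ?_ <;>
      · apply DifferentiableOn.const_cpow (differentiable_neg.differentiableOn)
        refine Or.inl (Nat.cast_ne_zero.mpr (by omega))
    · intro k w hw
      have hw1 : σ < w.re := hw.1
      have hwnorm : ‖w‖ ≤ ‖s₀‖ + 1 := by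
        have := hw.2
        rw [Metric.mem_ball, dist_eq_norm] at this
        calc ‖w‖ = ‖s₀ + (w - s₀)‖ := by ring_nf
          _ ≤ ‖s₀‖ + ‖w - s₀‖ := norm_add_le _ _
          _ ≤ ‖s₀‖ + 1 := by rw [norm_sub_rev] at this ⊢; linarith
      calc ‖((2 * k + 1 : ℕ) : ℂ) ^ (-w) - ((2 * k + 2 : ℕ) : ℂ) ^ (-w)‖
          ≤ ‖w‖ * ((2 * k + 1 : ℝ)) ^ (-w.re - 1) := etaTerm_norm_le (by linarith) k
        _ ≤ (‖s₀‖ + 1) * ((2 * k + 1 : ℝ)) ^ (-σ - 1) := by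
            have hk : (0 : ℝ) ≤ (k : ℝ) := Nat.cast_nonneg k
            refine mul_le_mul hwnorm ?_ (Real.rpow_nonneg (by linarith) _) (by positivity)
            exact Real.rpow_le_rpow_of_exponent_le (by linarith) (by linarith)
  exact (hd.differentiableAt (hUopen.mem_nhds hmem))

lemma etaAux_eq_of_one_lt {s : ℂ} (hs : 1 < s.re) :
    etaAux s = (1 - 2 * (2 : ℂ) ^ (-s)) * riemannZeta s := by
  set F : ℕ → ℂ := fun n => (n : ℂ) ^ (-s) with hF
  have hnorm : Summable (fun n => ‖F n‖) := by
    have := summable_riemannZetaSummand hs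
    simpa only [riemannZetaSummandHom, MonoidWithZeroHom.coe_mk, ZeroHom.coe_mk] using this
  have hsum : Summable F := hnorm.of_norm
  have hζ : ∑' n, F n = riemannZeta s := by
    have := tsum_riemannZetaSummand hs
    simpa only [riemannZetaSummandHom, MonoidWithZeroHom.coe_mk, ZeroHom.coe_mk] using this
  have hse : Summable (fun k => F (2 * k)) :=
    ((hnorm.comp_injective (fun a b hab => by omega)).of_norm)
  have hso : Summable (fun k => F (2 * k + 1)) :=
    ((hnorm.comp_injective (fun a b hab => by omega)).of_norm)
  have hs2 : Summable (fun k => F (2 * k + 2)) :=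
    ((hnorm.comp_injective (fun a b hab => by omega)).of_norm)
  have heo : (∑' k, F (2 * k)) + ∑' k, F (2 * k + 1) = ∑' n, F n :=
    tsum_even_add_odd hse hso
  have hF0 : F 0 = 0 := by
    simp only [hF, Nat.cast_zero]
    exact zero_cpow (neg_ne_zero.mpr (ne_zero_of_one_lt_re hs))
  have he0 : ∑' k, F (2 * k) = ∑' k, F (2 * k + 2) := by
    rw [Summable.tsum_eq_zero_add hse]
    have hk : ∀ k : ℕ, F (2 * (k + 1)) = F (2 * k + 2) := fun k => by rw [show 2 * (k + 1) = 2 * k + 2 from by omega]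
    simp [hF0, hk]
  have hhalf : ∀ k : ℕ, F (2 * k + 2) = (2 : ℂ) ^ (-s) * F (k + 1) := by
    intro k
    have hmul := Complex.mul_cpow_ofReal_nonneg (a := 2) (b := ((k : ℝ) + 1))
      (by norm_num) (by positivity) (r := -s)
    have h1 : ((2 * k + 2 : ℕ) : ℂ) = ((((2 : ℝ) * ((k : ℝ) + 1)) : ℝ) : ℂ) := by push_cast; ring
    have h2 : ((k + 1 : ℕ) : ℂ) = (((k : ℝ) + 1 : ℝ) : ℂ) := by push_cast; ring
    simp only [hF]
    rw [h1, h2, Complex.ofReal_mul, hmul]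
    norm_num
  have htail : ∑' k, F (k + 1) = riemannZeta s := by
    have := Summable.tsum_eq_zero_add hsum
    rw [hF0, zero_add] at this
    rw [← this, hζ]
  have h22 : ∑' k, F (2 * k + 2) = (2 : ℂ) ^ (-s) * riemannZeta s := by
    rw [tsum_congr hhalf, tsum_mul_left, htail]
  have hodd : ∑' k, F (2 * k + 1) = riemannZeta s - (2 : ℂ) ^ (-s) * riemannZeta s := by
    have := heo
    rw [he0, h22, hζ] at this
    linear_combination this
  have hsplit : etaAux s = (∑' k, F (2 * k + 1)) - ∑' k, F (2 * k + 2) := by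
    unfold etaAux
    simp only [hF]
    exact Summable.tsum_sub hso hs2
  rw [hsplit, hodd, h22]
  ring

lemma etaAux_eq_ofReal {x : ℝ} (hx : 0 < x) (hx1 : (x : ℂ) ≠ 1) :
    etaAux (x : ℂ) = (1 - 2 * (2 : ℂ) ^ (-(x : ℂ))) * riemannZeta (x : ℂ) := by
  set s : ℂ := (x : ℂ) with hs
  have h0 : 0 < s.re := by simp [hs, hx]
  have h1 : s ≠ 1 := hx1
  set h : ℂ → ℂ := fun z => etaAux z - (1 - 2 * (2 : ℂ) ^ (-z)) * riemannZeta z with hh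
  have hfac : ∀ z : ℂ, DifferentiableAt ℂ (fun w => (1 : ℂ) - 2 * (2 : ℂ) ^ (-w)) z := by
    intro z
    apply DifferentiableAt.sub (differentiableAt_const _)
    apply DifferentiableAt.mul (differentiableAt_const _)
    exact DifferentiableAt.const_cpow (differentiable_neg.differentiableAt) (Or.inl two_ne_zero)
  have hdiffh : ∀ z : ℂ, 0 < z.re → z ≠ 1 → DifferentiableAt ℂ h z := by
    intro z hz hz1
    exact ((etaAux_differentiableAt hz).sub
      (((hfac z)).mul (differentiableAt_riemannZeta hz1)))
  set W : Set ℂ := {z : ℂ | 0 < z.re} ∩ {z : ℂ | 0 < z.im} with hW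
  have hWopen : IsOpen W := (isOpen_lt continuous_const Complex.continuous_re).inter
    (isOpen_lt continuous_const Complex.continuous_im)
  have hWzero : Set.EqOn h 0 W := by
    have han : AnalyticOnNhd ℂ h W := by
      refine DifferentiableOn.analyticOnNhd (fun z hz => ?_) hWopen
      refine (hdiffh z hz.1 ?_).differentiableWithinAt
      intro hz1
      rw [hz1] at hz
      simpa using hz.2
    have hpre : IsPreconnected W :=
      ((convex_halfSpace_re_gt 0).inter (convex_halfSpace_im_gt 0)).isPreconnected
    have hz₀ : (2 + Complex.I) ∈ W := by
      constructor <;> simp [Complex.add_re, Complex.add_im]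
    refine han.eqOn_zero_of_preconnected_of_eventuallyEq_zero hpre hz₀ ?_
    have hmem : {z : ℂ | 1 < z.re} ∈ nhds (2 + Complex.I) := by
      refine (isOpen_lt continuous_const Complex.continuous_re).mem_nhds ?_
      simp [Complex.add_re]
    refine Filter.eventuallyEq_of_mem hmem (fun z hz => ?_)
    simp only [hh, Pi.zero_apply, sub_eq_zero]
    exact etaAux_eq_of_one_lt hz
  -- now the boundary point s
  have hcont : ContinuousAt h s :=
    (hdiffh s h0 h1).continuousAt
  have hseq : Filter.Tendsto (fun n : ℕ => s + Complex.I * (1 / (n + 1 : ℝ))) Filter.atTop (nhds s) := by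
    have : Filter.Tendsto (fun n : ℕ => (1 / (n + 1 : ℝ) : ℝ)) Filter.atTop (nhds 0) :=
      tendsto_one_div_add_atTop_nhds_zero_nat
    have h2 : Filter.Tendsto (fun n : ℕ => Complex.I * (1 / (n + 1 : ℝ) : ℂ)) Filter.atTop (nhds 0) := by
      have hc : Filter.Tendsto (fun n : ℕ => ((1 / (n + 1 : ℝ) : ℝ) : ℂ)) Filter.atTop (nhds ((0 : ℝ) : ℂ)) :=
        (Complex.continuous_ofReal.tendsto _).comp this
      simpa using hc.const_mul Complex.I
    simpa using tendsto_const_nhds.add h2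
  have hmemW : ∀ n : ℕ, s + Complex.I * (1 / (n + 1 : ℝ)) ∈ W := by
    intro n
    have hpos : (0 : ℝ) < 1 / (n + 1 : ℝ) := by positivity
    constructor
    · show 0 < (s + Complex.I * (1 / (n + 1 : ℝ))).re
      simp [Complex.add_re, Complex.mul_re]
      positivity
    · show 0 < (s + Complex.I * (1 / (n + 1 : ℝ))).im
      simp only [Complex.add_im, Complex.mul_im, Complex.I_re, Complex.I_im, hs,
        Complex.ofReal_im, Complex.ofReal_re, zero_mul, one_mul, zero_add]
      have heq : ((1 : ℂ) / ((((n : ℝ) + 1 : ℝ)) : ℂ)).re = 1 / ((n : ℝ) + 1) := by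
        rw [← Complex.ofReal_one, ← Complex.ofReal_div, Complex.ofReal_re]
      rw [heq]
      positivity
  have hzero : h s = 0 := by
    have t1 : Filter.Tendsto (fun n : ℕ => h (s + Complex.I * (1 / (n + 1 : ℝ)))) Filter.atTop (nhds (h s)) :=
      (hcont.tendsto).comp hseq
    have t2 : (fun n : ℕ => h (s + Complex.I * (1 / (n + 1 : ℝ)))) = fun _ => 0 :=
      funext fun n => hWzero (hmemW n)
    rw [t2] at t1
    exact tendsto_nhds_unique t1 tendsto_const_nhds
  have := hzero
  simp only [hh, sub_eq_zero] at this
  exact this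

lemma riemannZeta_neg_real_of_lt_one {x : ℝ} (h0 : 0 < x) (h1 : x < 1) :
    ∃ r : ℝ, r < 0 ∧ riemannZeta (x : ℂ) = (r : ℂ) := by
  -- the real eta-type series
  set E : ℝ := ∑' k : ℕ, ((2 * k + 1 : ℝ) ^ (-x) - (2 * k + 2 : ℝ) ^ (-x)) with hE
  have hcast : ∀ k : ℕ, (((2 * k + 1 : ℝ) ^ (-x) - (2 * k + 2 : ℝ) ^ (-x) : ℝ) : ℂ)
      = ((2 * k + 1 : ℕ) : ℂ) ^ (-(x : ℂ)) - ((2 * k + 2 : ℕ) : ℂ) ^ (-(x : ℂ)) := by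
    intro k
    have e1 : (((2 * k + 1 : ℝ) ^ (-x) : ℝ) : ℂ) = ((2 * k + 1 : ℕ) : ℂ) ^ (-(x : ℂ)) := by
      rw [Complex.ofReal_cpow (by positivity)]
      push_cast
      ring_nf
    have e2 : (((2 * k + 2 : ℝ) ^ (-x) : ℝ) : ℂ) = ((2 * k + 2 : ℕ) : ℂ) ^ (-(x : ℂ)) := by
      rw [Complex.ofReal_cpow (by positivity)]
      push_cast
      ring_nf
    rw [Complex.ofReal_sub, e1, e2]
  have hnonneg : ∀ k : ℕ, 0 ≤ (2 * k + 1 : ℝ) ^ (-x) - (2 * k + 2 : ℝ) ^ (-x) := by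
    intro k
    have hk : (0 : ℝ) ≤ (k : ℝ) := Nat.cast_nonneg k
    have := Real.rpow_le_rpow_of_nonpos (x := (2 * (k:ℝ) + 1)) (y := (2 * (k:ℝ) + 2))
      (by linarith) (by linarith) (by linarith : -x ≤ 0)
    linarith
  have hEsummable : Summable (fun k : ℕ => (2 * k + 1 : ℝ) ^ (-x) - (2 * k + 2 : ℝ) ^ (-x)) := by
    refine Summable.of_nonneg_of_le hnonneg (fun k => ?_)
      ((etaTerm_summable_bound h0).mul_left ‖(x : ℂ)‖)
    have hb := etaTerm_norm_le (s := (x : ℂ)) (by simpa using h0) k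
    have : ((2 * k + 1 : ℝ) ^ (-x) - (2 * k + 2 : ℝ) ^ (-x))
        ≤ ‖((2 * k + 1 : ℕ) : ℂ) ^ (-(x:ℂ)) - ((2 * k + 2 : ℕ) : ℂ) ^ (-(x:ℂ))‖ := by
      rw [← hcast k, Complex.norm_real]
      exact le_abs_self _
    simp only [Complex.ofReal_re] at hb
    exact this.trans hb
  have hEpos : 0 < E := by
    refine Summable.tsum_pos hEsummable hnonneg 0 ?_
    have : (2 * (0:ℕ) + 2 : ℝ) ^ (-x) < 1 := by
      norm_num
      exact Real.rpow_lt_one_of_one_lt_of_neg (by norm_num) (by linarith)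
    have h1' : (2 * (0:ℕ) + 1 : ℝ) ^ (-x) = 1 := by norm_num
    rw [h1'] at *
    norm_num at this ⊢
    linarith [this]
  -- identify etaAux with E
  have hetaE : etaAux (x : ℂ) = (E : ℂ) := by
    rw [hE, Complex.ofReal_tsum]
    unfold etaAux
    exact (tsum_congr fun k => (hcast k).symm)
  -- the factor
  set D : ℝ := 1 - 2 * (2 : ℝ) ^ (-x) with hD
  have hDneg : D < 0 := by
    have : (2 : ℝ) ^ (-(1:ℝ)) < (2 : ℝ) ^ (-x) := by
      apply Real.rpow_lt_rpow_left_iff (by norm_num : (1:ℝ) < 2) |>.mpr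
      linarith
    rw [Real.rpow_neg_one] at this
    rw [hD]
    norm_num
    linarith
  have hDcast : (1 - 2 * (2 : ℂ) ^ (-(x:ℂ))) = (D : ℂ) := by
    have : ((2 : ℝ) : ℂ) ^ ((-x : ℝ) : ℂ) = (((2:ℝ) ^ (-x) : ℝ) : ℂ) :=
      (Complex.ofReal_cpow (by norm_num) _).symm
    rw [hD]
    push_cast
    rw [← this]
    norm_num
  have hid := etaAux_eq_ofReal h0 (by
    intro hcontra
    rw [Complex.ofReal_eq_one] at hcontra
    linarith)
  rw [hetaE, hDcast] at hid
  -- ζ x = E / D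
  refine ⟨E / D, div_neg_of_pos_of_neg hEpos hDneg, ?_⟩
  have hD0 : (D : ℂ) ≠ 0 := by
    simpa using (ne_of_lt hDneg)
  rw [Complex.ofReal_div, eq_div_iff hD0]
  linear_combination -hid

lemma riemannZeta_one_neg_real :
    ∃ r : ℝ, r < 0 ∧ riemannZeta (1 : ℂ) = (r : ℂ) := by
  refine ⟨(Real.eulerMascheroniConstant - Real.log (4 * Real.pi)) / 2, ?_, ?_⟩
  · have h1 : Real.eulerMascheroniConstant < 2 / 3 := Real.eulerMascheroniConstant_lt_two_thirds
    have h2 : (1 : ℝ) < Real.log (4 * Real.pi) := by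
      rw [Real.lt_log_iff_exp_lt (by positivity)]
      have := Real.exp_one_lt_d9
      have hpi := Real.pi_gt_three
      nlinarith
    linarith
  · rw [riemannZeta_one]
    have hlog : Complex.log ((4 : ℂ) * (Real.pi : ℂ)) = ((Real.log (4 * Real.pi) : ℝ) : ℂ) := by
      rw [Complex.ofReal_log (by positivity : (0:ℝ) ≤ 4 * Real.pi)]
      push_cast
      ring_nf
    rw [hlog]
    push_cast
    ring

open EulerProduct in
lemma zeta_real_eulerProduct {β : ℝ} (hβ : 1 < β) :
    HasProd (fun p : Nat.Primes => (1 - ((p : ℕ) : ℝ) ^ (-β))) (∑' n : ℕ, (n : ℝ) ^ (-β))⁻¹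
    ∧ riemannZeta (β : ℂ) = ((∑' n : ℕ, (n : ℝ) ^ (-β) : ℝ) : ℂ) := by
  have hβ0 : β ≠ 0 := by linarith
  set f : ℕ →*₀ ℝ :=
    { toFun := fun n => (n : ℝ) ^ (-β)
      map_zero' := by
        simp [Real.zero_rpow (neg_ne_zero.mpr hβ0)]
      map_one' := by simp
      map_mul' := fun m n => by
        push_cast
        exact Real.mul_rpow (Nat.cast_nonneg m) (Nat.cast_nonneg n) } with hf
  have hfapp : ∀ n : ℕ, f n = (n : ℝ) ^ (-β) := fun n => rfl
  have hsumf : Summable (fun n : ℕ => (n : ℝ) ^ (-β)) := Real.summable_nat_rpow.mpr (by linarith)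
  have hsum : Summable (fun n => ‖f n‖) := by
    have : (fun n : ℕ => ‖f n‖) = fun n : ℕ => (n : ℝ) ^ (-β) := by
      funext n
      rw [hfapp, Real.norm_eq_abs, _root_.abs_of_nonneg (Real.rpow_nonneg (Nat.cast_nonneg n) _)]
    rw [this]
    exact hsumf
  have hp := eulerProduct_completely_multiplicative_hasProd (f := f) hsum
  set Z : ℝ := ∑' n : ℕ, (n : ℝ) ^ (-β) with hZ
  have hZeq : ∑' n : ℕ, f n = Z := by rw [hZ]; exact tsum_congr fun n => hfapp n
  have hZpos : 0 < Z := by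
    refine Summable.tsum_pos hsumf (fun n => Real.rpow_nonneg (Nat.cast_nonneg n) _) 1 ?_
    simp
  rw [hZeq] at hp
  constructor
  · -- invert the product
    have hinv : Filter.Tendsto
        (fun F : Finset Nat.Primes => (∏ p ∈ F, (1 - f p)⁻¹)⁻¹) Filter.atTop (nhds Z⁻¹) :=
      (continuousAt_inv₀ (ne_of_gt hZpos)).tendsto.comp hp
    have hcongr : ∀ F : Finset Nat.Primes,
        (∏ p ∈ F, (1 - f p)⁻¹)⁻¹ = ∏ p ∈ F, (1 - ((p : ℕ) : ℝ) ^ (-β)) := by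
      intro F
      rw [← Finset.prod_inv_distrib]
      exact Finset.prod_congr rfl fun p _ => by rw [inv_inv, hfapp]
    have := hinv.congr hcongr
    exact this
  · -- identify zeta with the real sum
    have hre : 1 < ((β : ℂ)).re := by simpa using hβ
    rw [zeta_eq_tsum_one_div_nat_cpow hre, hZ, Complex.ofReal_tsum]
    refine (tsum_congr fun n => ?_).symm
    rw [Complex.ofReal_cpow (Nat.cast_nonneg n)]
    push_cast
    rw [Complex.cpow_neg, one_div]

/-- For every integer `d ≥ 2` and nonempty finite set `Q` of primes,
the unique positive root `α = α(Q,d)` of `(d-1)/d = ∏_{q ∈ Q} (1 - q^{-x})` does not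
exceed the unique positive root `β` of `1/ζ(x) = (d-1)/d`, where `ζ` is the Riemann
zeta function. -/
theorem root_le_zeta_root (Q : Finset ℕ) (hQne : Q.Nonempty)
    (hQ : ∀ q ∈ Q, Nat.Prime q) (d : ℕ) (hd : 2 ≤ d) (α β : ℝ)
    (hα : 0 < α ∧ ((d : ℝ) - 1) / d = ∏ q ∈ Q, (1 - (q : ℝ) ^ (-α)))
    (hβ : 0 < β ∧ (riemannZeta (β : ℂ))⁻¹ = ((d : ℂ) - 1) / d) :
    α ≤ β := by
  have hd2 : (2 : ℝ) ≤ (d : ℝ) := by exact_mod_cast hd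
  set c : ℝ := ((d : ℝ) - 1) / d with hc
  have hc0 : 0 < c := by
    apply div_pos <;> linarith
  have hccast : (((d : ℂ)) - 1) / (d : ℂ) = ((c : ℝ) : ℂ) := by
    rw [hc]
    push_cast
    ring
  -- Step 1: β > 1
  have hβ1 : 1 < β := by
    by_contra hcon
    push_neg at hcon
    have hneg : ∃ r : ℝ, r < 0 ∧ riemannZeta (β : ℂ) = (r : ℂ) := by
      rcases eq_or_lt_of_le hcon with heq | hlt
      · rw [heq]
        exact_mod_cast riemannZeta_one_neg_real
      · exact riemannZeta_neg_real_of_lt_one hβ.1 hlt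
    obtain ⟨r, hr, hζr⟩ := hneg
    have := hβ.2
    rw [hζr, hccast, ← Complex.ofReal_inv] at this
    have hrc : r⁻¹ = c := Complex.ofReal_inj.mp this
    have : r⁻¹ < 0 := inv_neg''.mpr hr
    linarith
  -- Step 2: Euler product
  obtain ⟨hprod, hζZ⟩ := zeta_real_eulerProduct hβ1
  set Z : ℝ := ∑' n : ℕ, (n : ℝ) ^ (-β) with hZ
  have hZc : Z⁻¹ = c := by
    have := hβ.2
    rw [hζZ, hccast, ← Complex.ofReal_inv] at this
    exact Complex.ofReal_inj.mp this
  rw [hZc] at hprod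
  -- Step 3: the finite subproduct dominates
  set Q' : Finset Nat.Primes :=
    Q.attach.map ⟨fun q => (⟨q.1, hQ q.1 q.2⟩ : Nat.Primes),
      fun a b hab => Subtype.ext (show ((a : ℕ) : ℕ) = (b : ℕ) from congrArg Subtype.val hab)⟩
    with hQ'
  have hQ'prod : ∀ x : ℝ,
      ∏ p ∈ Q', (1 - ((p : ℕ) : ℝ) ^ (-x)) = ∏ q ∈ Q, (1 - (q : ℝ) ^ (-x)) := by
    intro x
    rw [hQ', Finset.prod_map]
    show ∏ q ∈ Q.attach, (1 - ((q : ℕ) : ℝ) ^ (-x)) = _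
    exact Finset.prod_attach Q fun q => (1 - (q : ℝ) ^ (-x))
  have hfactor_nonneg : ∀ (p : Nat.Primes), 0 ≤ 1 - ((p : ℕ) : ℝ) ^ (-β) := by
    intro p
    have h1 : (1 : ℝ) ≤ ((p : ℕ) : ℝ) := by
      exact_mod_cast p.2.one_lt.le
    have := Real.rpow_le_one_of_one_le_of_nonpos h1 (by linarith : -β ≤ 0)
    linarith
  have hfactor_le_one : ∀ (p : Nat.Primes), 1 - ((p : ℕ) : ℝ) ^ (-β) ≤ 1 := by
    intro p
    have := Real.rpow_nonneg (Nat.cast_nonneg (p : ℕ)) (-β)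
    linarith
  have hle : c ≤ ∏ q ∈ Q, (1 - (q : ℝ) ^ (-β)) := by
    refine le_of_tendsto hprod ?_
    filter_upwards [Filter.eventually_ge_atTop Q'] with F hF
    rw [← hQ'prod β, ← Finset.prod_sdiff hF]
    calc (∏ p ∈ F \ Q', (1 - ((p:ℕ):ℝ) ^ (-β))) * ∏ p ∈ Q', (1 - ((p:ℕ):ℝ) ^ (-β))
        ≤ 1 * ∏ p ∈ Q', (1 - ((p:ℕ):ℝ) ^ (-β)) := by
          apply mul_le_mul_of_nonneg_right
          · exact Finset.prod_le_one (fun p _ => hfactor_nonneg p) (fun p _ => hfactor_le_one p)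
          · exact Finset.prod_nonneg fun p _ => hfactor_nonneg p
      _ = ∏ p ∈ Q', (1 - ((p:ℕ):ℝ) ^ (-β)) := one_mul _
  -- Step 4: conclude by monotonicity
  by_contra hcon
  push_neg at hcon
  have hmono : ∏ q ∈ Q, (1 - (q : ℝ) ^ (-β)) < ∏ q ∈ Q, (1 - (q : ℝ) ^ (-α)) := by
    refine Finset.prod_lt_prod_of_nonempty (fun q hq => ?_) (fun q hq => ?_) hQne
    · have h1 : (1 : ℝ) < (q : ℝ) := by exact_mod_cast (hQ q hq).one_lt
      have := Real.rpow_lt_one_of_one_lt_of_neg h1 (by linarith : -β < 0)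
      linarith
    · have h1 : (1 : ℝ) < (q : ℝ) := by exact_mod_cast (hQ q hq).one_lt
      have := (Real.rpow_lt_rpow_left_iff h1).mpr (by linarith : -α < -β)
      linarith
  have hαeq : c = ∏ q ∈ Q, (1 - (q : ℝ) ^ (-α)) := hα.2
  linarith
end

section
/- For each special word u of F(Σ,Q) of length n ≥ 3 there exist a unique letter a ∈ Σ and a unique subset Q(u) ⊆ Q such that: for every q ∈ Q(u), and for no other element of Q, the word u can be represented as u = φ_{a,q}(v_q)·a^m with v_q ∈ F(Σ,Q) and 0 ≤ m < q; moreover for each q ∈ Q(u) the word v_q has length ⌊n/q⌋ and L(u) = L(v_q). -/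
open Filter

/-- The Toeplitz morphism `φ_{a,m}` sending each letter `b` to `a^{m-1} b`,
extended to words. -/
def phi {A : Type*} (a : A) (m : ℕ) (w : List A) : List A :=
  w.flatMap (fun b => List.replicate (m - 1) a ++ [b])

/-- The language `L(Σ,Q)`: the closure of the single letters under the
morphisms `φ_{a,q}` for `a ∈ Σ` and `q ∈ Q`. -/
inductive IsL {A : Type*} (Q : Finset ℕ) : List A → Prop
  | base (c : A) : IsL Q [c]
  | step (a : A) (q : ℕ) (hq : q ∈ Q) {w : List A} (hw : IsL Q w) : IsL Q (phi a q w)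

/-- `F(Σ,Q)`: the factorial closure of `L(Σ,Q)`. -/
def FQ (A : Type*) (Q : Finset ℕ) : Set (List A) :=
  { u | ∃ v, IsL Q v ∧ u <:+: v }

/-- The set `L(u)` of left extensions of `u` inside `F(Σ,Q)`. -/
def Lext (A : Type*) (Q : Finset ℕ) (u : List A) : Set A :=
  { a | (a :: u) ∈ FQ A Q }

/-- `u` is (left) special in `F(Σ,Q)`. -/
def IsSpecial (A : Type*) (Q : Finset ℕ) (u : List A) : Prop :=
  u ∈ FQ A Q ∧ (Lext A Q u).ncard ≠ 1

/-- The subword complexity `p(n)` of `F(Σ,Q)`. -/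
noncomputable def pF (A : Type*) (Q : Finset ℕ) (n : ℕ) : ℕ :=
  Set.ncard { u ∈ FQ A Q | u.length = n }

/-- The first differences `s(n) = p(n+1) - p(n)`. -/
noncomputable def sF (A : Type*) (Q : Finset ℕ) (n : ℕ) : ℤ :=
  (pF A Q (n + 1) : ℤ) - (pF A Q n : ℤ)

section Aux
variable {A : Type*} {Q : Finset ℕ}

lemma phi_nil (a : A) (q : ℕ) : phi a q ([] : List A) = [] := rfl

lemma phi_cons (a : A) (q : ℕ) (b : A) (w : List A) :
    phi a q (b :: w) = (List.replicate (q-1) a ++ [b]) ++ phi a q w := by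
  simp [phi]

lemma phi_append (a : A) (q : ℕ) (u v : List A) :
    phi a q (u ++ v) = phi a q u ++ phi a q v := by
  simp [phi]

lemma phi_length (a : A) {q : ℕ} (hq : 1 ≤ q) (w : List A) :
    (phi a q w).length = q * w.length := by
  induction w with
  | nil => simp [phi]
  | cons b tl ih =>
    rw [phi_cons]
    simp only [List.length_append, List.length_cons, ih, List.length_replicate,
      List.length_nil, Nat.mul_succ]
    omega

lemma phi_getElem (a : A) {q : ℕ} (hq : 1 ≤ q) (w : List A) (i : ℕ)
    (hi : i < (phi a q w).length) :
    (phi a q w)[i] = if h : i % q = q - 1 then w[i / q]'(by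
        rw [phi_length a hq] at hi; exact Nat.div_lt_of_lt_mul (by omega)) else a := by
  induction w generalizing i with
  | nil => simp [phi] at hi
  | cons b tl ih =>
    have hi' : i < q * tl.length + q := by
      rw [phi_length a hq, List.length_cons, Nat.mul_succ] at hi; omega
    have hsplit : phi a q (b :: tl) = (List.replicate (q-1) a ++ [b]) ++ phi a q tl :=
      phi_cons a q b tl
    rw [List.getElem_of_eq hsplit]
    have hlen : (List.replicate (q-1) a ++ [b]).length = q := by simp; omega
    by_cases hlt : i < q
    · have him : i % q = i := Nat.mod_eq_of_lt hlt
      rw [List.getElem_append_left (by rw [hlen]; omega)]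
      by_cases he : i % q = q - 1
      · have hie : i = q - 1 := by omega
        have hd : i / q = 0 := Nat.div_eq_of_lt (by omega)
        simp only [he, hd, dif_pos]
        subst hie
        rw [List.getElem_append_right (by simp)]
        simp
      · have h0 : i < q - 1 := by omega
        rw [List.getElem_append_left (by simpa using h0)]
        simp [he]
    · have hq' : q ≤ i := by omega
      rw [List.getElem_append_right (by rw [hlen]; omega)]
      have hrec := ih (i - q) (by rw [phi_length a hq]; omega)
      have hmod2 : (i - q) % q = i % q := by
        conv_rhs => rw [show i = (i-q) + q by omega]
        simp [Nat.add_mod_right]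
      have hdiv : i / q = (i - q)/q + 1 := by
        conv_lhs => rw [show i = (i-q) + q by omega]
        rw [Nat.add_div_right _ (by omega)]
      simp only [hlen]
      rw [hrec]
      by_cases he : i % q = q - 1
      · simp only [hmod2, he, dif_pos, hdiv, List.getElem_cons_succ]
      · simp [hmod2, he]

lemma phi_getElem_a (a : A) {q : ℕ} (hq : 1 ≤ q) (w : List A) (i : ℕ)
    (hi : i < (phi a q w).length) (h : i % q ≠ q - 1) : (phi a q w)[i] = a := by
  rw [phi_getElem a hq w i hi]; simp [h]

lemma phi_getElem_b (a : A) {q : ℕ} (hq : 1 ≤ q) (w : List A) (i : ℕ)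
    (hi : i < (phi a q w).length) (h : i % q = q - 1) :
    (phi a q w)[i] = w[i / q]'(by
      rw [phi_length a hq] at hi; exact Nat.div_lt_of_lt_mul (by omega)) := by
  rw [phi_getElem a hq w i hi]; simp [h]

lemma phi_infix (a : A) (q : ℕ) {u w : List A} (h : u <:+: w) :
    phi a q u <:+: phi a q w := by
  obtain ⟨s, t, rfl⟩ := h
  rw [phi_append, phi_append]
  exact ⟨phi a q s, phi a q t, rfl⟩

lemma FQ_infix {u v : List A} (h : u <:+: v) (hv : v ∈ FQ A Q) : u ∈ FQ A Q := by
  obtain ⟨z, hz, hvz⟩ := hv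
  exact ⟨z, hz, h.trans hvz⟩

lemma IsL_mem_FQ {v : List A} (h : IsL Q v) : v ∈ FQ A Q := ⟨v, h, List.infix_refl v⟩

lemma singleton_mem_FQ (c : A) : [c] ∈ FQ A Q := IsL_mem_FQ (IsL.base c)

lemma nil_mem_FQ [Nonempty A] : ([] : List A) ∈ FQ A Q := by
  obtain ⟨c⟩ := ‹Nonempty A›
  exact FQ_infix (List.nil_infix) (singleton_mem_FQ c)

lemma phi_replicate (a : A) {q : ℕ} (hq : 1 ≤ q) (j : ℕ) :
    phi a q (List.replicate j a) = List.replicate (q * j) a := by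
  induction j with
  | zero => simp [phi]
  | succ n ih =>
    rw [List.replicate_succ, phi_cons, ih]
    rw [show List.replicate (q-1) a ++ [a] = List.replicate q a by
      rw [← List.replicate_succ']; congr 1; omega]
    rw [← List.replicate_add]
    congr 1; ring

lemma replicate_mem_FQ (hQ : ∀ q ∈ Q, Nat.Prime q) (hne : Q.Nonempty) (a : A) (k : ℕ) :
    List.replicate k a ∈ FQ A Q := by
  obtain ⟨q, hq⟩ := hne
  have hq2 : 2 ≤ q := (hQ q hq).two_le
  have key : ∀ t : ℕ, IsL Q (List.replicate (q ^ t) a) := by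
    intro t
    induction t with
    | zero => rw [pow_zero, List.replicate_one]; exact IsL.base a
    | succ n ih =>
      have := IsL.step a q hq ih
      rwa [phi_replicate a (by omega), ← pow_succ'] at this
  have ⟨t, ht⟩ : ∃ t, k ≤ q ^ t := ⟨k, (Nat.lt_pow_self (n := k) (by omega)).le⟩
  exact FQ_infix (by
    refine (List.IsPrefix.isInfix ?_)
    exact ⟨List.replicate (q ^ t - k) a, by rw [← List.replicate_add]; congr 1; omega⟩)
    (IsL_mem_FQ (key t))

lemma Q_nonempty_of_len2 {u : List A} (hu : u ∈ FQ A Q) (h2 : 2 ≤ u.length) : Q.Nonempty := by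
  obtain ⟨z, hz, hinf⟩ := hu
  have hlen := hinf.length_le
  cases hz with
  | base c => simp at hlen; omega
  | step a q hq hw => exact ⟨q, hq⟩

lemma IsL_inv {z : List A} (hz : IsL Q z) (h2 : 2 ≤ z.length) :
    ∃ (α : A) (ρ : ℕ) (w : List A), ρ ∈ Q ∧ IsL Q w ∧ z = phi α ρ w := by
  cases hz with
  | base c => simp at h2
  | step a q hq hw => exact ⟨a, q, _, hq, hw, rfl⟩

end Aux
section Ext
variable {A : Type*} {Q : Finset ℕ}

lemma right_ext_L (hQ : ∀ q ∈ Q, Nat.Prime q) (hne : Q.Nonempty) {z : List A}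
    (hz : IsL Q z) : ∃ (d : A) (z' : List A), IsL Q z' ∧ z ++ [d] <:+: z' := by
  induction hz with
  | base c =>
    obtain ⟨q, hq⟩ := hne
    have hq2 : 2 ≤ q := (hQ q hq).two_le
    refine ⟨c, phi c q [c], IsL.step c q hq (IsL.base c), ?_⟩
    have : phi c q [c] = List.replicate q c := by
      rw [show ([c] : List A) = List.replicate 1 c by simp, phi_replicate c (by omega)]
      simp
    rw [this]
    refine List.IsPrefix.isInfix ⟨List.replicate (q - 2) c, ?_⟩
    rw [show ([c] ++ [c] : List A) = List.replicate 2 c by simp [List.replicate]]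
    rw [← List.replicate_add]; congr 1; omega
  | step a q hq hw ih =>
    obtain ⟨d, z', hz', hinf⟩ := ih
    have hq2 : 2 ≤ q := (hQ q hq).two_le
    refine ⟨a, phi a q z', IsL.step a q hq hz', ?_⟩
    have h2 := phi_infix a q hinf
    rw [phi_append] at h2
    refine List.IsInfix.trans ?_ h2
    have : phi a q [d] = List.replicate (q-1) a ++ [d] := by simp [phi]
    rw [this]
    refine ⟨[], List.replicate (q - 2) a ++ [d], ?_⟩
    simp only [List.nil_append, List.append_assoc]
    congr 1
    rw [show List.replicate (q-1) a = a :: List.replicate (q-2) a by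
      rw [← List.replicate_succ]; congr 1; omega]
    simp

lemma right_ext_F (hQ : ∀ q ∈ Q, Nat.Prime q) (hne : Q.Nonempty) {u : List A}
    (hu : u ∈ FQ A Q) : ∃ d : A, u ++ [d] ∈ FQ A Q := by
  obtain ⟨z, hz, s, t, hst⟩ := hu
  cases t with
  | nil =>
    obtain ⟨d, z', hz', hinf⟩ := right_ext_L hQ hne hz
    refine ⟨d, z', hz', ?_⟩
    refine List.IsInfix.trans ?_ hinf
    rw [← hst]
    simp only [List.append_nil]
    exact ⟨s, [], by simp⟩
  | cons d t' =>
    refine ⟨d, z, hz, s, t', ?_⟩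
    rw [← hst]
    simp

lemma left_ext_L (hQ : ∀ q ∈ Q, Nat.Prime q) (hne : Q.Nonempty) {z : List A}
    (hz : IsL Q z) : ∃ (c : A) (z' : List A), IsL Q z' ∧ c :: z <:+: z' := by
  induction hz with
  | base c =>
    obtain ⟨q, hq⟩ := hne
    have hq2 : 2 ≤ q := (hQ q hq).two_le
    refine ⟨c, phi c q [c], IsL.step c q hq (IsL.base c), ?_⟩
    have : phi c q [c] = List.replicate q c := by
      rw [show ([c] : List A) = List.replicate 1 c by simp, phi_replicate c (by omega)]
      simp
    rw [this]
    refine List.IsPrefix.isInfix ⟨List.replicate (q - 2) c, ?_⟩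
    rw [show (c :: [c] : List A) = List.replicate 2 c by simp [List.replicate]]
    rw [← List.replicate_add]; congr 1; omega
  | step a q hq hw ih =>
    obtain ⟨c, z', hz', hinf⟩ := ih
    have hq2 : 2 ≤ q := (hQ q hq).two_le
    refine ⟨c, phi a q z', IsL.step a q hq hz', ?_⟩
    have h2 := phi_infix a q hinf
    rw [phi_cons] at h2
    refine List.IsInfix.trans ?_ h2
    exact ⟨List.replicate (q-1) a, [], by simp⟩

lemma Lext_nonempty (hQ : ∀ q ∈ Q, Nat.Prime q) (hne : Q.Nonempty) {u : List A}
    (hu : u ∈ FQ A Q) : (Lext A Q u).Nonempty := by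
  obtain ⟨z, hz, s, t, hst⟩ := hu
  cases s with
  | nil =>
    obtain ⟨c, z', hz', hinf⟩ := left_ext_L hQ hne hz
    refine ⟨c, z', hz', ?_⟩
    refine List.IsInfix.trans ?_ hinf
    rw [← hst]
    simp only [List.nil_append]
    exact ⟨[], t, by simp⟩
  | cons c' s' =>
    -- u is preceded by the last letter of s = c'::s'
    rcases List.eq_nil_or_concat s' with h | ⟨s'', c'', h⟩
    · subst h
      exact ⟨c', z, hz, [], t, by simpa using hst⟩
    · subst h
      exact ⟨c'', z, hz, c' :: s'', t, by simpa using hst⟩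

end Ext
section Master
variable {A : Type*} {Q : Finset ℕ}

lemma mod_pred_iff {ρ x : ℕ} (h2 : 2 ≤ ρ) : x % ρ = ρ - 1 ↔ ρ ∣ (x + 1) := by
  constructor
  · intro h
    refine ⟨x / ρ + 1, ?_⟩
    have hd := Nat.div_add_mod x ρ
    rw [Nat.mul_add, Nat.mul_one]
    omega
  · rintro ⟨m, hm⟩
    rcases m with _ | m'
    · omega
    · have hmul : ρ * (m' + 1) = ρ * m' + ρ := by ring
      have hc : ρ * m' = m' * ρ := Nat.mul_comm _ _
      have hx : x = ρ - 1 + m' * ρ := by omega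
      rw [hx, Nat.add_mul_mod_self_right, Nat.mod_eq_of_lt (by omega)]

lemma mul_add_pred_mod {ρ : ℕ} (h2 : 2 ≤ ρ) (x : ℕ) :
    (x * ρ + (ρ - 1)) % ρ = ρ - 1 ∧ (x * ρ + (ρ - 1)) / ρ = x := by
  constructor
  · rw [Nat.add_comm, Nat.add_mul_mod_self_right, Nat.mod_eq_of_lt (by omega)]
  · rw [Nat.add_comm, Nat.add_mul_div_right _ _ (by omega : 0 < ρ),
      Nat.div_eq_of_lt (by omega)]
    exact Nat.zero_add x

lemma div_pred_helper {ρ x : ℕ} (h2 : 2 ≤ ρ) (h : ρ ∣ x + 1) :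
    x = (x / ρ) * ρ + (ρ - 1) := by
  have hd := Nat.div_add_mod x ρ
  have hm : x % ρ = ρ - 1 := (mod_pred_iff h2).2 h
  have hc : ρ * (x / ρ) = (x / ρ) * ρ := Nat.mul_comm _ _
  omega

lemma sample_small [Nonempty A] {z : List A} (hzF : z ∈ FQ A Q) (a : A) (p σ k : ℕ)
    (hk : k ≤ 1) (hrange : ∀ j, j < k → p + j * σ < z.length) :
    ((List.range k).map (fun j => z.getD (p + j * σ) a)) ∈ FQ A Q := by
  interval_cases k
  · simpa using nil_mem_FQ
  · have hp : p < z.length := by have := hrange 0 (by omega); simpa using this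
    rw [show List.range 1 = [0] from rfl]
    simp only [List.map_cons, List.map_nil, Nat.zero_mul, Nat.add_zero]
    rw [List.getD_eq_getElem z a hp]
    refine FQ_infix ⟨z.take p, z.drop (p+1), ?_⟩ hzF
    simp [List.append_assoc, List.getElem_cons_drop]

lemma sample_contig [Nonempty A] {z : List A} (hzF : z ∈ FQ A Q) (a : A) (p k : ℕ)
    (hrange : ∀ j, j < k → p + j * 1 < z.length) :
    ((List.range k).map (fun j => z.getD (p + j * 1) a)) ∈ FQ A Q := by
  have heq : ((List.range k).map (fun j => z.getD (p + j * 1) a)) = (z.drop p).take k := by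
    rcases Nat.eq_zero_or_pos k with hk | hk
    · subst hk; simp
    · have hlast : p + (k - 1) < z.length := by
        have := hrange (k-1) (by omega); omega
      apply List.ext_getElem
      · simp only [List.length_map, List.length_range, List.length_take, List.length_drop]
        omega
      · intro n h1 h2
        simp only [List.length_map, List.length_range] at h1
        have hn : p + n < z.length := by have := hrange n h1; omega
        simp only [List.getElem_map, List.getElem_range, List.getElem_take, List.getElem_drop]
        rw [List.getD_eq_getElem z a (by omega : p + n * 1 < z.length)]
        congr 1
        omega
  rw [heq]
  refine FQ_infix ?_ hzF
  exact (List.take_prefix _ _).isInfix.trans (List.drop_suffix _ _).isInfix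

lemma masterM [Nonempty A] (hQ : ∀ q ∈ Q, Nat.Prime q) {z : List A} (hz : IsL Q z) :
    ∀ (a : A) (p σ k : ℕ), 1 ≤ σ →
    (∀ j, j < k → p + j * σ < z.length) →
    (∀ i (hi : i < z.length), p ≤ i → i ≤ p + (k - 1) * σ → z[i] ≠ a → (i - p) % σ = 0) →
    ((List.range k).map (fun j => z.getD (p + j * σ) a)) ∈ FQ A Q := by
  induction hz with
  | base c =>
    intro a p σ k hσ hrange hcond
    refine sample_small (singleton_mem_FQ c) a p σ k ?_ hrange
    by_contra hk
    have h1 := hrange 1 (by omega)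
    simp only [List.length_cons, List.length_nil] at h1
    omega
  | @step α ρ hρ w hw ih =>
    intro a p σ k hσ hrange hcond
    have hρp : Nat.Prime ρ := hQ ρ hρ
    have hρ2 : 2 ≤ ρ := hρp.two_le
    have hzF : phi α ρ w ∈ FQ A Q := IsL_mem_FQ (IsL.step α ρ hρ hw)
    have hlenz : (phi α ρ w).length = ρ * w.length := phi_length α (by omega) w
    by_cases hk1 : k ≤ 1
    · exact sample_small hzF a p σ k hk1 hrange
    push_neg at hk1
    by_cases hσ1 : σ = 1
    · subst hσ1; exact sample_contig hzF a p k hrange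
    have hσ2 : 2 ≤ σ := by omega
    by_cases haα : a = α
    · subst haα
      by_cases hρσ : ρ ∣ σ
      · -- case ρ ∣ σ
        obtain ⟨σ', hσ'⟩ := hρσ
        have hσ'1 : 1 ≤ σ' := by
          rcases Nat.eq_zero_or_pos σ' with h | h
          · subst h; simp at hσ'; omega
          · exact h
        by_cases hpm : p % ρ = ρ - 1
        · -- all samples are b-positions
          have hpdiv := Nat.div_add_mod p ρ
          have hph : p = (p / ρ) * ρ + (ρ - 1) := by
            have : ρ * (p / ρ) = (p / ρ) * ρ := Nat.mul_comm _ _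
            omega
          set h := p / ρ with hhdef
          have hsar : ∀ j : ℕ, p + j * σ = (h + j * σ') * ρ + (ρ - 1) := by
            intro j
            have h5 : (h + j * σ') * ρ = h * ρ + j * σ := by
              rw [hσ']; ring
            omega
          have hrange' : ∀ t, t < k → h + t * σ' < w.length := by
            intro t ht
            have h1 := hrange t ht
            rw [hlenz, hsar t] at h1
            have h2 := Nat.div_lt_of_lt_mul h1
            rwa [(mul_add_pred_mod hρ2 _).2] at h2
          have hcond' : ∀ i' (hi' : i' < w.length), h ≤ i' → i' ≤ h + (k-1) * σ' →
              w[i'] ≠ a → (i' - h) % σ' = 0 := by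
            intro i' hi' hlo hhi hna
            have hiz : i' * ρ + (ρ - 1) < (phi a ρ w).length := by
              rw [hlenz]
              calc i' * ρ + (ρ - 1) < (i' + 1) * ρ := by
                    have : (i'+1)*ρ = i'*ρ + ρ := by ring
                    omega
                _ ≤ w.length * ρ := mul_le_mul_left hi' ρ
                _ = ρ * w.length := Nat.mul_comm _ _
            have hmd := mul_add_pred_mod hρ2 i'
            have hzi : (phi a ρ w)[i' * ρ + (ρ - 1)]'hiz = w[i']'hi' := by
              rw [phi_getElem_b a (by omega) w _ hiz hmd.1]
              simp only [hmd.2]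
            have hpi : p ≤ i' * ρ + (ρ - 1) := by
              have : h * ρ ≤ i' * ρ := mul_le_mul_left hlo ρ
              omega
            have hhiz : i' * ρ + (ρ - 1) ≤ p + (k-1) * σ := by
              rw [hsar (k-1)]
              have : i' * ρ ≤ (h + (k-1)*σ') * ρ := mul_le_mul_left hhi ρ
              omega
            have hz0 := hcond _ hiz hpi hhiz (by rw [hzi]; exact hna)
            have hsub : i' * ρ + (ρ - 1) - p = (i' - h) * ρ := by
              have h5 : (i' - h) * ρ = i' * ρ - h * ρ := Nat.sub_mul _ _ _
              have h6 : h * ρ ≤ i' * ρ := mul_le_mul_left hlo ρ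
              omega
            rw [hsub] at hz0
            have hd1 : σ ∣ (i' - h) * ρ := Nat.dvd_of_mod_eq_zero hz0
            rw [hσ'] at hd1
            obtain ⟨m, hm⟩ := hd1
            have h7 : ρ * ((i' - h)) = ρ * (σ' * m) := by
              have : ρ * σ' * m = ρ * (σ' * m) := by ring
              have h8 : (i'-h) * ρ = ρ * (i'-h) := Nat.mul_comm _ _
              omega
            have hd3 : σ' ∣ (i' - h) := ⟨m, Nat.eq_of_mul_eq_mul_left (by omega) h7⟩
            omega
          have hY := ih a h σ' k hσ'1 hrange' hcond'
          have heq : ((List.range k).map (fun j => (phi a ρ w).getD (p + j * σ) a))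
              = (List.range k).map (fun t => w.getD (h + t * σ') a) := by
            apply List.map_congr_left
            intro j hj
            rw [List.mem_range] at hj
            rw [List.getD_eq_getElem _ _ (hrange j hj), List.getD_eq_getElem _ _ (hrange' j hj)]
            have hmd := mul_add_pred_mod hρ2 (h + j * σ')
            have hidx : p + j * σ = (h + j*σ')*ρ + (ρ-1) := hsar j
            simp only [hidx]
            rw [phi_getElem_b a (by omega) w _ (by rw [← hidx]; exact hrange j hj) hmd.1]
            simp only [hmd.2]
          rw [heq]
          exact hY
        · -- all samples are a-positions: Y = replicate k a
          have hsm : ∀ j, (p + j * σ) % ρ = p % ρ := by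
            intro j
            rw [hσ', show p + j * (ρ * σ') = p + (j * σ') * ρ by ring,
              Nat.add_mul_mod_self_right]
          have : ((List.range k).map (fun j => (phi a ρ w).getD (p + j * σ) a))
              = List.replicate k a := by
            refine List.eq_replicate_iff.2 ⟨by simp, ?_⟩
            intro b hb
            simp only [List.mem_map, List.mem_range] at hb
            obtain ⟨j, hj, rfl⟩ := hb
            rw [List.getD_eq_getElem _ _ (hrange j hj)]
            exact phi_getElem_a a (by omega) w _ (hrange j hj) (by rw [hsm j]; exact hpm)
          rw [this]
          exact replicate_mem_FQ hQ ⟨ρ, hρ⟩ a k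
      · -- case ρ ∤ σ : the interesting one
        haveI : NeZero ρ := ⟨by omega⟩
        haveI : Fact (Nat.Prime ρ) := ⟨hρp⟩
        have hσρ : (σ : ZMod ρ) ≠ 0 := by
          rw [Ne, ZMod.natCast_eq_zero_iff]; exact hρσ
        obtain ⟨j₀, hj₀ρ, hj₀⟩ : ∃ j₀, j₀ < ρ ∧ ρ ∣ p + j₀ * σ + 1 := by
          refine ⟨((-(p + 1 : ℕ) : ZMod ρ) * (σ : ZMod ρ)⁻¹).val, ZMod.val_lt _, ?_⟩
          have hc : ((p + ((-(p + 1 : ℕ) : ZMod ρ) * (σ : ZMod ρ)⁻¹).val * σ + 1 : ℕ) : ZMod ρ) = 0 := by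
            push_cast
            rw [ZMod.natCast_val, ZMod.cast_id, mul_assoc, inv_mul_cancel₀ hσρ, mul_one]
            ring
          exact (ZMod.natCast_eq_zero_iff _ ρ).1 hc
        have hbchar : ∀ j : ℕ, ρ ∣ p + j * σ + 1 ↔ j % ρ = j₀ := by
          intro j
          constructor
          · intro hdvd
            have h1 : ((p + j * σ + 1 : ℕ) : ZMod ρ) = 0 :=
              (ZMod.natCast_eq_zero_iff _ ρ).2 hdvd
            have h2 : ((p + j₀ * σ + 1 : ℕ) : ZMod ρ) = 0 :=
              (ZMod.natCast_eq_zero_iff _ ρ).2 hj₀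
            push_cast at h1 h2
            have h3 : (j : ZMod ρ) * σ = (j₀ : ZMod ρ) * σ := by linear_combination h1 - h2
            have h4 : (j : ZMod ρ) = (j₀ : ZMod ρ) := mul_right_cancel₀ hσρ h3
            have h5 : j ≡ j₀ [MOD ρ] := (ZMod.natCast_eq_natCast_iff _ _ _).1 h4
            have h6 := h5
            rwa [Nat.ModEq, Nat.mod_eq_of_lt hj₀ρ] at h6
          · intro hmod
            have hd := Nat.div_add_mod j ρ
            obtain ⟨M, hM⟩ := hj₀
            refine ⟨M + (j / ρ) * σ, ?_⟩
            have hj : j = ρ * (j / ρ) + j₀ := by omega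
            have h8 : j * σ = ρ * ((j/ρ) * σ) + j₀ * σ := by
              conv_lhs => rw [hj]
              ring
            have h9 : ρ * (M + (j/ρ)*σ) = ρ * M + ρ * ((j/ρ)*σ) := by ring
            omega
        obtain ⟨k', hk'def⟩ : ∃ k', k' = (k + ρ - 1 - j₀) / ρ := ⟨_, rfl⟩
        have hA1 : ∀ t, t < k' → j₀ + t * ρ < k := by
          intro t ht
          have h1 : (t+1) * ρ ≤ k' * ρ := mul_le_mul_left (by omega) ρ
          have h2 : k' * ρ ≤ k + ρ - 1 - j₀ := by
            rw [hk'def]; exact Nat.div_mul_le_self _ _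
          have h3 : (t+1)*ρ = t*ρ + ρ := by ring
          omega
        have hA2 : ∀ j, j < k → j % ρ = j₀ → j / ρ < k' := by
          intro j hj hm
          have hd := Nat.div_add_mod j ρ
          have h5 := (Nat.le_div_iff_mul_le (by omega : 0 < ρ)).2
            (show (j/ρ + 1) * ρ ≤ k + ρ - 1 - j₀ by
              have h3 : (j/ρ + 1)*ρ = (j/ρ)*ρ + ρ := by ring
              have h4 : ρ*(j/ρ) = (j/ρ)*ρ := Nat.mul_comm _ _
              omega)
          rw [← hk'def] at h5
          omega
        by_cases hjk : j₀ < k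
        · -- there are b-samples
          have hk'pos : 0 < k' := by
            have := hA2 j₀ hjk (Nat.mod_eq_of_lt hj₀ρ)
            rw [Nat.div_eq_of_lt hj₀ρ] at this
            exact this
          have hA3 : k ≤ j₀ + k' * ρ := by
            have hd := Nat.div_add_mod (k + ρ - 1 - j₀) ρ
            rw [← hk'def] at hd
            have hm := Nat.mod_lt (k + ρ - 1 - j₀) (show 0 < ρ by omega)
            have hc : ρ * k' = k' * ρ := Nat.mul_comm _ _
            omega
          obtain ⟨h₀, hh₀def⟩ : ∃ h₀, h₀ = (p + j₀ * σ) / ρ := ⟨_, rfl⟩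
          have hp0 : p + j₀ * σ = h₀ * ρ + (ρ - 1) := by
            rw [hh₀def]; exact div_pred_helper hρ2 hj₀
          have hsar : ∀ t : ℕ, p + (j₀ + t * ρ) * σ = (h₀ + t * σ) * ρ + (ρ - 1) := by
            intro t
            have h5 : (j₀ + t*ρ)*σ = j₀*σ + t*ρ*σ := by ring
            have h6 : (h₀ + t*σ)*ρ = h₀*ρ + t*ρ*σ := by ring
            omega
          have hrange' : ∀ t, t < k' → h₀ + t * σ < w.length := by
            intro t ht
            have h1 := hrange (j₀ + t * ρ) (hA1 t ht)
            rw [hlenz, hsar t] at h1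
            have h2 := Nat.div_lt_of_lt_mul h1
            rwa [(mul_add_pred_mod hρ2 _).2] at h2
          have hcond' : ∀ i' (hi' : i' < w.length), h₀ ≤ i' → i' ≤ h₀ + (k'-1) * σ →
              w[i'] ≠ a → (i' - h₀) % σ = 0 := by
            intro i' hi' hlo hhi hna
            have hiz : i' * ρ + (ρ - 1) < (phi a ρ w).length := by
              rw [hlenz]
              calc i' * ρ + (ρ - 1) < (i' + 1) * ρ := by
                    have : (i'+1)*ρ = i'*ρ + ρ := by ring
                    omega
                _ ≤ w.length * ρ := mul_le_mul_left hi' ρ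
                _ = ρ * w.length := Nat.mul_comm _ _
            have hmd := mul_add_pred_mod hρ2 i'
            have hzi : (phi a ρ w)[i' * ρ + (ρ - 1)]'hiz = w[i']'hi' := by
              rw [phi_getElem_b a (by omega) w _ hiz hmd.1]
              simp only [hmd.2]
            have hpi : p ≤ i' * ρ + (ρ - 1) := by
              have : h₀ * ρ ≤ i' * ρ := mul_le_mul_left hlo ρ
              omega
            have hhiz : i' * ρ + (ρ - 1) ≤ p + (k-1) * σ := by
              have h1 : i' * ρ ≤ (h₀ + (k'-1)*σ) * ρ := mul_le_mul_left hhi ρ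
              have h2 := hsar (k'-1)
              have h3 : j₀ + (k'-1)*ρ ≤ k-1 := by
                have := hA1 (k'-1) (by omega)
                omega
              have h4 : (j₀ + (k'-1)*ρ)*σ ≤ (k-1)*σ := mul_le_mul_left h3 σ
              omega
            have hz0 := hcond _ hiz hpi hhiz (by rw [hzi]; exact hna)
            have hsub : i' * ρ + (ρ - 1) - p = (i' - h₀) * ρ + j₀ * σ := by
              have h5 : (i' - h₀) * ρ = i' * ρ - h₀ * ρ := Nat.sub_mul _ _ _
              have h6 : h₀ * ρ ≤ i' * ρ := mul_le_mul_left hlo ρ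
              omega
            rw [hsub] at hz0
            have hd1 : σ ∣ (i' - h₀) * ρ + j₀ * σ := Nat.dvd_of_mod_eq_zero hz0
            have hd2 : σ ∣ (i' - h₀) * ρ := by
              have h7 := Nat.dvd_sub hd1 (Dvd.intro_left j₀ rfl)
              simpa using h7
            have hcop : Nat.Coprime ρ σ := (Nat.Prime.coprime_iff_not_dvd hρp).2 hρσ
            have hd3 : σ ∣ (i' - h₀) := (hcop.symm).dvd_of_dvd_mul_right hd2
            obtain ⟨m, hm⟩ := hd3
            simp [hm, Nat.mul_mod_right]
          have hY' := ih a h₀ σ k' hσ hrange' hcond'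
          obtain ⟨d, hYd⟩ := right_ext_F hQ ⟨ρ, hρ⟩ hY'
          set Y' := (List.range k').map (fun t => w.getD (h₀ + t * σ) a) with hY'def
          obtain ⟨w2, hw2, hinf2⟩ := hYd
          have hphiF : phi a ρ (Y' ++ [d]) ∈ FQ A Q :=
            ⟨phi a ρ w2, IsL.step a ρ hρ hw2, phi_infix a ρ hinf2⟩
          have hY'len : Y'.length = k' := by simp [hY'def]
          have hphilen : (phi a ρ (Y' ++ [d])).length = ρ * (k' + 1) := by
            rw [phi_length a (by omega)]
            simp [hY'len]
          have hkey : ((List.range k).map (fun j => (phi a ρ w).getD (p + j * σ) a))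
              = ((phi a ρ (Y' ++ [d])).drop (ρ - 1 - j₀)).take k := by
            apply List.ext_getElem
            · simp only [List.length_map, List.length_range, List.length_take,
                List.length_drop, hphilen]
              have h5 : ρ * (k' + 1) = k' * ρ + ρ := by ring
              omega
            · intro n h1 h2
              simp only [List.length_map, List.length_range] at h1
              have hebound : (ρ - 1 - j₀) + n < (phi a ρ (Y' ++ [d])).length := by
                rw [hphilen]
                have h5 : ρ * (k' + 1) = k' * ρ + ρ := by ring
                omega
              simp only [List.getElem_map, List.getElem_range, List.getElem_take,
                List.getElem_drop]
              rw [List.getD_eq_getElem _ _ (hrange n h1)]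
              by_cases hbn : n % ρ = j₀
              · -- b-sample
                have hdn := Nat.div_add_mod n ρ
                have htk' : n / ρ < k' := hA2 n h1 hbn
                have hcm : ρ * (n / ρ) = (n / ρ) * ρ := Nat.mul_comm _ _
                have hidx : ρ - 1 - j₀ + n = (n / ρ) * ρ + (ρ - 1) := by omega
                have hn' : n = j₀ + (n / ρ) * ρ := by omega
                have hmdt := mul_add_pred_mod hρ2 (n / ρ)
                have hmds := mul_add_pred_mod hρ2 (h₀ + (n / ρ) * σ)
                have hidx2 : p + n * σ = (h₀ + (n / ρ) * σ) * ρ + (ρ - 1) := by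
                  conv_lhs => rw [hn']
                  exact hsar (n / ρ)
                -- rewrite both indices
                simp only [hidx2, hidx]
                rw [phi_getElem_b a (by omega) w _ (by rw [← hidx2]; exact hrange n h1) hmds.1]
                rw [phi_getElem_b a (by omega) (Y' ++ [d]) _ (by rw [← hidx]; exact hebound) hmdt.1]
                simp only [hmds.2, hmdt.2]
                rw [List.getElem_append_left (by rw [hY'len]; exact htk')]
                simp only [hY'def, List.getElem_map, List.getElem_range]
                rw [List.getD_eq_getElem _ _ (hrange' (n / ρ) htk')]
              · -- a-sample
                have hnd : ¬ ρ ∣ p + n * σ + 1 := by rw [hbchar n]; exact hbn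
                have hzm : (p + n * σ) % ρ ≠ ρ - 1 :=
                  fun h => hnd ((mod_pred_iff hρ2).1 h)
                rw [phi_getElem_a a (by omega) w _ (hrange n h1) hzm]
                have hem : (ρ - 1 - j₀ + n) % ρ ≠ ρ - 1 := by
                  intro hmm
                  obtain ⟨m, hm⟩ := (mod_pred_iff hρ2).1 hmm
                  apply hbn
                  have hm1 : 1 ≤ m := by
                    rcases m with _ | m
                    · simp at hm
                    · omega
                  have h7 : ρ*m = m*ρ := Nat.mul_comm _ _
                  have h8 : (m - 1 + 1) * ρ = (m-1)*ρ + ρ := Nat.succ_mul _ _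
                  have h9 : m - 1 + 1 = m := by omega
                  rw [h9] at h8
                  have h5 : n = j₀ + (m-1)*ρ := by omega
                  rw [h5, Nat.add_mul_mod_self_right, Nat.mod_eq_of_lt hj₀ρ]
                rw [phi_getElem_a a (by omega) _ _ hebound hem]
          rw [hkey]
          refine FQ_infix ?_ hphiF
          exact (List.take_prefix _ _).isInfix.trans (List.drop_suffix _ _).isInfix
        · -- no b-samples: j₀ ≥ k
          push_neg at hjk
          have : ((List.range k).map (fun j => (phi a ρ w).getD (p + j * σ) a))
              = List.replicate k a := by
            refine List.eq_replicate_iff.2 ⟨by simp, ?_⟩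
            intro b hb
            simp only [List.mem_map, List.mem_range] at hb
            obtain ⟨j, hj, rfl⟩ := hb
            rw [List.getD_eq_getElem _ _ (hrange j hj)]
            have hjρ : j % ρ = j := Nat.mod_eq_of_lt (by omega)
            have hnd : ¬ ρ ∣ p + j * σ + 1 := by
              rw [hbchar j, hjρ]
              omega
            exact phi_getElem_a a (by omega) w _ (hrange j hj)
              (fun h => hnd ((mod_pred_iff hρ2).1 h))
          rw [this]
          exact replicate_mem_FQ hQ ⟨ρ, hρ⟩ a k
    · -- case a ≠ α
      have hp1r : p + 1 < (phi α ρ w).length := by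
        have := hrange 1 (by omega); omega
      have hwin1 : p + 1 ≤ p + (k - 1) * σ := by
        have : 1 * 1 ≤ (k-1) * σ := Nat.mul_le_mul (by omega) (by omega)
        omega
      have hp1 : (phi α ρ w)[p+1] = a := by
        by_contra hne
        have := hcond (p+1) hp1r (by omega) hwin1 hne
        rw [Nat.add_sub_cancel_left] at this
        rw [Nat.mod_eq_of_lt (by omega)] at this
        omega
      have hdvd2 : ρ ∣ p + 2 := by
        have hm : (p+1) % ρ = ρ - 1 := by
          by_contra hmm
          have := phi_getElem_a α (by omega) w (p+1) hp1r hmm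
          rw [hp1] at this
          exact haα this
        have h := (mod_pred_iff hρ2).1 hm
        rwa [show p + 1 + 1 = p + 2 by omega] at h
      have hsampm : ∀ j, j < k → (p + j * σ) % ρ ≠ ρ - 1 := by
        by_cases hσ3 : 3 ≤ σ
        · exfalso
          have hp2r : p + 2 < (phi α ρ w).length := by
            have := hrange 1 (by omega); omega
          have hwin2 : p + 2 ≤ p + (k - 1) * σ := by
            have : 1 * 3 ≤ (k-1) * σ := Nat.mul_le_mul (by omega) (by omega)
            omega
          have hp2 : (phi α ρ w)[p+2] = a := by
            by_contra hne
            have h := hcond (p+2) hp2r (by omega) hwin2 hne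
            rw [show p + 2 - p = 2 by omega, Nat.mod_eq_of_lt (by omega)] at h
            omega
          have hm2 : (p+2) % ρ = ρ - 1 := by
            by_contra hmm
            have h := phi_getElem_a α (by omega) w (p+2) hp2r hmm
            rw [hp2] at h
            exact haα h
          have hdvd3 : ρ ∣ p + 3 := by
            have h := (mod_pred_iff hρ2).1 hm2
            rwa [show p + 2 + 1 = p + 3 by omega] at h
          have h1 := Nat.dvd_sub hdvd3 hdvd2
          rw [show p + 3 - (p + 2) = 1 by omega] at h1
          have := Nat.le_of_dvd (by omega) h1
          omega
        · have hσe : σ = 2 := by omega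
          subst hσe
          by_cases hk3 : 3 ≤ k
          · have hp3r : p + 3 < (phi α ρ w).length := by
              have := hrange 2 (by omega); omega
            have hwin3 : p + 3 ≤ p + (k - 1) * 2 := by omega
            have hp3 : (phi α ρ w)[p+3] = a := by
              by_contra hne
              have h := hcond (p+3) hp3r (by omega) hwin3 hne
              rw [show p + 3 - p = 3 by omega] at h
              omega
            have hm3 : (p+3) % ρ = ρ - 1 := by
              by_contra hmm
              have h := phi_getElem_a α (by omega) w (p+3) hp3r hmm
              rw [hp3] at h
              exact haα h
            have hdvd4 : ρ ∣ p + 4 := by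
              have h := (mod_pred_iff hρ2).1 hm3
              rwa [show p + 3 + 1 = p + 4 by omega] at h
            have h1 := Nat.dvd_sub hdvd4 hdvd2
            rw [show p + 4 - (p + 2) = 2 by omega] at h1
            have hρe : ρ = 2 := by
              have := Nat.le_of_dvd (by omega) h1
              omega
            subst hρe
            intro j hj
            obtain ⟨m, hm⟩ := hdvd2
            omega
          · have hke : k = 2 := by omega
            subst hke
            intro j hj
            interval_cases j
            · intro hcontra
              have hd1 : ρ ∣ p + 1 := by
                have h := (mod_pred_iff hρ2).1 (by simpa using hcontra)
                rwa [show p + 0 * 2 + 1 = p + 1 by omega] at h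
              have h1 := Nat.dvd_sub hdvd2 hd1
              rw [show p + 2 - (p + 1) = 1 by omega] at h1
              have := Nat.le_of_dvd (by omega) h1
              omega
            · intro hcontra
              have hd1 : ρ ∣ p + 3 := by
                have h := (mod_pred_iff hρ2).1 (by simpa using hcontra)
                rwa [show p + 1 * 2 + 1 = p + 3 by omega] at h
              have h1 := Nat.dvd_sub hd1 hdvd2
              rw [show p + 3 - (p + 2) = 1 by omega] at h1
              have := Nat.le_of_dvd (by omega) h1
              omega
      have heqY : ((List.range k).map (fun j => (phi α ρ w).getD (p + j * σ) a))
          = List.replicate k α := by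
        refine List.eq_replicate_iff.2 ⟨by simp, ?_⟩
        intro b hb
        simp only [List.mem_map, List.mem_range] at hb
        obtain ⟨j, hj, rfl⟩ := hb
        rw [List.getD_eq_getElem _ _ (hrange j hj)]
        exact phi_getElem_a α (by omega) w _ (hrange j hj) (hsampm j hj)
      rw [heqY]
      exact replicate_mem_FQ hQ ⟨ρ, hρ⟩ α k

end Master
section App
variable {A : Type*} {Q : Finset ℕ}

lemma rep_length {u v : List A} {a : A} {q m : ℕ} (hq : 2 ≤ q)
    (hrep : u = phi a q v ++ List.replicate m a) :
    u.length = q * v.length + m := by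
  subst hrep
  rw [List.length_append, phi_length a (by omega), List.length_replicate]

lemma rep_mod {u v : List A} {a : A} {q m : ℕ} (hq : 2 ≤ q)
    (hrep : u = phi a q v ++ List.replicate m a)
    {i : ℕ} (hi : i < u.length) (hne : u[i] ≠ a) : i % q = q - 1 := by
  subst hrep
  by_cases hlt : i < (phi a q v).length
  · rw [List.getElem_append_left hlt] at hne
    by_contra hc
    exact hne (phi_getElem_a a (by omega) v i hlt hc)
  · rw [List.getElem_append_right (by omega)] at hne
    exact absurd (List.getElem_replicate _) hne

lemma rep_sample {u v : List A} {a : A} {q m : ℕ} (hq : 2 ≤ q)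
    (hrep : u = phi a q v ++ List.replicate m a)
    {j : ℕ} (hj : j < v.length) :
    ∀ (hidx : q - 1 + j * q < u.length), u[q - 1 + j * q]'hidx = v[j] := by
  intro hidx
  subst hrep
  have hphl : (phi a q v).length = q * v.length := phi_length a (by omega) v
  have hlt : q - 1 + j * q < (phi a q v).length := by
    rw [hphl]
    have h1 : j + 1 ≤ v.length := hj
    have h2 : (j+1) * q ≤ v.length * q := mul_le_mul_left h1 q
    have h3 : (j+1) * q = j * q + q := by ring
    have h4 : v.length * q = q * v.length := Nat.mul_comm _ _
    omega
  rw [List.getElem_append_left hlt]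
  have hmd := mul_add_pred_mod hq j
  have hco : q - 1 + j * q = j * q + (q - 1) := by omega
  simp only [hco]
  rw [phi_getElem_b a (by omega) v _ (by rw [← hco]; exact hlt) hmd.1]
  simp only [hmd.2]

lemma rep_sample_index_lt {u v : List A} {a : A} {q m : ℕ} (hq : 2 ≤ q)
    (hrep : u = phi a q v ++ List.replicate m a) {j : ℕ} (hj : j < v.length) :
    q - 1 + j * q < u.length := by
  have hl := rep_length hq hrep
  have h1 : j + 1 ≤ v.length := hj
  have h2 : (j+1) * q ≤ v.length * q := mul_le_mul_left h1 q
  have h3 : (j+1) * q = j * q + q := by ring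
  have h4 : v.length * q = q * v.length := Nat.mul_comm _ _
  omega

/-- Direction ⊇ : left extensions of `v` extend to `u`. -/
lemma Lext_sup [Nonempty A] (hQ : ∀ q ∈ Q, Nat.Prime q) {u v : List A} {a : A} {q m : ℕ}
    (hq : q ∈ Q) (hm : m < q) (hv : v ∈ FQ A Q)
    (hrep : u = phi a q v ++ List.replicate m a) {c : A} (hc : c ∈ Lext A Q v) :
    c ∈ Lext A Q u := by
  have hq2 : 2 ≤ q := (hQ q hq).two_le
  obtain ⟨d, hd⟩ := right_ext_F hQ ⟨q, hq⟩ hc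
  obtain ⟨w, hw, hinf⟩ := hd
  have hstep : phi a q ((c :: v) ++ [d]) <:+: phi a q w := phi_infix a q hinf
  have hmem : phi a q ((c :: v) ++ [d]) ∈ FQ A Q :=
    ⟨phi a q w, IsL.step a q hq hw, hstep⟩
  have hphid : phi a q [d] = List.replicate (q-1) a ++ [d] := by simp [phi]
  have key : phi a q ((c :: v) ++ [d])
      = List.replicate (q-1) a ++ ((c :: u) ++ (List.replicate (q-1-m) a ++ [d])) := by
    rw [phi_append, phi_cons, hphid, hrep]
    simp only [List.cons_append, List.append_assoc, List.nil_append]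
    rw [← List.append_assoc (List.replicate m a) (List.replicate (q-1-m) a) [d],
      ← List.replicate_add, show m + (q-1-m) = q - 1 by omega]
  refine FQ_infix ⟨List.replicate (q-1) a, List.replicate (q - 1 - m) a ++ [d], ?_⟩ hmem
  rw [key]
  simp [List.append_assoc]

/-- Direction ⊆ : left extensions of `u` restrict to `v`, via the master lemma. -/
lemma Lext_sub [Nonempty A] (hQ : ∀ q ∈ Q, Nat.Prime q) {u v : List A} {a : A} {q m : ℕ}
    (hq : q ∈ Q) (hm : m < q)
    (hrep : u = phi a q v ++ List.replicate m a) {c : A} (hc : c ∈ Lext A Q u) :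
    c ∈ Lext A Q v := by
  have hq2 : 2 ≤ q := (hQ q hq).two_le
  obtain ⟨z, hz, s, t, hst⟩ := hc
  subst hst
  have hlen := rep_length hq2 hrep
  have hzlen : (s ++ c :: u ++ t).length = s.length + (u.length + 1) + t.length := by
    simp; omega
  have hvq : q * v.length ≤ u.length := by omega
  have hzel : ∀ i (hi : i < u.length), ∀ (hzi : s.length + 1 + i < (s ++ c :: u ++ t).length),
      (s ++ c :: u ++ t)[s.length + 1 + i]'hzi = u[i]'hi := by
    intro i hi hzi
    rw [List.getElem_append_left (by simp; omega)]
    rw [List.getElem_append_right (by omega : s.length ≤ s.length + 1 + i)]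
    have hix : s.length + 1 + i - s.length = i + 1 := by omega
    simp only [hix, List.getElem_cons_succ]
  have hzc : ∀ (hzi : s.length < (s ++ c :: u ++ t).length),
      (s ++ c :: u ++ t)[s.length]'hzi = c := by
    intro hzi
    rw [List.getElem_append_left (by simp)]
    rw [List.getElem_append_right (by omega : s.length ≤ s.length)]
    simp
  have hY := masterM hQ hz a s.length q (v.length + 1) (by omega)
    (by
      intro j hj
      have hj' : j ≤ v.length := by omega
      have h2 : j * q ≤ v.length * q := mul_le_mul_left hj' q
      have h4 : v.length * q = q * v.length := Nat.mul_comm _ _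
      omega)
    (by
      intro i hi hlo hhi hne
      rcases Nat.eq_or_lt_of_le hlo with heq | hlt
      · have : i - s.length = 0 := by omega
        simp [this]
      · have hhi' : i - s.length - 1 < u.length := by
          have h5 : (v.length + 1 - 1) * q = v.length * q := by simp
          have h4 : v.length * q = q * v.length := Nat.mul_comm _ _
          omega
        have hieq : s.length + 1 + (i - s.length - 1) = i := by omega
        have hzi := hzel (i - s.length - 1) hhi' (by omega)
        simp only [hieq] at hzi
        rw [hzi] at hne
        have hmod := rep_mod hq2 hrep hhi' hne
        have hdvd : q ∣ (i - s.length - 1) + 1 := (mod_pred_iff hq2).1 hmod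
        obtain ⟨e, he⟩ := hdvd
        have h9 : i - s.length = q * e := by omega
        simp [h9, Nat.mul_mod_right])
  have hYeq : ((List.range (v.length + 1)).map
      (fun j => (s ++ c :: u ++ t).getD (s.length + j * q) a)) = c :: v := by
    apply List.ext_getElem
    · simp
    · intro n h1 h2
      simp only [List.length_map, List.length_range] at h1
      simp only [List.getElem_map, List.getElem_range]
      have hin : s.length + n * q < (s ++ c :: u ++ t).length := by
        have h2' : n * q ≤ v.length * q := mul_le_mul_left (by omega : n ≤ v.length) q
        have h4 : v.length * q = q * v.length := Nat.mul_comm _ _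
        omega
      rw [List.getD_eq_getElem _ _ hin]
      rcases Nat.eq_zero_or_pos n with hn0 | hn0
      · subst hn0
        simp only [Nat.zero_mul, Nat.add_zero] at hin ⊢
        rw [hzc hin]
        simp
      · have hn' : n - 1 < v.length := by omega
        have hidx : s.length + n * q = s.length + 1 + (q - 1 + (n-1) * q) := by
          have h6 : (n-1+1) * q = (n-1)*q + q := by ring
          have h7 : n-1+1 = n := by omega
          rw [h7] at h6
          omega
        have hulen : q - 1 + (n-1) * q < u.length := rep_sample_index_lt hq2 hrep hn'
        simp only [hidx]
        rw [hzel _ hulen (by rw [← hidx]; exact hin)]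
        rw [rep_sample hq2 hrep hn' hulen]
        rw [List.getElem_cons]
        have hne0 : ¬ (n = 0) := by omega
        simp [hne0]
  rw [hYeq] at hY
  exact hY

lemma Lext_eq [Nonempty A] (hQ : ∀ q ∈ Q, Nat.Prime q) {u v : List A} {a : A} {q m : ℕ}
    (hq : q ∈ Q) (hm : m < q) (hv : v ∈ FQ A Q)
    (hrep : u = phi a q v ++ List.replicate m a) :
    Lext A Q u = Lext A Q v := by
  ext c
  exact ⟨fun h => Lext_sub hQ hq hm hrep h, fun h => Lext_sup hQ hq hm hv hrep h⟩

end App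
section Final
variable {A : Type*} {Q : Finset ℕ}

lemma shape_to_rep [Nonempty A] (hQ : ∀ q ∈ Q, Nat.Prime q) {u : List A} {a : A} {q : ℕ}
    (hq2 : 2 ≤ q) (hu : u ∈ FQ A Q)
    (hsh : ∀ i (hi : i < u.length), u[i] ≠ a → i % q = q - 1) :
    ∃ v, v ∈ FQ A Q ∧ v.length = u.length / q ∧
      u = phi a q v ++ List.replicate (u.length % q) a := by
  obtain ⟨z, hz, s, t, hst⟩ := hu
  subst hst
  have hdm := Nat.div_add_mod u.length q
  have hml := Nat.mod_lt u.length (show 0 < q by omega)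
  have hzlen : (s ++ u ++ t).length = s.length + u.length + t.length := by simp; omega
  have hel : ∀ i (hi : i < u.length), ∀ (hzi : s.length + i < (s ++ u ++ t).length),
      (s ++ u ++ t)[s.length + i]'hzi = u[i]'hi := by
    intro i hi hzi
    rw [List.getElem_append_left (by simp; omega)]
    rw [List.getElem_append_right (by omega : s.length ≤ s.length + i)]
    simp
  have hkq : q * (u.length / q) ≤ u.length := Nat.mul_div_le _ _
  have hY := masterM hQ hz a (s.length + (q - 1)) q (u.length / q) (by omega)
    (by
      intro j hj
      have hj' : j + 1 ≤ u.length / q := hj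
      have h2 : (j+1) * q ≤ (u.length / q) * q := mul_le_mul_left hj' q
      have h3 : (j+1) * q = j * q + q := by ring
      have h4 : (u.length / q) * q = q * (u.length / q) := Nat.mul_comm _ _
      omega)
    (by
      intro i hi hlo hhi hne
      rcases Nat.eq_or_lt_of_le hlo with heq | hlt
      · have h0 : i - (s.length + (q-1)) = 0 := by omega
        simp [h0]
      · rcases Nat.eq_zero_or_pos (u.length / q) with hk0 | hk0
        · rw [hk0] at hhi
          simp at hhi
          omega
        · have h9' : u.length / q - 1 + 1 = u.length / q := by omega
          have h8 : (u.length / q - 1 + 1) * q = (u.length / q - 1) * q + q := by ring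
          rw [h9'] at h8
          have hc : (u.length / q) * q = q * (u.length / q) := Nat.mul_comm _ _
          have hi' : i - s.length < u.length := by omega
          have hieq : s.length + (i - s.length) = i := by omega
          have hz1 := hel (i - s.length) hi' (by omega)
          simp only [hieq] at hz1
          rw [hz1] at hne
          have hmod := hsh (i - s.length) hi' hne
          have hdm2 := Nat.div_add_mod (i - s.length) q
          have h9 : i - (s.length + (q-1)) = q * ((i - s.length)/q) := by omega
          simp [h9, Nat.mul_mod_right])
  set v := (List.range (u.length / q)).map
    (fun j => (s ++ u ++ t).getD (s.length + (q - 1) + j * q) a) with hvdef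
  have hvlen : v.length = u.length / q := by simp [hvdef]
  refine ⟨v, hY, hvlen, ?_⟩
  have hplen : (phi a q v).length = q * (u.length / q) := by
    rw [phi_length a (by omega), hvlen]
  apply List.ext_getElem
  · simp only [List.length_append, hplen, List.length_replicate]
    omega
  · intro i hiu hi2
    by_cases hcase : i < q * (u.length / q)
    · rw [List.getElem_append_left (by rw [hplen]; exact hcase)]
      have hiv : i / q < v.length := by
        rw [hvlen]
        exact Nat.div_lt_of_lt_mul (by omega)
      by_cases hmod : i % q = q - 1
      · rw [phi_getElem_b a (by omega) v i (by rw [hplen]; exact hcase) hmod]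
        have hidm := Nat.div_add_mod i q
        simp only [hvdef, List.getElem_map, List.getElem_range]
        have hidx : s.length + (q - 1) + (i / q) * q = s.length + i := by
          have hc : (i/q) * q = q * (i/q) := Nat.mul_comm _ _
          omega
        have hin : s.length + (q - 1) + (i / q) * q < (s ++ u ++ t).length := by
          rw [hidx]; omega
        rw [List.getD_eq_getElem _ _ hin]
        have := hel i hiu (by omega)
        simp only [hidx]
        rw [this]
      · rw [phi_getElem_a a (by omega) v i (by rw [hplen]; exact hcase) hmod]
        by_contra hne
        exact hmod (hsh i hiu hne)
    · rw [List.getElem_append_right (by rw [hplen]; omega)]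
      rw [List.getElem_replicate]
      by_contra hne
      have hmod := hsh i hiu hne
      have h5 : i % q = i - q * (u.length / q) := by
        have h6 : i = i - q * (u.length / q) + (u.length / q) * q := by
          have hc : (u.length/q) * q = q * (u.length/q) := Nat.mul_comm _ _
          omega
        conv_lhs => rw [h6]
        rw [Nat.add_mul_mod_self_right]
        exact Nat.mod_eq_of_lt (by omega)
      omega

lemma occ_pattern (hQ : ∀ q ∈ Q, Nat.Prime q) {u : List A} (hu3 : 3 ≤ u.length) {c : A}
    (hcu : (c :: u) ∈ FQ A Q) :
    (∃ (a : A) (q : ℕ), q ∈ Q ∧ ∀ i (hi : i < u.length), u[i] ≠ a → i % q = q - 1) ∨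
    (∃ (ρ β : ℕ), ρ ∈ Q ∧ 1 ≤ β ∧ β < ρ ∧
      ∀ i (hi : i < u.length), u[i] ≠ c → (β + i) % ρ = ρ - 1) := by
  obtain ⟨z, hz, s, t, hst⟩ := hcu
  have hzl : 2 ≤ z.length := by rw [← hst]; simp; omega
  obtain ⟨α, ρ, w, hρ, hw, hzf⟩ := IsL_inv hz hzl
  subst hzf
  have hρ2 := (hQ ρ hρ).two_le
  have hzlen : (phi α ρ w).length = s.length + (u.length + 1) + t.length := by
    rw [← hst]; simp; omega
  have hel : ∀ i (hi : i < u.length), ∀ (hzi : s.length + 1 + i < (phi α ρ w).length),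
      (phi α ρ w)[s.length + 1 + i]'hzi = u[i]'hi := by
    intro i hi hzi
    rw [← List.getElem_of_eq hst (by rw [← hst] at hzi; exact hzi)]
    rw [List.getElem_append_left (by simp; omega)]
    rw [List.getElem_append_right (by omega : s.length ≤ s.length + 1 + i)]
    have hix : s.length + 1 + i - s.length = i + 1 := by omega
    simp only [hix, List.getElem_cons_succ]
  have hpat : ∀ i (hi : i < u.length), u[i] ≠ α → (s.length + 1 + i) % ρ = ρ - 1 := by
    intro i hi hne
    by_contra hmm
    have h := phi_getElem_a α (by omega) w (s.length + 1 + i) (by omega) hmm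
    rw [hel i hi (by omega)] at h
    exact hne h
  have hshift : ∀ i : ℕ, (s.length + 1 + i) % ρ = ((s.length + 1) % ρ + i) % ρ := by
    intro i
    conv_lhs => rw [Nat.add_mod]
    conv_rhs => rw [Nat.add_mod, Nat.mod_mod_of_dvd _ (dvd_refl ρ)]
  by_cases hβ : (s.length + 1) % ρ = 0
  · refine Or.inl ⟨α, ρ, hρ, ?_⟩
    intro i hi hne
    have := hpat i hi hne
    rw [hshift i, hβ, Nat.zero_add] at this
    exact this
  · -- c = α and unaligned pattern
    have hβρ : (s.length + 1) % ρ < ρ := Nat.mod_lt _ (by omega)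
    have hsc : c = α := by
      have hsm : s.length % ρ ≠ ρ - 1 := by
        intro hh
        have hdv := (mod_pred_iff hρ2).1 hh
        obtain ⟨e, he⟩ := hdv
        apply hβ
        rw [he]
        exact Nat.mul_mod_right ρ e
      have hslt : s.length < (phi α ρ w).length := by omega
      have h := phi_getElem_a α (by omega) w s.length hslt hsm
      have hc : (phi α ρ w)[s.length]'hslt = c := by
        rw [← List.getElem_of_eq hst (by rw [← hst] at hslt; exact hslt)]
        rw [List.getElem_append_left (by simp)]
        rw [List.getElem_append_right (by omega : s.length ≤ s.length)]
        simp
      rw [hc] at h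
      exact h
    refine Or.inr ⟨ρ, (s.length + 1) % ρ, hρ, by omega, hβρ, ?_⟩
    intro i hi hne
    rw [← hshift i]
    exact hpat i hi (by rw [← hsc]; exact hne)

lemma core_comb {u : List A} {c₁ c₂ : A} {ρ₁ β₁ ρ₂ β₂ : ℕ} (h3 : 3 ≤ u.length)
    (hcc : c₁ ≠ c₂) (hρ₁2 : 2 ≤ ρ₁) (hρ₂2 : 2 ≤ ρ₂)
    (hβ₁1 : 1 ≤ β₁) (hβ₁ρ : β₁ < ρ₁) (hE1 : β₁ ≠ ρ₁ - 1) (hβ₂ : β₂ = ρ₂ - 1)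
    (hP₁ : ∀ i (hi : i < u.length), u[i] ≠ c₁ → (β₁ + i) % ρ₁ = ρ₁ - 1)
    (hP₂ : ∀ i (hi : i < u.length), u[i] ≠ c₂ → (β₂ + i) % ρ₂ = ρ₂ - 1) :
    ρ₂ = 2 ∧ ∀ i (hi : i < u.length), u[i] ≠ c₁ → i % 2 = 1 := by
  have h0 : u[0]'(by omega) = c₁ := by
    by_contra h
    have := hP₁ 0 (by omega) h
    rw [Nat.add_zero, Nat.mod_eq_of_lt hβ₁ρ] at this
    exact hE1 this
  have h1 : u[1]'(by omega) = c₂ := by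
    by_contra h
    have := hP₂ 1 (by omega) h
    rw [hβ₂, show ρ₂ - 1 + 1 = ρ₂ by omega, Nat.mod_self] at this
    omega
  have hβ₁e : β₁ = ρ₁ - 2 := by
    have h1c : u[1]'(by omega) ≠ c₁ := by rw [h1]; exact fun hh => hcc hh.symm
    have := hP₁ 1 (by omega) h1c
    rw [Nat.mod_eq_of_lt (by omega)] at this
    omega
  have h2 : u[2]'(by omega) = c₁ := by
    by_contra h
    have := hP₁ 2 (by omega) h
    rw [hβ₁e, show ρ₁ - 2 + 2 = ρ₁ by omega, Nat.mod_self] at this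
    omega
  have hρ₂e : ρ₂ = 2 := by
    have h2c : u[2]'(by omega) ≠ c₂ := by rw [h2]; exact hcc
    have := hP₂ 2 (by omega) h2c
    rw [hβ₂, show ρ₂ - 1 + 2 = ρ₂ + 1 by omega] at this
    have hmo : (ρ₂ + 1) % ρ₂ = 1 := by
      rw [Nat.add_mod_left, Nat.mod_eq_of_lt (by omega)]
    omega
  subst hρ₂e
  refine ⟨rfl, ?_⟩
  have hn3 : u.length = 3 := by
    by_contra hn
    have h4 : 4 ≤ u.length := by omega
    have h3' : u[3]'(by omega) = c₂ := by
      by_contra h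
      have := hP₂ 3 (by omega) h
      rw [hβ₂] at this
      omega
    have h3c : u[3]'(by omega) ≠ c₁ := by rw [h3']; exact fun hh => hcc hh.symm
    have := hP₁ 3 (by omega) h3c
    rw [hβ₁e, show ρ₁ - 2 + 3 = ρ₁ + 1 by omega] at this
    have hmo : (ρ₁ + 1) % ρ₁ = 1 := by
      rw [Nat.add_mod_left, Nat.mod_eq_of_lt (by omega)]
    omega
  intro i hi hne
  rw [hn3] at hi
  interval_cases i
  · exact absurd h0 hne
  · rfl
  · exact absurd h2 hne

lemma exists_shape [Nonempty A] [Finite A] (hQ : ∀ q ∈ Q, Nat.Prime q) {u : List A}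
    (hu : u ∈ FQ A Q) (h3 : 3 ≤ u.length) (hsp : (Lext A Q u).ncard ≠ 1) :
    ∃ (a : A) (q : ℕ), q ∈ Q ∧ ∀ i (hi : i < u.length), u[i] ≠ a → i % q = q - 1 := by
  have hne := Lext_nonempty hQ (Q_nonempty_of_len2 hu (by omega)) hu
  have hfin : (Lext A Q u).Finite := Set.toFinite _
  have h2card : 1 < (Lext A Q u).ncard := by
    have := (Set.ncard_pos hfin).2 hne
    omega
  obtain ⟨c₁, c₂, hc₁, hc₂, hcc⟩ := (Set.one_lt_ncard_iff hfin).1 h2card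
  rcases occ_pattern hQ h3 hc₁ with h | ⟨ρ₁, β₁, hρ₁, hβ₁, hβρ₁, hP₁⟩
  · exact h
  rcases occ_pattern hQ h3 hc₂ with h | ⟨ρ₂, β₂, hρ₂, hβ₂, hβρ₂, hP₂⟩
  · exact h
  have hρ₁2 := (hQ ρ₁ hρ₁).two_le
  have hρ₂2 := (hQ ρ₂ hρ₂).two_le
  by_cases hE1 : β₁ = ρ₁ - 1 <;> by_cases hE2 : β₂ = ρ₂ - 1
  · exfalso
    have h11 : u[1]'(by omega) = c₁ := by
      by_contra h
      have := hP₁ 1 (by omega) h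
      rw [hE1, show ρ₁ - 1 + 1 = ρ₁ by omega, Nat.mod_self] at this
      omega
    have h12 : u[1]'(by omega) = c₂ := by
      by_contra h
      have := hP₂ 1 (by omega) h
      rw [hE2, show ρ₂ - 1 + 1 = ρ₂ by omega, Nat.mod_self] at this
      omega
    exact hcc (by rw [← h11, h12])
  · obtain ⟨hq2, hsh⟩ := core_comb h3 hcc.symm hρ₂2 hρ₁2 (by omega) hβρ₂ hE2 hE1 hP₂ hP₁
    refine ⟨c₂, ρ₁, hρ₁, ?_⟩
    intro i hi hne
    rw [hq2]
    exact hsh i hi hne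
  · obtain ⟨hq2, hsh⟩ := core_comb h3 hcc hρ₁2 hρ₂2 (by omega) hβρ₁ hE1 hE2 hP₁ hP₂
    refine ⟨c₁, ρ₂, hρ₂, ?_⟩
    intro i hi hne
    rw [hq2]
    exact hsh i hi hne
  · exfalso
    have h01 : u[0]'(by omega) = c₁ := by
      by_contra h
      have := hP₁ 0 (by omega) h
      rw [Nat.add_zero, Nat.mod_eq_of_lt hβρ₁] at this
      exact hE1 this
    have h02 : u[0]'(by omega) = c₂ := by
      by_contra h
      have := hP₂ 0 (by omega) h
      rw [Nat.add_zero, Nat.mod_eq_of_lt hβρ₂] at this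
      exact hE2 this
    exact hcc (by rw [← h01, h02])

end Final

/-- **Corollary 1.** For each special word `u` of `F(Σ,Q)` of
length `n ≥ 3` there are a unique letter `a` and a unique (nonempty) subset
`Q(u) ⊆ Q` such that `u = φ_{a,q}(v_q)·a^m` (with `v_q ∈ F(Σ,Q)`, `0 ≤ m < q`)
holds exactly for the `q ∈ Q(u)`; moreover every such representation has
`|v_q| = ⌊n/q⌋` and `L(u) = L(v_q)`. -/
theorem special_word_unique_representation {A : Type*} [Fintype A]
    (hd : 2 ≤ Fintype.card A) (Q : Finset ℕ) (hQ : ∀ q ∈ Q, Nat.Prime q)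
    (u : List A) (hu : IsSpecial A Q u) (hlen : 3 ≤ u.length) :
    ∃! aQ : A × Finset ℕ,
      aQ.2 ⊆ Q ∧ aQ.2.Nonempty ∧
      (∀ q ∈ Q, (q ∈ aQ.2 ↔
        ∃ (v : List A) (m : ℕ), v ∈ FQ A Q ∧ m < q ∧
          u = phi aQ.1 q v ++ List.replicate m aQ.1)) ∧
      (∀ q ∈ aQ.2, ∀ (v : List A) (m : ℕ), v ∈ FQ A Q → m < q →
        u = phi aQ.1 q v ++ List.replicate m aQ.1 →
          v.length = u.length / q ∧ Lext A Q u = Lext A Q v) := by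
  classical
  haveI : Nonempty A := Fintype.card_pos_iff.mp (by omega)
  obtain ⟨huF, hnc⟩ := hu
  have hule : 0 < u.length := by omega
  obtain ⟨a₀, q₀, hq₀, hsh₀⟩ := exists_shape hQ huF hlen hnc
  have hq₀2 : 2 ≤ q₀ := (hQ q₀ hq₀).two_le
  have hu0 : u[0]'hule = a₀ := by
    by_contra h
    have h1 := hsh₀ 0 hule h
    have h2 : (0 : ℕ) % q₀ = 0 := Nat.zero_mod _
    omega
  set S : Finset ℕ := Q.filter (fun q => ∃ (v : List A) (m : ℕ), v ∈ FQ A Q ∧ m < q ∧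
      u = phi a₀ q v ++ List.replicate m a₀) with hSdef
  have hmemS : ∀ q : ℕ, q ∈ S ↔ q ∈ Q ∧ ∃ (v : List A) (m : ℕ), v ∈ FQ A Q ∧ m < q ∧
      u = phi a₀ q v ++ List.replicate m a₀ := by
    intro q; rw [hSdef]; exact Finset.mem_filter
  refine ⟨(a₀, S), ⟨?_, ?_, ?_, ?_⟩, ?_⟩
  · exact Finset.filter_subset _ _
  · -- nonempty
    obtain ⟨v, hvF, hvlen, hrep⟩ := shape_to_rep hQ hq₀2 huF hsh₀
    exact ⟨q₀, (hmemS q₀).2 ⟨hq₀, v, u.length % q₀,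
      hvF, Nat.mod_lt _ (by omega), hrep⟩⟩
  · intro q hqQ
    constructor
    · intro h
      exact ((hmemS q).1 h).2
    · intro h
      exact (hmemS q).2 ⟨hqQ, h⟩
  · intro q hqS v m hvF hm hrep
    have hqQ : q ∈ Q := ((hmemS q).1 hqS).1
    have hq2 : 2 ≤ q := (hQ q hqQ).two_le
    constructor
    · have hl := rep_length hq2 hrep
      rw [hl, Nat.mul_add_div (by omega), Nat.div_eq_of_lt hm]
      omega
    · exact Lext_eq hQ hqQ hm hvF hrep
  · rintro ⟨a', S'⟩ ⟨hsub', hne', hiff', _⟩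
    obtain ⟨q', hq'S⟩ := hne'
    have hq'Q : q' ∈ Q := hsub' hq'S
    obtain ⟨v, m, hvF, hm, hrep⟩ := (hiff' q' hq'Q).1 hq'S
    have hq'2 : 2 ≤ q' := (hQ q' hq'Q).two_le
    have ha' : a' = a₀ := by
      rw [← hu0]
      by_contra h
      have h1 := rep_mod hq'2 hrep hule (fun hh => h hh.symm)
      have h2 : (0 : ℕ) % q' = 0 := Nat.zero_mod _
      omega
    subst ha'
    have hSS : S' = S := by
      ext q
      constructor
      · intro h
        exact (hmemS q).2 ⟨hsub' h, (hiff' q (hsub' h)).1 h⟩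
      · intro h
        have hqQ := ((hmemS q).1 h).1
        exact (hiff' q hqQ).2 ((hmemS q).1 h).2
    rw [hSS]
end

section
/- Let s : [0,∞) → ℝ satisfy s(x) = s(⌊x⌋) for all x ≥ 0 and the equation s(x) = d·D_Q s(x) for all x ≥ 3, where Q is a finite set of primes and d ≥ 2. If s(3) ≥ s(2) ≥ s(1) ≥ s(0) > 0, then the function s is non-decreasing on (0,∞). -/
/-- The operator `D_R f(x) = Σ_{i=1}^{|R|} (-1)^{i+1} Σ_{{s_1,…,s_i} ⊆ R} f(x/(s_1⋯s_i))`,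
where the inner sum is over all `i`-element subsets of `R` (equivalently, a signed
sum over all nonempty subsets of `R`). -/
noncomputable def DOp (R : Finset ℕ) (f : ℝ → ℝ) (x : ℝ) : ℝ :=
  ∑ T ∈ R.powerset.erase ∅, (-1 : ℝ) ^ (T.card + 1) * f (x / ∏ q ∈ T, (q : ℝ))

lemma subset_pair {S : Finset ℕ} {a b : ℕ} (h : S ⊆ {a, b}) :
    S = ∅ ∨ S = {a} ∨ S = {b} ∨ S = {a, b} := by
  by_cases ha : a ∈ S <;> by_cases hb : b ∈ S
  · right; right; right
    refine Finset.Subset.antisymm h ?_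
    intro x hx
    rcases Finset.mem_insert.mp hx with rfl | hx
    · exact ha
    · exact Finset.mem_singleton.mp hx ▸ hb
  · right; left
    refine Finset.Subset.antisymm ?_ (Finset.singleton_subset_iff.mpr ha)
    intro x hx
    rcases Finset.mem_insert.mp (h hx) with rfl | h'
    · exact Finset.mem_singleton_self x
    · exact absurd (Finset.mem_singleton.mp h' ▸ hx) hb
  · right; right; left
    refine Finset.Subset.antisymm ?_ (Finset.singleton_subset_iff.mpr hb)
    intro x hx
    rcases Finset.mem_insert.mp (h hx) with rfl | h'
    · exact absurd hx ha
    · exact h'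
  · left
    refine Finset.eq_empty_of_forall_notMem fun x hx => ?_
    rcases Finset.mem_insert.mp (h hx) with rfl | h'
    · exact ha hx
    · exact hb (Finset.mem_singleton.mp h' ▸ hx)

lemma floor_nat_div (m P : ℕ) (hP : 0 < P) : ⌊(m : ℝ) / (P : ℝ)⌋ = ((m / P : ℕ) : ℤ) := by
  have h0 : (0:ℝ) ≤ (m : ℝ) / (P : ℝ) := by positivity
  have h1 : ⌊(m : ℝ) / (P : ℝ)⌋₊ = m / P := by
    rw [Nat.floor_div_natCast]; simp
  rw [← h1, ← Int.floor_toNat, Int.toNat_of_nonneg (Int.floor_nonneg.mpr h0)]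


noncomputable def Dl (t : ℕ → ℝ) (n : ℕ) : ℝ := t n - t (n-1)

noncomputable def Mm (t : ℕ → ℝ) (n : ℕ) (S : Finset ℕ) : ℝ :=
  ∑ T ∈ S.powerset, (-1 : ℝ)^T.card * Dl t (n / ∏ q ∈ T, q)

lemma Mm_empty (t : ℕ → ℝ) (n : ℕ) : Mm t n ∅ = Dl t n := by
  simp [Mm]

lemma Mm_insert (t : ℕ → ℝ) (n : ℕ) {p : ℕ} {S : Finset ℕ} (hp : p ∉ S) :
    Mm t n (insert p S) = Mm t n S - Mm t (n / p) S := by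
  unfold Mm
  rw [Finset.sum_powerset_insert hp]
  have h2 : ∀ T ∈ S.powerset,
      (-1 : ℝ)^(insert p T).card * Dl t (n / ∏ q ∈ insert p T, q)
      = -((-1 : ℝ)^T.card * Dl t ((n / p) / ∏ q ∈ T, q)) := by
    intro T hT
    have hpT : p ∉ T := fun h => hp (Finset.mem_powerset.mp hT h)
    rw [Finset.card_insert_of_notMem hpT, Finset.prod_insert hpT,
      Nat.div_div_eq_div_mul, pow_succ]
    ring
  rw [Finset.sum_congr rfl h2, Finset.sum_neg_distrib]
  ring

lemma natrec (Q : Finset ℕ) (hQ : ∀ q ∈ Q, Nat.Prime q) (d : ℕ) (s : ℝ → ℝ)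
    (hfloor : ∀ x : ℝ, 0 ≤ x → s x = s (⌊x⌋ : ℤ))
    (hrec : ∀ x : ℝ, 3 ≤ x → s x = d * DOp Q s x)
    (m : ℕ) (hm : 3 ≤ m) :
    s m = d * ∑ T ∈ Q.powerset.erase ∅,
      (-1:ℝ)^(T.card+1) * s (((m / ∏ q ∈ T, q : ℕ) : ℝ)) := by
  have h := hrec m (by exact_mod_cast hm)
  rw [DOp] at h
  rw [h]
  congr 1
  refine Finset.sum_congr rfl fun T hT => ?_
  have hTQ : T ⊆ Q := Finset.mem_powerset.mp (Finset.mem_of_mem_erase hT)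
  have hP : 0 < ∏ q ∈ T, q := Finset.prod_pos fun q hq => (hQ q (hTQ hq)).pos
  have hcast : (∏ q ∈ T, (q:ℝ)) = ((∏ q ∈ T, q : ℕ) : ℝ) := by push_cast; rfl
  rw [hcast]
  congr 1
  rw [hfloor _ (by positivity), floor_nat_div m _ hP]
  norm_cast

lemma drec (Q : Finset ℕ) (hQ : ∀ q ∈ Q, Nat.Prime q) (d : ℕ) (t : ℕ → ℝ)
    (hr : ∀ m : ℕ, 3 ≤ m → t m = d * ∑ T ∈ Q.powerset.erase ∅,
      (-1:ℝ)^(T.card+1) * t (m / ∏ q ∈ T, q))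
    (n : ℕ) (hn : 4 ≤ n) :
    (d:ℝ) * (Dl t n - Mm t n (Q.filter (· ∣ n))) = Dl t n := by
  classical
  set K := Q.filter (· ∣ n) with hK
  have hsub : K.powerset ⊆ Q.powerset :=
    Finset.powerset_mono.mpr (Finset.filter_subset _ _)
  have he : n - 1 + 1 = n := by omega
  set f : Finset ℕ → ℝ := fun T =>
    (-1:ℝ)^T.card * (t (n / ∏ q ∈ T, q) - t ((n-1) / ∏ q ∈ T, q)) with hf
  have key : Mm t n K = ∑ T ∈ Q.powerset, f T := by
    rw [Mm]
    refine (Finset.sum_congr rfl fun T hT => ?_).trans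
      (Finset.sum_subset hsub fun T hTQ hTK => ?_)
    · have hTK : T ⊆ K := Finset.mem_powerset.mp hT
      have hdvd : (∏ q ∈ T, q) ∣ n := by
        refine Finset.prod_primes_dvd n (fun p hp => ?_) (fun p hp => ?_)
        · exact (hQ p (Finset.filter_subset _ _ (hTK hp))).prime
        · exact (Finset.mem_filter.mp (hTK hp)).2
      have h2 := Nat.succ_div_of_dvd (a := n-1) (b := ∏ q ∈ T, q)
        (by rw [he]; exact hdvd)
      rw [he] at h2
      have hdd : (n-1) / (∏ q ∈ T, q) = n / (∏ q ∈ T, q) - 1 := by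
        rw [h2, Nat.add_sub_cancel]
      simp only [hf, Dl]
      rw [hdd]
    · obtain ⟨p, hpT, hpK⟩ := Finset.not_subset.mp
        (fun h => hTK (Finset.mem_powerset.mpr h))
      have hpQ : p ∈ Q := Finset.mem_powerset.mp hTQ hpT
      have hpn : ¬ p ∣ n := fun h => hpK (Finset.mem_filter.mpr ⟨hpQ, h⟩)
      have hPn : ¬ (∏ q ∈ T, q) ∣ n :=
        fun h => hpn ((Finset.dvd_prod_of_mem _ hpT).trans h)
      have h2 := Nat.succ_div_of_not_dvd (a := n-1) (b := ∏ q ∈ T, q)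
        (by rw [he]; exact hPn)
      rw [he] at h2
      simp only [hf]
      rw [← h2, sub_self, mul_zero]
  set A : ℝ := ∑ T ∈ Q.powerset.erase ∅, f T with hA
  have hmem : ∅ ∈ Q.powerset := Finset.empty_mem_powerset _
  have split : ∑ T ∈ Q.powerset, f T = A + Dl t n := by
    rw [← Finset.sum_erase_add _ _ hmem, hA]
    congr 1
    rw [hf]
    simp [Dl]
  have h1 := hr n (by omega)
  have h2 := hr (n-1) (by omega)
  have hdiff : Dl t n = (d:ℝ) * (-A) := by
    rw [Dl, h1, h2, ← mul_sub, ← Finset.sum_sub_distrib]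
    congr 1
    rw [hA, ← Finset.sum_neg_distrib]
    refine Finset.sum_congr rfl fun T _ => ?_
    rw [hf]
    ring
  rw [key, split, hdiff]
  ring

lemma eqE (Q : Finset ℕ) (hQ : ∀ q ∈ Q, Nat.Prime q) (d : ℕ) (t : ℕ → ℝ)
    (hr : ∀ m : ℕ, 3 ≤ m → t m = d * ∑ T ∈ Q.powerset.erase ∅,
      (-1:ℝ)^(T.card+1) * t (m / ∏ q ∈ T, q))
    (h2 : 2 ∈ Q) (h3 : 3 ∈ Q) :
    t 3 = d * (t 0 + 2*(t 1 - t 0)) := by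
  classical
  have h := hr 3 le_rfl
  have hpt : ∀ T ∈ Q.powerset.erase ∅,
      (-1:ℝ)^(T.card+1) * t (3 / ∏ q ∈ T, q)
      = (-1:ℝ)^(T.card+1) * t 0 + (if T = ({2} : Finset ℕ) then t 1 - t 0 else 0)
        + (if T = ({3} : Finset ℕ) then t 1 - t 0 else 0) := by
    intro T hT
    have hTQ : T ⊆ Q := Finset.mem_powerset.mp (Finset.mem_of_mem_erase hT)
    have hTne : T ≠ ∅ := Finset.ne_of_mem_erase hT
    by_cases e2 : T = ({2} : Finset ℕ)
    · subst e2
      rw [if_pos rfl, if_neg (by decide : ¬ ({2} : Finset ℕ) = {3}),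
        Finset.prod_singleton, Finset.card_singleton]
      norm_num
    · by_cases e3 : T = ({3} : Finset ℕ)
      · subst e3
        rw [if_neg e2, if_pos rfl, Finset.prod_singleton, Finset.card_singleton]
        norm_num
      · have hbig : 3 < ∏ q ∈ T, q := by
          by_cases h5 : ∃ p ∈ T, 5 ≤ p
          · obtain ⟨p, hpT, hp5⟩ := h5
            have : p ≤ ∏ q ∈ T, q :=
              Finset.single_le_prod' (fun i hi => (hQ i (hTQ hi)).one_lt.le.trans' (by omega)) hpT
            omega
          · push_neg at h5
            have hT23 : T ⊆ ({2, 3} : Finset ℕ) := by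
              intro p hp
              have hpp := hQ p (hTQ hp)
              have h5p := h5 p hp
              have h2le := hpp.two_le
              interval_cases p
              · exact Finset.mem_insert_self _ _
              · exact Finset.mem_insert_of_mem (Finset.mem_singleton_self _)
              · exact absurd hpp (by norm_num)
            rcases subset_pair hT23 with rfl | rfl | rfl | rfl
            · exact absurd rfl hTne
            · exact absurd rfl e2
            · exact absurd rfl e3
            · norm_num
        have : (3 : ℕ) / ∏ q ∈ T, q = 0 := Nat.div_eq_of_lt hbig
        rw [this, if_neg e2, if_neg e3]
        ring
  rw [Finset.sum_congr rfl hpt] at h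
  rw [Finset.sum_add_distrib, Finset.sum_add_distrib] at h
  have hmem2 : ({2} : Finset ℕ) ∈ Q.powerset.erase ∅ := by
    refine Finset.mem_erase.mpr ⟨Finset.singleton_ne_empty 2, ?_⟩
    exact Finset.mem_powerset.mpr (Finset.singleton_subset_iff.mpr h2)
  have hmem3 : ({3} : Finset ℕ) ∈ Q.powerset.erase ∅ := by
    refine Finset.mem_erase.mpr ⟨Finset.singleton_ne_empty 3, ?_⟩
    exact Finset.mem_powerset.mpr (Finset.singleton_subset_iff.mpr h3)
  rw [Finset.sum_ite_eq' _ ({2} : Finset ℕ) (fun _ => t 1 - t 0), if_pos hmem2] at h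
  rw [Finset.sum_ite_eq' _ ({3} : Finset ℕ) (fun _ => t 1 - t 0), if_pos hmem3] at h
  -- signed sum equals one
  have hsign : ∑ T ∈ Q.powerset.erase ∅, (-1:ℝ)^(T.card+1) = 1 := by
    have hz : ∑ T ∈ Q.powerset, (-1:ℝ)^T.card = 0 := by
      have := Finset.sum_powerset_neg_one_pow_card_of_nonempty (x := Q) ⟨2, h2⟩
      exact_mod_cast congrArg (Int.cast : ℤ → ℝ) this
    have hsplit : ∑ T ∈ Q.powerset.erase ∅, (-1:ℝ)^T.card + (-1:ℝ)^(∅ : Finset ℕ).card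
        = ∑ T ∈ Q.powerset, (-1:ℝ)^T.card :=
      Finset.sum_erase_add _ _ (Finset.empty_mem_powerset _)
    have h1 : ∑ T ∈ Q.powerset.erase ∅, (-1:ℝ)^T.card = -1 := by
      simp only [Finset.card_empty, pow_zero] at hsplit
      linarith [hsplit.trans hz]
    calc ∑ T ∈ Q.powerset.erase ∅, (-1:ℝ)^(T.card+1)
        = ∑ T ∈ Q.powerset.erase ∅, -((-1:ℝ)^T.card) := by
          refine Finset.sum_congr rfl fun T _ => by ring
      _ = 1 := by rw [Finset.sum_neg_distrib, h1]; norm_num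
  rw [← Finset.sum_mul, hsign] at h
  rw [h]; ring

lemma main_ind (Q : Finset ℕ) (hQ : ∀ q ∈ Q, Nat.Prime q) (d : ℕ) (hd : 2 ≤ d)
    (t : ℕ → ℝ)
    (hr : ∀ m : ℕ, 3 ≤ m → t m = d * ∑ T ∈ Q.powerset.erase ∅,
      (-1:ℝ)^(T.card+1) * t (m / ∏ q ∈ T, q))
    (h10 : 0 ≤ Dl t 1) (h21 : 0 ≤ Dl t 2) (h32 : 0 ≤ Dl t 3) (h0 : 0 < t 0) :
    ∀ n : ℕ, 4 ≤ n → ∀ S ⊆ Q.filter (· ∣ n), 0 ≤ Mm t n S := by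
  classical
  have hd2 : (2:ℝ) ≤ (d:ℝ) := by exact_mod_cast hd
  have hd0 : (0:ℝ) < (d:ℝ) := by linarith
  have hd1 : (1:ℝ) ≤ (d:ℝ) := by linarith
  intro n
  induction n using Nat.strong_induction_on with
  | _ n IH =>
  intro hn S hS
  set K := Q.filter (· ∣ n) with hKdef
  have hL4 : (d:ℝ) * (Dl t n - Mm t n K) = Dl t n := drec Q hQ d t hr n hn
  have hnpos : 0 < n := by omega
  by_cases hsp : ∀ p ∈ K, 4 ≤ n / p
  · -- general case
    have step : ∀ p ∈ K, ∀ S', S' ⊆ K → p ∉ S' → 0 ≤ Mm t (n/p) S' := by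
      intro p hpK S' hS' hpS'
      obtain ⟨hpQ, hpn⟩ := Finset.mem_filter.mp hpK
      have hpp := hQ p hpQ
      have hlt : n / p < n := Nat.div_lt_self hnpos hpp.one_lt
      refine IH (n/p) hlt (hsp p hpK) S' ?_
      intro x hxS'
      obtain ⟨hxQ, hxn⟩ := Finset.mem_filter.mp (hS' hxS')
      refine Finset.mem_filter.mpr ⟨hxQ, ?_⟩
      have hxp : x ≠ p := fun h => hpS' (h ▸ hxS')
      have hco : Nat.Coprime p x := (Nat.coprime_primes hpp (hQ x hxQ)).mpr (Ne.symm hxp)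
      have hmul : p * x ∣ n := Nat.Coprime.mul_dvd_of_dvd_of_dvd hco hpn hxn
      obtain ⟨k, hk⟩ := hmul
      have : n / p = x * k := by rw [hk, mul_assoc, Nat.mul_div_cancel_left _ hpp.pos]
      exact this ▸ dvd_mul_right x k
    have tel : ∀ j : ℕ, ∀ S', S' ⊆ K → (K \ S').card ≤ j → Mm t n K ≤ Mm t n S' := by
      intro j
      induction j with
      | zero =>
        intro S' hS' hc
        have h1 : K \ S' = ∅ := Finset.card_eq_zero.mp (Nat.le_zero.mp hc)
        rw [Finset.Subset.antisymm hS' (Finset.sdiff_eq_empty_iff_subset.mp h1)]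
      | succ j ihj =>
        intro S' hS' hc
        rcases Finset.eq_empty_or_nonempty (K \ S') with he | ⟨p, hp⟩
        · rw [Finset.Subset.antisymm hS' (Finset.sdiff_eq_empty_iff_subset.mp he)]
        · obtain ⟨hpK, hpS'⟩ := Finset.mem_sdiff.mp hp
          have hins := Mm_insert t n (p := p) (S := S') hpS'
          have h1 : Mm t n K ≤ Mm t n (insert p S') := by
            refine ihj _ (Finset.insert_subset hpK hS') ?_
            have he2 : K \ insert p S' = (K \ S').erase p := by
              ext x
              simp only [Finset.mem_sdiff, Finset.mem_erase, Finset.mem_insert]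
              tauto
            rw [he2, Finset.card_erase_of_mem hp]
            omega
          have h2 : 0 ≤ Mm t (n/p) S' := step p hpK S' hS' hpS'
          linarith
    have hDK : Mm t n K ≤ Dl t n := by
      have h := tel K.card ∅ (Finset.empty_subset _) (by simp)
      rwa [Mm_empty] at h
    have hDn : 0 ≤ Dl t n := by
      rw [← hL4]
      exact mul_nonneg hd0.le (by linarith)
    have hMK : 0 ≤ Mm t n K := by nlinarith [hL4, hDn, hd1, hd0]
    have := tel K.card S hS (Finset.card_le_card (Finset.sdiff_subset))
    linarith
  · -- special case
    push_neg at hsp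
    obtain ⟨q, hqK, hq4⟩ := hsp
    obtain ⟨hqQ, hqn⟩ := Finset.mem_filter.mp hqK
    have hqp := hQ q hqQ
    set r := n / q with hrdef
    have hnqr : q * r = n := Nat.mul_div_cancel' hqn
    have hr1 : 1 ≤ r := (Nat.one_le_div_iff hqp.pos).mpr (Nat.le_of_dvd hnpos hqn)
    have hr3 : r ≤ 3 := by omega
    have hbase : 0 ≤ Dl t r := by
      have : r = 1 ∨ r = 2 ∨ r = 3 := by omega
      rcases this with h | h | h <;> rw [h]
      exacts [h10, h21, h32]
    have hMq : Mm t n {q} = Dl t n - Dl t r := by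
      have h := Mm_insert t n (p := q) (S := ∅) (Finset.notMem_empty q)
      rwa [Mm_empty, Mm_empty, ← hrdef] at h
    by_cases hK1 : K = {q}
    · have hDn : Dl t n = d * Dl t r := by
        rw [hK1, hMq] at hL4
        linarith
      rw [hK1] at hS
      rcases Finset.subset_singleton_iff.mp hS with rfl | rfl
      · rw [Mm_empty, hDn]
        exact mul_nonneg hd0.le hbase
      · rw [hMq, hDn]
        nlinarith [hbase, hd1]
    · -- K has a second element
      obtain ⟨u, huK, huq⟩ : ∃ u ∈ K, u ≠ q := by
        by_contra h
        push_neg at h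
        exact hK1 (Finset.Subset.antisymm (fun x hx => Finset.mem_singleton.mpr (h x hx))
          (Finset.singleton_subset_iff.mpr hqK))
      obtain ⟨huQ, hun⟩ := Finset.mem_filter.mp huK
      have hup := hQ u huQ
      have hur : u ∣ r := by
        have hdv : u ∣ q * r := hnqr ▸ hun
        rcases (Nat.Prime.dvd_mul hup).mp hdv with h | h
        · exact absurd ((Nat.prime_dvd_prime_iff_eq hup hqp).mp h) huq
        · exact h
      have hu_eq_r : u = r := by
        have hle := Nat.le_of_dvd (by omega) hur
        have h2le := hup.two_le
        interval_cases r
        · omega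
        · omega
        · interval_cases u
          · exact absurd hur (by norm_num)
          · rfl
      subst hu_eq_r
      have hrq : r ≠ q := huq
      have hrp : Nat.Prime r := hup
      -- K = {r, q}
      have hKpair : K = {r, q} := by
        apply Finset.Subset.antisymm
        · intro p hpK
          obtain ⟨hpQ, hpn⟩ := Finset.mem_filter.mp hpK
          have hpp := hQ p hpQ
          have hdv : p ∣ q * r := by rw [hnqr]; exact hpn
          rcases (Nat.Prime.dvd_mul hpp).mp hdv with h | h
          · exact Finset.mem_insert.mpr (Or.inr (Finset.mem_singleton.mpr
              ((Nat.prime_dvd_prime_iff_eq hpp hqp).mp h)))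
          · exact Finset.mem_insert.mpr (Or.inl ((Nat.prime_dvd_prime_iff_eq hpp hrp).mp h))
        · intro p hp
          rcases Finset.mem_insert.mp hp with rfl | hp'
          · exact huK
          · rw [Finset.mem_singleton.mp hp']
            exact hqK
      have hnur : n / r = q := by
        rw [← hnqr, Nat.mul_div_cancel _ hrp.pos]
      have hMr : Mm t n {r} = Dl t n - Dl t q := by
        have h := Mm_insert t n (p := r) (S := ∅) (Finset.notMem_empty r)
        rwa [Mm_empty, Mm_empty, hnur] at h
      have hMuq_q : Mm t q {q} = Dl t q - Dl t 1 := by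
        have h := Mm_insert t q (p := q) (S := ∅) (Finset.notMem_empty q)
        rwa [Mm_empty, Mm_empty, Nat.div_self hqp.pos] at h
      have hMrq : Mm t n {r, q} = Dl t n - Dl t q - Dl t r + Dl t 1 := by
        have h1 := Mm_insert t n (p := r) (S := {q}) (by simp [hrq])
        rw [hMq, hnur, hMuq_q] at h1
        rw [h1]; ring
      have hL4' : (d:ℝ) * (Dl t q + Dl t r - Dl t 1) = Dl t n := by
        rw [hKpair, hMrq] at hL4
        rw [← hL4]; ring
      rw [hKpair] at hS
      have hdm1 : (0:ℝ) ≤ (d:ℝ) - 1 := by linarith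
      have hdm2 : (0:ℝ) ≤ (d:ℝ) - 2 := by linarith
      by_cases hq5 : 5 ≤ q
      · -- far prime: Dl q = d * Dl 1
        have hKq : Q.filter (· ∣ q) = {q} := by
          apply Finset.Subset.antisymm
          · intro p hp
            obtain ⟨hpQ, hpq⟩ := Finset.mem_filter.mp hp
            exact Finset.mem_singleton.mpr ((Nat.prime_dvd_prime_iff_eq (hQ p hpQ) hqp).mp hpq)
          · intro p hp
            rw [Finset.mem_singleton.mp hp]
            exact Finset.mem_filter.mpr ⟨hqQ, dvd_rfl⟩
        have hL4q := drec Q hQ d t hr q (by omega)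
        rw [hKq, hMuq_q] at hL4q
        have hDq : Dl t q = d * Dl t 1 := by linarith
        have hDn : Dl t n = (d:ℝ) * ((d:ℝ) * Dl t 1 + Dl t r - Dl t 1) := by
          rw [← hL4', hDq]
        rcases subset_pair hS with rfl | rfl | rfl | rfl
        · rw [Mm_empty, hDn]
          linarith [mul_nonneg hd0.le (add_nonneg (mul_nonneg hdm1 h10) hbase)]
        · rw [hMr, hDn, hDq]
          linarith [mul_nonneg hd0.le (add_nonneg (mul_nonneg hdm2 h10) hbase)]
        · rw [hMq, hDn]
          linarith [mul_nonneg (mul_nonneg hd0.le hdm1) h10, mul_nonneg hdm1 hbase]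
        · rw [hMrq, hDn, hDq]
          linarith [mul_nonneg (mul_nonneg hdm1 hdm1) h10, mul_nonneg hdm1 hbase]
      · -- n = 6 case
        have hq23 : q = 2 ∨ q = 3 := by
          have := hqp.two_le
          interval_cases q
          · left; rfl
          · right; rfl
          · exact absurd hqp (by norm_num)
        have hu23 : r = 2 ∨ r = 3 := by
          have := hrp.two_le
          interval_cases r
          · left; rfl
          · right; rfl
        have h2Q : 2 ∈ Q := by
          rcases hq23 with h | h
          · exact h ▸ hqQ
          · have h' : r = 2 := by omega
            exact h' ▸ huQ
        have h3Q : 3 ∈ Q := by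
          rcases hq23 with h | h
          · have h' : r = 3 := by omega
            exact h' ▸ huQ
          · exact h ▸ hqQ
        have hEE := eqE Q hQ d t hr h2Q h3Q
        have hqu : Dl t q + Dl t r = Dl t 2 + Dl t 3 := by
          rcases hq23 with h | h
          · have h' : r = 3 := by omega
            rw [h, h']
          · have h' : r = 2 := by omega
            rw [h, h', add_comm]
        have e1 : Dl t 1 = t 1 - t 0 := by norm_num [Dl]
        have e2 : Dl t 2 = t 2 - t 1 := by norm_num [Dl]
        have e3 : Dl t 3 = t 3 - t 2 := by norm_num [Dl]
        have hX : (0:ℝ) ≤ t 0 + 2*(t 1 - t 0) := by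
          rw [e1] at h10; linarith
        have hΔ1 : 0 ≤ t 1 - t 0 := by rw [e1] at h10; linarith
        have hsum : Dl t 2 + Dl t 3 - Dl t 1 = ((d:ℝ)-1) * (t 0 + 2*(t 1 - t 0)) := by
          rw [e1, e2, e3, hEE]; ring
        have hDn : Dl t n = (d:ℝ) * (Dl t 2 + Dl t 3 - Dl t 1) := by
          rw [← hL4', hqu]
        have hbq : 0 ≤ Dl t q := by
          rcases hq23 with h | h
          · rw [h]; exact h21
          · rw [h]; exact h32
        have hqle : Dl t q ≤ ((d:ℝ)-1) * (t 0 + 2*(t 1 - t 0)) + (t 1 - t 0) := by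
          linarith [hqu, hbase, hsum, e1]
        have hrle : Dl t r ≤ ((d:ℝ)-1) * (t 0 + 2*(t 1 - t 0)) + (t 1 - t 0) := by
          linarith [hqu, hbq, hsum, e1]
        have hkey : ∀ x : ℝ, x ≤ ((d:ℝ)-1) * (t 0 + 2*(t 1 - t 0)) + (t 1 - t 0) →
            0 ≤ (d:ℝ) * (Dl t 2 + Dl t 3 - Dl t 1) - x := by
          intro x hx
          rw [hsum]
          nlinarith [mul_nonneg (mul_nonneg hd0.le hdm2) hX, hX, hΔ1, h0.le]
        rcases subset_pair hS with rfl | rfl | rfl | rfl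
        · rw [Mm_empty, hDn, hsum]
          exact mul_nonneg hd0.le (mul_nonneg hdm1 hX)
        · rw [hMr, hDn]
          exact hkey _ hqle
        · rw [hMq, hDn]
          exact hkey _ hrle
        · rw [hMrq, hDn]
          have hfin : (d:ℝ) * (Dl t 2 + Dl t 3 - Dl t 1) - Dl t q - Dl t r + Dl t 1
              = ((d:ℝ)-1) * (((d:ℝ)-1) * (t 0 + 2*(t 1 - t 0))) := by
            have hqu2 := hqu
            rw [e2, e3, hEE] at hqu2
            rw [e1, e2, e3, hEE]
            linear_combination -hqu2
          rw [hfin]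
          exact mul_nonneg hdm1 (mul_nonneg hdm1 hX)


/-- **Lemma 3.** If `s(x) = s(⌊x⌋)` for `x ≥ 0`, `s(x) = d·D_Q s(x)`
for `x ≥ 3`, and `s(3) ≥ s(2) ≥ s(1) ≥ s(0) > 0`, then `s` is non-decreasing on
`(0,∞)`. -/
theorem s_monotone (Q : Finset ℕ) (hQ : ∀ q ∈ Q, Nat.Prime q)
    (d : ℕ) (hd : 2 ≤ d) (s : ℝ → ℝ)
    (hfloor : ∀ x : ℝ, 0 ≤ x → s x = s (⌊x⌋ : ℤ))
    (hrec : ∀ x : ℝ, 3 ≤ x → s x = d * DOp Q s x)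
    (h32 : s 2 ≤ s 3) (h21 : s 1 ≤ s 2) (h10 : s 0 ≤ s 1) (h0 : 0 < s 0) :
    MonotoneOn s (Set.Ioi 0) := by
  classical
  set t : ℕ → ℝ := fun n => s n with htdef
  have hr : ∀ m : ℕ, 3 ≤ m → t m = d * ∑ T ∈ Q.powerset.erase ∅,
      (-1:ℝ)^(T.card+1) * t (m / ∏ q ∈ T, q) :=
    fun m hm => natrec Q hQ d s hfloor hrec m hm
  have h10' : 0 ≤ Dl t 1 := by
    show (0:ℝ) ≤ s ((1:ℕ):ℝ) - s (((1-1 : ℕ)):ℝ)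
    norm_num
    linarith
  have h21' : 0 ≤ Dl t 2 := by
    show (0:ℝ) ≤ s ((2:ℕ):ℝ) - s (((2-1 : ℕ)):ℝ)
    norm_num
    linarith
  have h32' : 0 ≤ Dl t 3 := by
    show (0:ℝ) ≤ s ((3:ℕ):ℝ) - s (((3-1 : ℕ)):ℝ)
    norm_num
    linarith
  have h0' : 0 < t 0 := by
    show (0:ℝ) < s ((0:ℕ):ℝ)
    norm_num
    exact h0
  have main := main_ind Q hQ d hd t hr h10' h21' h32' h0'
  have hmono : Monotone t := by
    apply monotone_nat_of_le_succ
    intro n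
    match n with
    | 0 => show s ((0:ℕ):ℝ) ≤ s ((1:ℕ):ℝ); norm_num; linarith
    | 1 => show s ((1:ℕ):ℝ) ≤ s ((2:ℕ):ℝ); norm_num; linarith
    | 2 => show s ((2:ℕ):ℝ) ≤ s ((3:ℕ):ℝ); norm_num; linarith
    | (k+3) =>
      have h := main (k+4) (by omega) ∅ (Finset.empty_subset _)
      rw [Mm_empty] at h
      have he : Dl t (k+4) = t (k+4) - t (k+3) := by norm_num [Dl]
      rw [he] at h
      linarith
  intro x hx y hy hxy
  have hx0 : (0:ℝ) ≤ x := le_of_lt hx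
  have hy0 : (0:ℝ) ≤ y := le_of_lt hy
  have key : ∀ z : ℝ, 0 ≤ z → s z = t ⌊z⌋₊ := by
    intro z hz
    rw [hfloor z hz]
    show s _ = s _
    congr 1
    rw [← Int.toNat_of_nonneg (Int.floor_nonneg.mpr hz), Int.floor_toNat]
    norm_cast
  rw [key x hx0, key y hy0]
  exact hmono (Nat.floor_mono hxy)
end

section
/- Let s : [0,∞) → ℝ satisfy s(x) = s(⌊x⌋) for all x ≥ 0 and s(x) = d·D_Q s(x) for all x ≥ 3. For an integer n > 3, let Q(n) be the set of elements of Q that divide n, and set t(x) = s(x) − s(x−1). Then t(n) = d·D_{Q(n)} t(n). In particular, if no element of Q divides n, then t(n) = 0. -/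
/-- **Proposition 1.** Let `s(x) = s(⌊x⌋)` for `x ≥ 0` and
`s(x) = d·D_Q s(x)` for `x ≥ 3`. For an integer `n > 3`, with `Q(n)` the set of
elements of `Q` dividing `n` and `t(x) = s(x) - s(x-1)`, one has
`t(n) = d·D_{Q(n)} t(n)`; in particular, if no element of `Q` divides `n`, then
`t(n) = 0`. -/
theorem t_recurrence (Q : Finset ℕ) (hQ : ∀ q ∈ Q, Nat.Prime q)
    (d : ℕ) (hd : 2 ≤ d) (s : ℝ → ℝ)
    (hfloor : ∀ x : ℝ, 0 ≤ x → s x = s (⌊x⌋ : ℤ))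
    (hrec : ∀ x : ℝ, 3 ≤ x → s x = d * DOp Q s x)
    (n : ℕ) (hn : 3 < n) :
    s n - s ((n : ℝ) - 1) =
      d * DOp (Q.filter (fun q => q ∣ n)) (fun x => s x - s (x - 1)) n ∧
    ((∀ q ∈ Q, ¬ q ∣ n) → s n - s ((n : ℝ) - 1) = 0) := by
  have hn0 : 0 < n := by omega
  -- helper: s of a natural quotient
  have hstep : ∀ m P : ℕ, 0 < P → s ((m : ℝ) / (P : ℝ)) = s ((m / P : ℕ) : ℝ) := by
    intro m P hP
    have h0 : (0:ℝ) ≤ (m:ℝ)/(P:ℝ) := by positivity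
    rw [hfloor _ h0, ← Int.natCast_floor_eq_floor h0, Nat.floor_div_eq_div, Int.cast_natCast]
  have key : ∀ T ∈ Q.powerset.erase ∅,
      (0 < ∏ q ∈ T, q) ∧ 2 ≤ ∏ q ∈ T, q := by
    intro T hT
    rw [Finset.mem_erase, Finset.mem_powerset] at hT
    have hne : T.Nonempty := Finset.nonempty_iff_ne_empty.2 hT.1
    have hpos : 0 < ∏ q ∈ T, q :=
      Finset.prod_pos (fun q hq => (hQ q (hT.2 hq)).pos)
    obtain ⟨q, hq⟩ := hne
    have h2 : 2 ≤ ∏ q ∈ T, q :=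
      le_trans (hQ q (hT.2 hq)).two_le (Nat.le_of_dvd hpos (Finset.dvd_prod_of_mem _ hq))
    exact ⟨hpos, h2⟩
  -- main computation
  have hsub : (Q.filter (fun q => q ∣ n)).powerset.erase ∅ ⊆ Q.powerset.erase ∅ := by
    intro T hT
    rw [Finset.mem_erase, Finset.mem_powerset] at hT ⊢
    exact ⟨hT.1, hT.2.trans (Finset.filter_subset _ _)⟩
  have h1 : s n - s ((n : ℝ) - 1) =
      d * DOp (Q.filter (fun q => q ∣ n)) (fun x => s x - s (x - 1)) n := by
    have h3 : (3:ℝ) ≤ (n:ℝ) := by exact_mod_cast hn.le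
    have h3' : (3:ℝ) ≤ (n:ℝ) - 1 := by
      have : (4:ℝ) ≤ (n:ℝ) := by exact_mod_cast hn
      linarith
    rw [hrec n h3, hrec _ h3', ← mul_sub]
    congr 1
    unfold DOp
    rw [← Finset.sum_sub_distrib]
    rw [← Finset.sum_subset hsub ?h0]
    case h0 =>
      -- terms outside vanish
      intro T hTQ hTn
      have hP := key T hTQ
      rw [Finset.mem_erase, Finset.mem_powerset] at hTQ
      have hndvd : ¬ (∏ q ∈ T, q) ∣ n := by
        intro hdvd
        apply hTn
        rw [Finset.mem_erase, Finset.mem_powerset]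
        refine ⟨hTQ.1, fun q hq => Finset.mem_filter.2 ⟨hTQ.2 hq, ?_⟩⟩
        exact (Finset.dvd_prod_of_mem _ hq).trans hdvd
      have hcast : (∏ q ∈ T, (q:ℝ)) = ((∏ q ∈ T, q : ℕ) : ℝ) := by push_cast; ring
      have e1 : s ((n:ℝ) / ∏ q ∈ T, (q:ℝ)) = s ((n / ∏ q ∈ T, q : ℕ) : ℝ) := by
        rw [hcast]; exact hstep n _ hP.1
      have e2 : s (((n:ℝ) - 1) / ∏ q ∈ T, (q:ℝ)) = s (((n-1) / ∏ q ∈ T, q : ℕ) : ℝ) := by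
        rw [hcast]
        have : ((n:ℝ) - 1) = ((n - 1 : ℕ) : ℝ) := by
          have : (1:ℕ) ≤ n := by omega
          push_cast [this]; ring
        rw [this]; exact hstep (n-1) _ hP.1
      have ediv : (n-1) / (∏ q ∈ T, q) = n / (∏ q ∈ T, q) := by
        have := Nat.succ_div (a := n-1) (b := ∏ q ∈ T, q)
        have hn1 : n - 1 + 1 = n := by omega
        rw [hn1] at this
        simp [hndvd] at this
        omega
      rw [e1, e2, ediv]; ring
    · -- on the filtered set, terms agree with t
      refine Finset.sum_congr rfl ?_
      intro T hT
      have hTQ := hsub hT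
      have hP := key T hTQ
      rw [Finset.mem_erase, Finset.mem_powerset] at hT
      have hdvd : (∏ q ∈ T, q) ∣ n := by
        refine Finset.prod_primes_dvd n (fun p hp => ?_) (fun p hp => ?_)
        · exact (hQ p ((Finset.mem_filter.1 (hT.2 hp)).1)).prime
        · exact (Finset.mem_filter.1 (hT.2 hp)).2
      set P := ∏ q ∈ T, q with hPdef
      have hcast : (∏ q ∈ T, (q:ℝ)) = (P : ℝ) := by rw [hPdef]; push_cast; ring
      have hPne : (P:ℝ) ≠ 0 := Nat.cast_ne_zero.2 hP.1.ne'
      have hm1 : 1 ≤ n / P := Nat.one_le_div_iff hP.1 |>.2 (Nat.le_of_dvd hn0 hdvd)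
      have e1 : (n:ℝ) / (P:ℝ) = ((n / P : ℕ) : ℝ) := by
        rw [Nat.cast_div hdvd hPne]
      have e2 : s (((n:ℝ) - 1) / (P:ℝ)) = s ((n / P : ℕ) - 1 : ℝ) := by
        have h1' : ((n:ℝ) - 1) = ((n - 1 : ℕ) : ℝ) := by
          have : (1:ℕ) ≤ n := by omega
          push_cast [this]; ring
        rw [h1', hstep (n-1) P hP.1]
        have ediv : (n-1) / P = n / P - 1 := by
          have := Nat.succ_div (a := n-1) (b := P)
          have hn1 : n - 1 + 1 = n := by omega
          rw [hn1] at this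
          simp [hdvd] at this
          omega
        rw [ediv]
        congr 1
        push_cast [hm1]
        ring
      simp only [hcast, e2, e1]; ring
  refine ⟨h1, fun hnone => ?_⟩
  have hfilt : Q.filter (fun q => q ∣ n) = ∅ := by
    rw [Finset.filter_eq_empty_iff]; exact hnone
  rw [h1, hfilt]
  simp [DOp]
end

section
/- Let s : [0,∞) → ℝ satisfy s(x) = s(⌊x⌋) for all x ≥ 0 and s(x) = d·D_Q s(x) for all x ≥ 3, where Q is a finite set of primes and d ≥ 2. Suppose s(x) > 0 for all x ≥ 0 and s(0) < s(1) < s(2). Then there exists a positive constant C such that s(x) ≤ C·x^{α} for all x > 1, where α = α(Q,d). -/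
open Finset ArithmeticFunction

noncomputable section SUB

namespace SUB

abbrev AF := ArithmeticFunction ℝ

/-- nonnegative arithmetic function -/
def NN (f : AF) : Prop := ∀ n, 0 ≤ f n

/-- constant (at 1) arithmetic function -/
def cAF (r : ℝ) : AF := ⟨fun n => if n = 1 then r else 0, by simp⟩

@[simp] lemma cAF_apply (r : ℝ) (n : ℕ) : cAF r n = if n = 1 then r else 0 := rfl

lemma cAF_one : cAF 1 = (1 : AF) := by
  ext n; simp [ArithmeticFunction.one_apply]

lemma cAF_mul_apply (r : ℝ) (f : AF) (n : ℕ) : (cAF r * f) n = r * f n := by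
  rcases eq_or_ne n 0 with rfl | hn
  · simp [ArithmeticFunction.mul_apply]
  · rw [ArithmeticFunction.mul_apply]
    rw [Finset.sum_eq_single (1, n)]
    · simp
    · rintro ⟨a, b⟩ hab hne
      rw [Nat.mem_divisorsAntidiagonal] at hab
      rcases eq_or_ne a 1 with rfl | ha
      · exfalso; apply hne; simp [← hab.1]
      · simp [cAF_apply, ha]
    · intro h
      exfalso; apply h
      rw [Nat.mem_divisorsAntidiagonal]; simp [hn]

/-- point mass at k -/
def pt (k : ℕ) : AF := ⟨fun n => if n = k ∧ k ≠ 0 then 1 else 0, by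
  by_cases h : k = 0 <;> simp [h] <;> omega⟩

lemma pt_apply {k : ℕ} (hk : k ≠ 0) (n : ℕ) : pt k n = if n = k then 1 else 0 := by
  simp [pt, hk]

lemma pt_one : pt 1 = (1 : AF) := by
  ext n; rw [pt_apply one_ne_zero, ArithmeticFunction.one_apply]

lemma NN_pt (k : ℕ) : NN (pt k) := by
  intro n; show (0:ℝ) ≤ if n = k ∧ k ≠ 0 then 1 else 0
  split <;> norm_num

lemma pt_mul_apply {k : ℕ} (hk : k ≠ 0) (f : AF) (n : ℕ) :
    (pt k * f) n = if k ∣ n then f (n / k) else 0 := by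
  rcases eq_or_ne n 0 with rfl | hn
  · simp [ArithmeticFunction.mul_apply]
  rw [ArithmeticFunction.mul_apply]
  by_cases hd : k ∣ n
  · rw [Finset.sum_eq_single (k, n / k)]
    · simp [pt_apply hk, hd]
    · rintro ⟨a, b⟩ hab hne
      rw [Nat.mem_divisorsAntidiagonal] at hab
      rcases eq_or_ne a k with rfl | ha
      · exfalso; apply hne
        have hb : b = n / a := by
          have h1 := hab.1
          simp only at h1
          subst h1
          rw [Nat.mul_div_cancel_left b (Nat.pos_of_ne_zero hk)]
        rw [hb]
      · simp [pt_apply hk, ha]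
    · intro h
      exfalso; apply h
      rw [Nat.mem_divisorsAntidiagonal]
      exact ⟨Nat.mul_div_cancel' hd, hn⟩
  · rw [if_neg hd]
    apply Finset.sum_eq_zero
    rintro ⟨a, b⟩ hab
    rw [Nat.mem_divisorsAntidiagonal] at hab
    have ha : a ≠ k := by
      rintro rfl
      exact hd ⟨b, hab.1.symm⟩
    simp [pt_apply hk, ha]

lemma pt_mul_pt {a b : ℕ} (ha : a ≠ 0) (hb : b ≠ 0) : pt a * pt b = pt (a * b) := by
  ext n
  rw [pt_mul_apply ha, pt_apply (Nat.mul_ne_zero ha hb)]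
  by_cases hd : a ∣ n
  · rw [if_pos hd, pt_apply hb]
    obtain ⟨c, rfl⟩ := hd
    rw [Nat.mul_div_cancel_left c (Nat.pos_of_ne_zero ha)]
    by_cases hc : c = b
    · simp [hc]
    · rw [if_neg hc, if_neg]
      intro h
      exact hc (Nat.eq_of_mul_eq_mul_left (Nat.pos_of_ne_zero ha) h)
  · rw [if_neg hd, if_neg]
    rintro rfl
    exact hd ⟨b, rfl⟩


lemma NN_one : NN (1 : AF) := by
  intro n; rw [ArithmeticFunction.one_apply]; split <;> norm_num

lemma NN_cAF {r : ℝ} (hr : 0 ≤ r) : NN (cAF r) := by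
  intro n; rw [cAF_apply]; split <;> simp [hr]

lemma NN_add {f g : AF} (hf : NN f) (hg : NN g) : NN (f + g) := by
  intro n; rw [ArithmeticFunction.add_apply]
  exact add_nonneg (hf n) (hg n)

lemma NN_mul {f g : AF} (hf : NN f) (hg : NN g) : NN (f * g) := by
  intro n; rw [ArithmeticFunction.mul_apply]
  exact Finset.sum_nonneg fun p _ => mul_nonneg (hf p.1) (hg p.2)

lemma NN_pow {f : AF} (hf : NN f) (j : ℕ) : NN (f ^ j) := by
  induction j with
  | zero => simpa using NN_one
  | succ j ih => rw [pow_succ]; exact NN_mul ih hf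

/-- powers of a function vanishing at 1 vanish below 2^j -/
lemma pow_apply_eq_zero {η : AF} (hη : η 1 = 0) :
    ∀ j c, c < 2 ^ j → (η ^ j) c = 0 := by
  intro j
  induction j with
  | zero => intro c hc; interval_cases c; simp
  | succ j ih =>
    intro c hc
    rw [pow_succ, mul_comm, ArithmeticFunction.mul_apply]
    apply Finset.sum_eq_zero
    rintro ⟨a, b⟩ hab
    rw [Nat.mem_divisorsAntidiagonal] at hab
    rcases eq_or_ne a 1 with rfl | ha
    · simp [hη]
    · have hb : b < 2 ^ j := by
        have h1 := hab.1
        simp only at h1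
        have ha2 : 2 ≤ a := by
          rcases Nat.eq_zero_or_pos a with h0 | h1p
          · subst h0; simp at h1; exact absurd h1.symm hab.2
          · omega
        have : 2 * b ≤ a * b := Nat.mul_le_mul_right b ha2
        rw [h1] at this
        rw [pow_succ] at hc
        omega
      simp [ih b hb]

lemma pow_apply_eq_zero' {η : AF} (hη : η 1 = 0) {j c : ℕ} (h : c < j) : (η ^ j) c = 0 := by
  apply pow_apply_eq_zero hη
  calc c < j := h
  _ ≤ 2 ^ j := Nat.le_of_lt Nat.lt_two_pow_self

/-- geometric series of η -/
def Vfun (η : AF) : AF := ⟨fun m => ∑ j ∈ range (m + 1), (η ^ j) m, by simp⟩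

lemma Vfun_apply (η : AF) (m : ℕ) : Vfun η m = ∑ j ∈ range (m + 1), (η ^ j) m := rfl

lemma NN_Vfun {η : AF} (hη : NN η) : NN (Vfun η) := by
  intro m; rw [Vfun_apply]
  exact Finset.sum_nonneg fun j _ => NN_pow hη j m

lemma Vfun_eq {η : AF} (hη : η 1 = 0) {m J : ℕ} (h : m ≤ J) :
    Vfun η m = ∑ j ∈ range (J + 1), (η ^ j) m := by
  rw [Vfun_apply]
  apply Finset.sum_subset
  · exact Finset.range_subset_range.2 (by omega)
  · intro j _ hj
    rw [Finset.mem_range, not_lt] at hj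
    exact pow_apply_eq_zero' hη (by omega)

lemma Vfun_one (η : AF) (hη : η 1 = 0) : Vfun η 1 = 1 := by
  rw [Vfun_apply]
  rw [Finset.sum_range_succ, Finset.sum_range_one]
  simp [hη]

lemma geom_spec {η : AF} (hη : η 1 = 0) : (1 - η) * Vfun η = 1 := by
  have key : ∀ m, (η * Vfun η) m = Vfun η m - (1 : AF) m := by
    intro m
    rw [ArithmeticFunction.mul_apply]
    have step1 : ∀ p ∈ m.divisorsAntidiagonal,
        η p.1 * Vfun η p.2 = η p.1 * ∑ j ∈ range (m + 1), (η ^ j) p.2 := by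
      rintro ⟨a, b⟩ hab
      rw [Nat.mem_divisorsAntidiagonal] at hab
      have hb : b ≤ m := by
        have h1 := hab.1
        simp only at h1
        have ha : 1 ≤ a := by
          rcases Nat.eq_zero_or_pos a with h0 | h1p
          · subst h0; simp at h1; exact absurd h1.symm hab.2
          · exact h1p
        calc b ≤ a * b := Nat.le_mul_of_pos_left b ha
        _ = m := h1
      simp only
      rw [Vfun_eq hη hb]
    rw [Finset.sum_congr rfl step1]
    have swap : ∑ p ∈ m.divisorsAntidiagonal, η p.1 * ∑ j ∈ range (m+1), (η ^ j) p.2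
        = ∑ j ∈ range (m+1), (η ^ (j+1)) m := by
      calc ∑ p ∈ m.divisorsAntidiagonal, η p.1 * ∑ j ∈ range (m+1), (η ^ j) p.2
          = ∑ p ∈ m.divisorsAntidiagonal, ∑ j ∈ range (m+1), η p.1 * (η ^ j) p.2 := by
            simp_rw [Finset.mul_sum]
        _ = ∑ j ∈ range (m+1), ∑ p ∈ m.divisorsAntidiagonal, η p.1 * (η ^ j) p.2 :=
            Finset.sum_comm
        _ = ∑ j ∈ range (m+1), (η * η ^ j) m := by
            simp [ArithmeticFunction.mul_apply]
        _ = ∑ j ∈ range (m+1), (η ^ (j+1)) m := by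
            simp_rw [pow_succ, mul_comm]
    rw [swap]
    have expand : ∑ j ∈ range (m+2), (η ^ j) m
        = ∑ j ∈ range (m+1), (η ^ (j+1)) m + (η ^ 0) m := Finset.sum_range_succ' _ _
    have last : (η ^ (m+1)) m = 0 := pow_apply_eq_zero' hη (by omega)
    have vf : Vfun η m = ∑ j ∈ range (m+2), (η ^ j) m := Vfun_eq hη (by omega)
    have vf2 : ∑ j ∈ range (m+2), (η ^ j) m = Vfun η m := by
      rw [Vfun_apply, Finset.sum_range_succ, last, add_zero]
    have h0 : (η ^ 0) m = (1 : AF) m := by norm_num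
    rw [h0] at expand
    have : ∑ j ∈ range (m+1), (η ^ (j+1)) m = Vfun η m - (1:AF) m := by
      rw [← vf2, expand]; ring
    rw [this]
  have hfactor : (1 - η) * Vfun η = Vfun η - η * Vfun η := by ring
  rw [hfactor]
  ext m
  have : (Vfun η - η * Vfun η) m = Vfun η m - (η * Vfun η) m := rfl
  rw [this, key m]
  ring


lemma antidiag_biUnion (N : ℕ) :
    (Icc 1 N).biUnion (fun m => m.divisorsAntidiagonal)
      = (Icc 1 N ×ˢ Icc 1 N).filter (fun p => p.1 * p.2 ≤ N) := by
  ext ⟨a, b⟩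
  simp only [Finset.mem_biUnion, Finset.mem_filter, Finset.mem_product, Finset.mem_Icc,
    Nat.mem_divisorsAntidiagonal]
  constructor
  · rintro ⟨m, ⟨hm1, hm2⟩, hab, hm0⟩
    subst hab
    have ha : 1 ≤ a := by
      rcases Nat.eq_zero_or_pos a with h | h
      · subst h; omega
      · exact h
    have hb : 1 ≤ b := by
      rcases Nat.eq_zero_or_pos b with h | h
      · subst h; omega
      · exact h
    refine ⟨⟨⟨ha, ?_⟩, hb, ?_⟩, hm2⟩
    · calc a ≤ a * b := Nat.le_mul_of_pos_right a hb
      _ ≤ N := hm2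
    · calc b ≤ a * b := Nat.le_mul_of_pos_left b ha
      _ ≤ N := hm2
  · rintro ⟨⟨⟨ha1, _⟩, hb1, _⟩, hab⟩
    exact ⟨a * b, ⟨Nat.one_le_iff_ne_zero.2 (Nat.mul_ne_zero (by omega) (by omega)), hab⟩,
      rfl, Nat.mul_ne_zero (by omega) (by omega)⟩

lemma conv_expand (N : ℕ) (f g : AF) (w : ℕ → ℝ) (hw : ∀ a b, w (a * b) = w a * w b) :
    ∑ m ∈ Icc 1 N, (f * g) m * w m
      = ∑ p ∈ (Icc 1 N ×ˢ Icc 1 N).filter (fun p => p.1 * p.2 ≤ N),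
          (f p.1 * w p.1) * (g p.2 * w p.2) := by
  have step1 : ∀ m ∈ Icc 1 N, (f * g) m * w m
      = ∑ p ∈ m.divisorsAntidiagonal, (f p.1 * w p.1) * (g p.2 * w p.2) := by
    intro m _
    rw [ArithmeticFunction.mul_apply, Finset.sum_mul]
    apply Finset.sum_congr rfl
    rintro ⟨a, b⟩ hab
    rw [Nat.mem_divisorsAntidiagonal] at hab
    have : m = a * b := hab.1.symm
    subst this
    rw [hw]
    ring
  rw [Finset.sum_congr rfl step1, ← antidiag_biUnion N]
  rw [Finset.sum_biUnion]
  intro m hm m' hm' hne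
  simp only [Function.onFun]
  rw [Finset.disjoint_left]
  intro p hp hp'
  rw [Nat.mem_divisorsAntidiagonal] at hp hp'
  exact hne (by rw [← hp.1, ← hp'.1])

lemma conv_bound (N : ℕ) {f g : AF} (hf : NN f) (hg : NN g) {w : ℕ → ℝ}
    (hw : ∀ a b, w (a * b) = w a * w b) (hw0 : ∀ n, 0 ≤ w n) :
    ∑ m ∈ Icc 1 N, (f * g) m * w m
      ≤ (∑ a ∈ Icc 1 N, f a * w a) * (∑ b ∈ Icc 1 N, g b * w b) := by
  rw [conv_expand N f g w hw, Finset.sum_mul_sum, ← Finset.sum_product']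
  apply Finset.sum_le_sum_of_subset_of_nonneg (Finset.filter_subset _ _)
  intro p _ _
  exact mul_nonneg (mul_nonneg (hf p.1) (hw0 p.1)) (mul_nonneg (hg p.2) (hw0 p.2))

lemma conv_group (N : ℕ) (f g : AF) :
    ∑ m ∈ Icc 1 N, (f * g) m
      = ∑ a ∈ Icc 1 N, f a * (∑ b ∈ Icc 1 (N / a), g b) := by
  have h1 : ∑ m ∈ Icc 1 N, (f * g) m = ∑ m ∈ Icc 1 N, (f * g) m * (fun _ => (1:ℝ)) m :=
    Finset.sum_congr rfl (fun m _ => (mul_one _).symm)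
  rw [h1, conv_expand N f g (fun _ => (1:ℝ)) (fun _ _ => (one_mul 1).symm)]
  rw [Finset.sum_filter, Finset.sum_product]
  apply Finset.sum_congr rfl
  intro a ha
  rw [Finset.mem_Icc] at ha
  have ha0 : 0 < a := ha.1
  rw [← Finset.sum_filter]
  have hset : (Icc 1 N).filter (fun b => a * b ≤ N) = Icc 1 (N / a) := by
    ext b
    simp only [Finset.mem_filter, Finset.mem_Icc]
    constructor
    · rintro ⟨⟨hb1, _⟩, hab⟩
      exact ⟨hb1, (Nat.le_div_iff_mul_le ha0).2 (by rw [Nat.mul_comm]; exact hab)⟩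
    · rintro ⟨hb1, hb2⟩
      have hab : b * a ≤ N := (Nat.le_div_iff_mul_le ha0).1 hb2
      refine ⟨⟨hb1, ?_⟩, by rw [Nat.mul_comm]; exact hab⟩
      calc b ≤ b * a := Nat.le_mul_of_pos_right b ha0
      _ ≤ N := hab
  rw [hset, Finset.mul_sum]
  apply Finset.sum_congr rfl
  intro b _
  ring


/-! ### The chain of arithmetic functions -/

/-- the chain: F [] = δ, F (q::t) = F t * geometric series of pt q * (1 + (d-1)·F t) -/
def Fch (dR : ℝ) : List ℕ → AF
  | [] => 1
  | q :: t => Fch dR t * Vfun (pt q * (1 + cAF (dR - 1) * Fch dR t))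

def Gch (dR : ℝ) (t : List ℕ) : AF := 1 + cAF (dR - 1) * Fch dR t

def etaF (dR : ℝ) (q : ℕ) (t : List ℕ) : AF := pt q * Gch dR t

lemma Fch_cons (dR : ℝ) (q : ℕ) (t : List ℕ) :
    Fch dR (q :: t) = Fch dR t * Vfun (etaF dR q t) := rfl

lemma eta_one_eq_zero {q : ℕ} (hq : 2 ≤ q) (G : AF) : (pt q * G) 1 = 0 := by
  rw [pt_mul_apply (by omega)]
  rw [if_neg]
  rw [Nat.dvd_one]
  omega

lemma etaF_one (dR : ℝ) {q : ℕ} (hq : 2 ≤ q) (t : List ℕ) : etaF dR q t 1 = 0 :=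
  eta_one_eq_zero hq _

lemma NN_Fch {dR : ℝ} (hd : 1 ≤ dR) (l : List ℕ) : NN (Fch dR l) := by
  induction l with
  | nil => exact NN_one
  | cons q t ih =>
    rw [Fch_cons]
    exact NN_mul ih (NN_Vfun (NN_mul (NN_pt q) (NN_add NN_one (NN_mul (NN_cAF (by linarith)) ih))))

lemma NN_Gch {dR : ℝ} (hd : 1 ≤ dR) (t : List ℕ) : NN (Gch dR t) :=
  NN_add NN_one (NN_mul (NN_cAF (by linarith)) (NN_Fch hd t))

lemma NN_etaF {dR : ℝ} (hd : 1 ≤ dR) (q : ℕ) (t : List ℕ) : NN (etaF dR q t) :=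
  NN_mul (NN_pt q) (NN_Gch hd t)

def Pch : List ℕ → AF := fun l => (l.map (fun q => 1 - pt q)).prod

def Mch (dR : ℝ) (l : List ℕ) : AF := cAF dR * Pch l - cAF (dR - 1)

lemma cAF_sub (a b : ℝ) : cAF a - cAF b = cAF (a - b) := by
  ext n
  show cAF a n - cAF b n = cAF (a-b) n
  simp only [cAF_apply]
  split <;> ring

lemma chain_inv (dR : ℝ) : ∀ l : List ℕ, (∀ q ∈ l, 2 ≤ q) → Mch dR l * Fch dR l = 1 := by
  intro l
  induction l with
  | nil =>
    intro _
    show (cAF dR * Pch [] - cAF (dR - 1)) * Fch dR [] = 1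
    have h1 : Pch [] = 1 := by simp [Pch]
    have h2 : Fch dR [] = 1 := rfl
    rw [h1, h2, mul_one, mul_one, cAF_sub]
    rw [show dR - (dR - 1) = 1 by ring, cAF_one]
  | cons q t ih =>
    intro hq
    have hq2 : 2 ≤ q := hq q (by simp)
    have iht := ih (fun r hr => hq r (by simp [hr]))
    have hP : Pch (q :: t) = (1 - pt q) * Pch t := by simp [Pch]
    set A := cAF dR * Pch t with hA
    set B := cAF (dR - 1) with hB
    set F := Fch dR t with hF
    have iht' : (A - B) * F = 1 := iht
    have hAF : A * F = 1 + B * F := by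
      calc A * F = (A - B) * F + B * F := by ring
      _ = 1 + B * F := by rw [iht']
    show (cAF dR * Pch (q :: t) - B) * Fch dR (q :: t) = 1
    rw [hP, Fch_cons]
    have hGeq : Gch dR t = 1 + B * F := rfl
    have step : (cAF dR * ((1 - pt q) * Pch t) - B) * (F * Vfun (etaF dR q t))
        = (1 - etaF dR q t) * Vfun (etaF dR q t)
          + ((A * F) - (1 + B * F)) * ((1 - pt q) * Vfun (etaF dR q t)) := by
      have hEta : etaF dR q t = pt q * (1 + B * F) := by
        rw [etaF, hGeq]
      rw [hEta]
      ring
    rw [step, hAF]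
    rw [sub_self, zero_mul, add_zero]
    exact geom_spec (etaF_one dR hq2 t)

/-! ### Dirichlet-type partial sum bounds at exponent α -/

section Alpha

variable {α : ℝ}

local notation "w" => fun n : ℕ => (n : ℝ) ^ (-α)

lemma w_nonneg (n : ℕ) : 0 ≤ (n : ℝ) ^ (-α) := Real.rpow_nonneg (Nat.cast_nonneg n) _

lemma w_mul (a b : ℕ) : ((a * b : ℕ) : ℝ) ^ (-α) = (a : ℝ) ^ (-α) * (b : ℝ) ^ (-α) := by
  rw [Nat.cast_mul]
  exact Real.mul_rpow (Nat.cast_nonneg a) (Nat.cast_nonneg b)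

lemma w_one : ((1 : ℕ) : ℝ) ^ (-α) = 1 := by
  rw [Nat.cast_one, Real.one_rpow]

lemma sum_one_w (N : ℕ) : ∑ m ∈ Icc 1 N, (1 : AF) m * w m ≤ 1 := by
  have h1 : ∀ m ∈ Icc 1 N, (1 : AF) m * w m = if m = 1 then ((m:ℝ) ^ (-α)) else 0 := by
    intro m _
    rw [ArithmeticFunction.one_apply]
    split <;> simp
  rw [Finset.sum_congr rfl h1, Finset.sum_ite_eq' (Icc 1 N) 1]
  split
  · rw [w_one]
  · norm_num

lemma sum_pt_w (hα : 0 < α) (k N : ℕ) : ∑ m ∈ Icc 1 N, pt k m * w m ≤ (k : ℝ) ^ (-α) := by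
  rcases eq_or_ne k 0 with rfl | hk
  · have h1 : ∀ m ∈ Icc 1 N, pt 0 m * w m = 0 := by
      intro m _
      have : pt 0 m = 0 := by
        show (if m = 0 ∧ (0:ℕ) ≠ 0 then (1:ℝ) else 0) = 0
        simp
      rw [this, zero_mul]
    rw [Finset.sum_congr rfl h1, Finset.sum_const_zero]
    rw [Nat.cast_zero, Real.zero_rpow (by linarith)]
  · have h1 : ∀ m ∈ Icc 1 N, pt k m * w m = if m = k then ((m:ℝ) ^ (-α)) else 0 := by
      intro m _
      rw [pt_apply hk]
      split <;> simp
    rw [Finset.sum_congr rfl h1, Finset.sum_ite_eq' (Icc 1 N) k]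
    split
    · rfl
    · exact w_nonneg k

lemma sum_pow_w {η : AF} (hη : NN η) {θ : ℝ} (hθ0 : 0 ≤ θ)
    (hb : ∀ M, ∑ b ∈ Icc 1 M, η b * w b ≤ θ) :
    ∀ j N, ∑ m ∈ Icc 1 N, (η ^ j) m * w m ≤ θ ^ j := by
  intro j
  induction j with
  | zero =>
    intro N
    rw [pow_zero, pow_zero]
    exact sum_one_w N
  | succ j ihj =>
    intro N
    rw [pow_succ, mul_comm (η ^ j) η]
    calc ∑ m ∈ Icc 1 N, (η * η ^ j) m * w m
        ≤ (∑ a ∈ Icc 1 N, η a * w a) * (∑ b ∈ Icc 1 N, (η ^ j) b * w b) :=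
          conv_bound N hη (NN_pow hη j) w_mul w_nonneg
      _ ≤ θ * θ ^ j := by
          apply mul_le_mul (hb N) (ihj N)
          · exact Finset.sum_nonneg fun m _ => mul_nonneg (NN_pow hη j m) (w_nonneg m)
          · exact hθ0
      _ = θ ^ (j+1) := by rw [pow_succ, mul_comm]

lemma sum_V_w {η : AF} (hη : NN η) (hη1 : η 1 = 0) {θ : ℝ} (hθ0 : 0 ≤ θ) (hθ1 : θ < 1)
    (hb : ∀ M, ∑ b ∈ Icc 1 M, η b * w b ≤ θ) :
    ∀ N, ∑ m ∈ Icc 1 N, Vfun η m * w m ≤ 1 / (1 - θ) := by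
  intro N
  have step1 : ∑ m ∈ Icc 1 N, Vfun η m * w m
      = ∑ j ∈ range (N+1), ∑ m ∈ Icc 1 N, (η ^ j) m * w m := by
    rw [Finset.sum_comm]
    apply Finset.sum_congr rfl
    intro m hm
    rw [Finset.mem_Icc] at hm
    rw [Vfun_eq hη1 hm.2, Finset.sum_mul]
  rw [step1]
  calc ∑ j ∈ range (N+1), ∑ m ∈ Icc 1 N, (η ^ j) m * w m
      ≤ ∑ j ∈ range (N+1), θ ^ j :=
        Finset.sum_le_sum fun j _ => sum_pow_w hη hθ0 hb j N
    _ ≤ 1 / (1 - θ) := by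
        rw [geom_sum_eq (by linarith : θ ≠ 1)]
        have hrw : (θ ^ (N+1) - 1) / (θ - 1) = (1 - θ ^ (N+1)) / (1 - θ) := by
          rw [← neg_div_neg_eq]
          ring_nf
        rw [hrw]
        have hp : (0:ℝ) ≤ θ ^ (N+1) := pow_nonneg hθ0 _
        apply div_le_div_of_nonneg_right ?_ (by linarith)
        linarith


lemma icc_split (J t : ℕ) (h : t ≤ J) (f : ℕ → ℝ) :
    ∑ m ∈ Icc 1 t, f m + ∑ m ∈ Icc (t+1) J, f m = ∑ m ∈ Icc 1 J, f m := by
  have h1 : Icc 1 t = Ioc 0 t := (Finset.Icc_add_one_left_eq_Ioc 0 t).symm ▸ rfl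
  have h2 : Icc (t+1) J = Ioc t J := (Finset.Icc_add_one_left_eq_Ioc t J).symm ▸ rfl
  have h3 : Icc 1 J = Ioc 0 J := (Finset.Icc_add_one_left_eq_Ioc 0 J).symm ▸ rfl
  rw [h1, h2, h3]
  exact Finset.sum_Ioc_consecutive f (Nat.zero_le t) h

/-- The dyadic renewal bound: if the weighted partial sums of `η` are at most 1,
then the weighted mass of `Vfun η` on any dyadic block `(t, 2t+1]` is at most 1. -/
lemma dyadic_bound {η : AF} (hηN : NN η) (hη1 : η 1 = 0)
    (hb : ∀ M, ∑ b ∈ Icc 1 M, η b * w b ≤ 1) :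
    ∀ t : ℕ, 1 ≤ t → ∑ m ∈ Icc (t+1) (2*t+1), Vfun η m * w m ≤ 1 := by
  intro t ht
  set J := 2*t+1 with hJ
  set a : ℕ → ℝ := fun j => ∑ m ∈ Icc 1 t, (η^j) m * w m with ha
  set e : ℕ → ℝ := fun j => ∑ m ∈ Icc (t+1) J, (η^j) m * w m with he
  have ha_nonneg : ∀ j, 0 ≤ a j := fun j =>
    Finset.sum_nonneg fun m _ => mul_nonneg (NN_pow hηN j m) (w_nonneg m)
  have he_nonneg : ∀ j, 0 ≤ e j := fun j =>
    Finset.sum_nonneg fun m _ => mul_nonneg (NN_pow hηN j m) (w_nonneg m)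
  have key : ∀ j, a (j+1) + e (j+1) ≤ a j := by
    intro j
    have hsplit : a (j+1) + e (j+1) = ∑ m ∈ Icc 1 J, (η^(j+1)) m * w m :=
      icc_split J t (by omega) _
    rw [hsplit]
    have hpow : ∀ m, (η^(j+1)) m = (η * η^j) m := by
      intro m; rw [pow_succ, mul_comm]
    simp_rw [hpow]
    rw [conv_expand J η (η^j) _ w_mul]
    set S := (Icc 1 J ×ˢ Icc 1 J).filter (fun p => p.1 * p.2 ≤ J) with hS
    have hfilter : ∑ p ∈ S, (η p.1 * w p.1) * ((η^j) p.2 * w p.2)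
        = ∑ p ∈ S.filter (fun p => p.1 ≠ 1), (η p.1 * w p.1) * ((η^j) p.2 * w p.2) := by
      symm
      apply Finset.sum_filter_of_ne
      intro p _ hne
      intro hp1
      apply hne
      rw [hp1, hη1, zero_mul, zero_mul]
    rw [hfilter]
    have hsub : S.filter (fun p => p.1 ≠ 1) ⊆ (Icc 1 J) ×ˢ (Icc 1 t) := by
      intro p hp
      rw [Finset.mem_filter, hS, Finset.mem_filter, Finset.mem_product] at hp
      obtain ⟨⟨⟨hp1, hp2⟩, hp3⟩, hp4⟩ := hp
      rw [Finset.mem_product]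
      rw [Finset.mem_Icc] at hp1 hp2 ⊢
      rw [Finset.mem_Icc]
      have h2p : 2 ≤ p.1 := by omega
      have : 2 * p.2 ≤ p.1 * p.2 := Nat.mul_le_mul_right p.2 h2p
      exact ⟨hp1, hp2.1, by omega⟩
    calc ∑ p ∈ S.filter (fun p => p.1 ≠ 1), (η p.1 * w p.1) * ((η^j) p.2 * w p.2)
        ≤ ∑ p ∈ (Icc 1 J) ×ˢ (Icc 1 t), (η p.1 * w p.1) * ((η^j) p.2 * w p.2) := by
          apply Finset.sum_le_sum_of_subset_of_nonneg hsub
          intro p _ _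
          exact mul_nonneg (mul_nonneg (hηN p.1) (w_nonneg p.1))
            (mul_nonneg (NN_pow hηN j p.2) (w_nonneg p.2))
      _ = (∑ b ∈ Icc 1 J, η b * w b) * a j := by
          rw [Finset.sum_mul_sum, ← Finset.sum_product']
      _ ≤ a j := mul_le_of_le_one_left (ha_nonneg j) (hb J)
  have telescope : ∀ n, (∑ j ∈ range (n+1), e j) + a n ≤ e 0 + a 0 := by
    intro n
    induction n with
    | zero => rw [Finset.sum_range_one]
    | succ n ihn =>
      rw [Finset.sum_range_succ]
      have := key n
      linarith
  have he0 : e 0 = 0 := by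
    rw [he]
    apply Finset.sum_eq_zero
    intro m hm
    rw [Finset.mem_Icc] at hm
    rw [pow_zero, ArithmeticFunction.one_apply, if_neg (by omega), zero_mul]
  have ha0 : a 0 ≤ 1 := by
    rw [ha]
    simpa using sum_one_w (α := α) t
  have hVsum : ∑ m ∈ Icc (t+1) J, Vfun η m * w m = ∑ j ∈ range (J+1), e j := by
    have h1 : ∀ m ∈ Icc (t+1) J, Vfun η m * w m = ∑ j ∈ range (J+1), (η^j) m * w m := by
      intro m hm
      rw [Finset.mem_Icc] at hm
      rw [Vfun_eq hη1 hm.2, Finset.sum_mul]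
    rw [Finset.sum_congr rfl h1, Finset.sum_comm]
  rw [hVsum]
  have := telescope J
  have haJ := ha_nonneg J
  linarith


/-- Unweighted partial sums of `Vfun η` grow like `N ^ α`. -/
lemma sumV_partial (hα : 0 < α) {η : AF} (hηN : NN η) (hη1 : η 1 = 0)
    (hb : ∀ M, ∑ b ∈ Icc 1 M, η b * w b ≤ 1) :
    ∀ N : ℕ, ∑ m ∈ Icc 1 N, Vfun η m ≤ (1 - (2:ℝ)^(-α))⁻¹ * (N:ℝ)^α := by
  have hx0 : (0:ℝ) < (2:ℝ)^(-α) := Real.rpow_pos_of_pos two_pos _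
  have hx1 : (2:ℝ)^(-α) < 1 :=
    Real.rpow_lt_one_of_one_lt_of_neg one_lt_two (by linarith)
  set x := (2:ℝ)^(-α) with hxdef
  set c0 := (1 - x)⁻¹ with hc0def
  have hc0pos : 0 < c0 := inv_pos.2 (by linarith)
  have hid : c0 * (1 - x) = 1 := inv_mul_cancel₀ (by linarith)
  have hc0ge1 : 1 ≤ c0 := by nlinarith
  intro N
  induction N using Nat.strong_induction_on with
  | _ N ih =>
    rcases Nat.lt_or_ge N 2 with hN2 | hN2
    · interval_cases N
      · simp [Real.zero_rpow (ne_of_gt hα)]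
      · rw [show Icc 1 1 = {1} from rfl, Finset.sum_singleton, Vfun_one η hη1]
        rw [Nat.cast_one, Real.one_rpow, mul_one]
        exact hc0ge1
    · set t := N / 2 with htdef
      have ht1 : 1 ≤ t := by omega
      have htN : t < N := by omega
      have hNle : N ≤ 2*t + 1 := by omega
      have hsplit := icc_split N t (by omega) (fun m => Vfun η m)
      have hIH := ih t htN
      have hVnn := NN_Vfun hηN
      have bound2 : ∑ m ∈ Icc (t+1) N, Vfun η m ≤ (N:ℝ)^α := by
        have hstep : ∀ m ∈ Icc (t+1) N, Vfun η m ≤ (Vfun η m * w m) * (N:ℝ)^α := by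
          intro m hm
          rw [Finset.mem_Icc] at hm
          have hm1 : 1 ≤ m := by omega
          have hmpos : (0:ℝ) < (m:ℝ) := by exact_mod_cast hm1
          have hwm : w m * (m:ℝ)^α = 1 := by
            rw [← Real.rpow_add hmpos]
            norm_num
          have hmono : ((m:ℝ))^α ≤ ((N:ℝ))^α := by
            apply Real.rpow_le_rpow (le_of_lt hmpos) _ (le_of_lt hα)
            exact_mod_cast hm.2
          calc Vfun η m = Vfun η m * (w m * (m:ℝ)^α) := by rw [hwm, mul_one]
            _ = (Vfun η m * w m) * (m:ℝ)^α := by ring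
            _ ≤ (Vfun η m * w m) * (N:ℝ)^α := by
                apply mul_le_mul_of_nonneg_left hmono
                exact mul_nonneg (hVnn m) (w_nonneg m)
        calc ∑ m ∈ Icc (t+1) N, Vfun η m
            ≤ ∑ m ∈ Icc (t+1) N, (Vfun η m * w m) * (N:ℝ)^α := Finset.sum_le_sum hstep
          _ = (∑ m ∈ Icc (t+1) N, Vfun η m * w m) * (N:ℝ)^α := by rw [Finset.sum_mul]
          _ ≤ 1 * (N:ℝ)^α := by
              apply mul_le_mul_of_nonneg_right _ (Real.rpow_nonneg (Nat.cast_nonneg N) _)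
              calc ∑ m ∈ Icc (t+1) N, Vfun η m * w m
                  ≤ ∑ m ∈ Icc (t+1) (2*t+1), Vfun η m * w m := by
                    apply Finset.sum_le_sum_of_subset_of_nonneg
                    · apply Finset.Icc_subset_Icc_right hNle
                    · intro m _ _
                      exact mul_nonneg (hVnn m) (w_nonneg m)
                _ ≤ 1 := dyadic_bound hηN hη1 hb t ht1
          _ = (N:ℝ)^α := one_mul _
      have hthalf : (t:ℝ) ≤ (N:ℝ)/2 := by
        have := Nat.cast_div_le (α := ℝ) (m := N) (n := 2)
        rw [htdef]
        push_cast at this ⊢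
        linarith
      have hIH2 : ∑ m ∈ Icc 1 t, Vfun η m ≤ c0 * ((N:ℝ)^α * x) := by
        calc ∑ m ∈ Icc 1 t, Vfun η m ≤ c0 * (t:ℝ)^α := hIH
          _ ≤ c0 * ((N:ℝ)/2)^α := by
              apply mul_le_mul_of_nonneg_left _ (le_of_lt hc0pos)
              exact Real.rpow_le_rpow (Nat.cast_nonneg t) hthalf (le_of_lt hα)
          _ = c0 * ((N:ℝ)^α * x) := by
              rw [Real.div_rpow (Nat.cast_nonneg N) (by norm_num : (0:ℝ) ≤ 2)]
              rw [hxdef, Real.rpow_neg (by norm_num : (0:ℝ) ≤ 2)]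
              ring
      calc ∑ m ∈ Icc 1 N, Vfun η m
          = ∑ m ∈ Icc 1 t, Vfun η m + ∑ m ∈ Icc (t+1) N, Vfun η m := hsplit.symm
        _ ≤ c0 * ((N:ℝ)^α * x) + (N:ℝ)^α := add_le_add hIH2 bound2
        _ = (c0 * x + 1) * (N:ℝ)^α := by ring
        _ = c0 * (N:ℝ)^α := by
            have : c0 * x + 1 = c0 := by linarith [hid]
            rw [this]

/-! ### The value bookkeeping at exponent α -/

def PiL (α : ℝ) (t : List ℕ) : ℝ := (t.map (fun q : ℕ => 1 - (q:ℝ) ^ (-α))).prod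

def DL (dR α : ℝ) (t : List ℕ) : ℝ := dR * PiL α t - (dR - 1)

lemma PiL_nil : PiL α [] = 1 := by simp [PiL]

lemma PiL_cons (q : ℕ) (t : List ℕ) : PiL α (q :: t) = (1 - (q:ℝ)^(-α)) * PiL α t := by
  simp [PiL]

lemma factor_pos (hα : 0 < α) {q : ℕ} (hq : 2 ≤ q) : 0 < 1 - (q:ℝ)^(-α) := by
  have h1 : (1:ℝ) < (q:ℝ) := by exact_mod_cast hq
  have := Real.rpow_lt_one_of_one_lt_of_neg h1 (by linarith : -α < 0)
  linarith

lemma factor_lt_one (hα : 0 < α) {q : ℕ} (hq : 2 ≤ q) : 1 - (q:ℝ)^(-α) < 1 := by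
  have : (0:ℝ) < (q:ℝ)^(-α) := Real.rpow_pos_of_pos (by positivity) _
  linarith

lemma PiL_pos (hα : 0 < α) {t : List ℕ} (hq : ∀ q ∈ t, 2 ≤ q) : 0 < PiL α t := by
  induction t with
  | nil => rw [PiL_nil]; norm_num
  | cons q t ih =>
    rw [PiL_cons]
    exact mul_pos (factor_pos hα (hq q (by simp))) (ih (fun r hr => hq r (by simp [hr])))


lemma sum_G_bound {dR : ℝ} (hd : 1 ≤ dR) {t : List ℕ} {BF : ℝ}
    (hFb : ∀ N, ∑ m ∈ Icc 1 N, Fch dR t m * w m ≤ BF) :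
    ∀ M, ∑ c ∈ Icc 1 M, Gch dR t c * w c ≤ 1 + (dR - 1) * BF := by
  intro M
  have hGc : ∀ c, Gch dR t c = (1:AF) c + (dR - 1) * Fch dR t c := by
    intro c
    show ((1 : AF) + cAF (dR-1) * Fch dR t) c = _
    rw [ArithmeticFunction.add_apply, cAF_mul_apply]
  calc ∑ c ∈ Icc 1 M, Gch dR t c * w c
      = ∑ c ∈ Icc 1 M, ((1:AF) c * w c) + ∑ c ∈ Icc 1 M, (dR - 1) * (Fch dR t c * w c) := by
        rw [← Finset.sum_add_distrib]
        apply Finset.sum_congr rfl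
        intro c _
        rw [hGc c]
        ring
    _ ≤ 1 + (dR - 1) * BF := by
        apply add_le_add (sum_one_w M)
        rw [← Finset.mul_sum]
        exact mul_le_mul_of_nonneg_left (hFb M) (by linarith)

lemma sum_eta_bound (hα : 0 < α) {dR : ℝ} (hd : 1 ≤ dR) {t : List ℕ} {BF : ℝ}
    (hFb : ∀ N, ∑ m ∈ Icc 1 N, Fch dR t m * w m ≤ BF) (hBF : 0 ≤ BF) (q : ℕ) :
    ∀ M, ∑ b ∈ Icc 1 M, etaF dR q t b * w b ≤ (q:ℝ)^(-α) * (1 + (dR - 1) * BF) := by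
  intro M
  calc ∑ b ∈ Icc 1 M, (pt q * Gch dR t) b * w b
      ≤ (∑ b ∈ Icc 1 M, pt q b * w b) * (∑ c ∈ Icc 1 M, Gch dR t c * w c) :=
        conv_bound M (NN_pt q) (NN_Gch hd t) w_mul w_nonneg
    _ ≤ (q:ℝ)^(-α) * (1 + (dR - 1) * BF) := by
        apply mul_le_mul (sum_pt_w hα q M) (sum_G_bound hd hFb M)
        · exact Finset.sum_nonneg fun c _ => mul_nonneg (NN_Gch hd t c) (w_nonneg c)
        · exact w_nonneg q

lemma DL_theta {dR : ℝ} {q : ℕ} {t : List ℕ} (hDt : DL dR α t ≠ 0) :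
    (1 - (q:ℝ)^(-α) * (1 + (dR - 1) * (1 / DL dR α t))) * DL dR α t = DL dR α (q :: t) := by
  have h1 : DL dR α (q :: t) = dR * ((1 - (q:ℝ)^(-α)) * PiL α t) - (dR - 1) := by
    rw [DL, PiL_cons]
  have h2 : DL dR α t = dR * PiL α t - (dR - 1) := rfl
  calc (1 - (q:ℝ)^(-α) * (1 + (dR - 1) * (1 / DL dR α t))) * DL dR α t
      = DL dR α t - (q:ℝ)^(-α) * (DL dR α t + (dR - 1)) := by
        field_simp
    _ = dR * ((1 - (q:ℝ)^(-α)) * PiL α t) - (dR - 1) := by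
        rw [h2]; ring
    _ = DL dR α (q :: t) := h1.symm

lemma sumF_bound (hα : 0 < α) {dR : ℝ} (hd : 1 ≤ dR) :
    ∀ t : List ℕ, (∀ q ∈ t, 2 ≤ q) → (∀ t', t' <:+ t → 0 < DL dR α t') →
    ∀ N, ∑ m ∈ Icc 1 N, Fch dR t m * w m ≤ 1 / DL dR α t := by
  intro t
  induction t with
  | nil =>
    intro _ _ N
    have hD : DL dR α ([] : List ℕ) = 1 := by
      rw [DL, PiL_nil]; ring
    rw [hD]
    simpa [Fch] using sum_one_w (α := α) N
  | cons q t ih =>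
    intro hq hsuf N
    have hq2 : 2 ≤ q := hq q (by simp)
    have hqt : ∀ r ∈ t, 2 ≤ r := fun r hr => hq r (by simp [hr])
    have hsuft : ∀ t', t' <:+ t → 0 < DL dR α t' := by
      intro t' ht'
      exact hsuf t' (ht'.trans (List.suffix_cons q t))
    have hDt : 0 < DL dR α t := hsuft t (List.suffix_refl t)
    have hDqt : 0 < DL dR α (q :: t) := hsuf _ (List.suffix_refl _)
    have hFb := ih hqt hsuft
    have hBF : (0:ℝ) ≤ 1 / DL dR α t := by positivity
    set θ := (q:ℝ)^(-α) * (1 + (dR - 1) * (1 / DL dR α t)) with hθdef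
    have hθ0 : 0 ≤ θ := by
      apply mul_nonneg (w_nonneg q)
      have : 0 ≤ (dR - 1) * (1 / DL dR α t) := mul_nonneg (by linarith) hBF
      linarith
    have hkey : (1 - θ) * DL dR α t = DL dR α (q :: t) := DL_theta (ne_of_gt hDt)
    have hθ1 : θ < 1 := by nlinarith
    have hη := sum_eta_bound hα hd hFb hBF q
    have hV := sum_V_w (NN_etaF hd q t) (etaF_one dR hq2 t) hθ0 hθ1 hη
    rw [Fch_cons]
    calc ∑ m ∈ Icc 1 N, (Fch dR t * Vfun (etaF dR q t)) m * w m
        ≤ (∑ a ∈ Icc 1 N, Fch dR t a * w a) * (∑ b ∈ Icc 1 N, Vfun (etaF dR q t) b * w b) :=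
          conv_bound N (NN_Fch hd t) (NN_Vfun (NN_etaF hd q t)) w_mul w_nonneg
      _ ≤ (1 / DL dR α t) * (1 / (1 - θ)) := by
          apply mul_le_mul (hFb N) (hV N) _ hBF
          exact Finset.sum_nonneg fun b _ =>
            mul_nonneg (NN_Vfun (NN_etaF hd q t) b) (w_nonneg b)
      _ = 1 / DL dR α (q :: t) := by
          rw [div_mul_div_comm, one_mul, ← hkey]
          rw [mul_comm]

lemma head_eta_bound (hα : 0 < α) {dR : ℝ} (hd : 1 ≤ dR) {q : ℕ} {t : List ℕ}
    (hqt : ∀ r ∈ t, 2 ≤ r) (hsuft : ∀ t', t' <:+ t → 0 < DL dR α t')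
    (hD0 : 0 ≤ DL dR α (q :: t)) :
    ∀ M, ∑ b ∈ Icc 1 M, etaF dR q t b * w b ≤ 1 := by
  intro M
  have hDt : 0 < DL dR α t := hsuft t (List.suffix_refl t)
  have hFb := sumF_bound hα hd t hqt hsuft
  have hBF : (0:ℝ) ≤ 1 / DL dR α t := by positivity
  have hkey : (1 - (q:ℝ)^(-α) * (1 + (dR - 1) * (1 / DL dR α t))) * DL dR α t
      = DL dR α (q :: t) := DL_theta (ne_of_gt hDt)
  have hθ1 : (q:ℝ)^(-α) * (1 + (dR - 1) * (1 / DL dR α t)) ≤ 1 := by nlinarith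
  exact (sum_eta_bound hα hd hFb hBF q M).trans hθ1

/-- The main partial sum bound for the full chain. -/
lemma sumL_bound (hα : 0 < α) {dR : ℝ} (hd : 1 ≤ dR) {q : ℕ} {t : List ℕ}
    (hq2 : 2 ≤ q) (hqt : ∀ r ∈ t, 2 ≤ r) (hsuft : ∀ t', t' <:+ t → 0 < DL dR α t')
    (hD0 : 0 ≤ DL dR α (q :: t)) :
    ∀ N, ∑ m ∈ Icc 1 N, Fch dR (q :: t) m
      ≤ ((1 - (2:ℝ)^(-α))⁻¹ / DL dR α t) * (N:ℝ)^α := by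
  intro N
  have hDt : 0 < DL dR α t := hsuft t (List.suffix_refl t)
  set c0 := (1 - (2:ℝ)^(-α))⁻¹ with hc0def
  have hc0pos : 0 < c0 := by
    have hx1 : (2:ℝ)^(-α) < 1 :=
      Real.rpow_lt_one_of_one_lt_of_neg one_lt_two (by linarith)
    exact inv_pos.2 (by linarith)
  have hVp := sumV_partial hα (NN_etaF hd q t) (etaF_one dR hq2 t)
    (head_eta_bound hα hd hqt hsuft hD0)
  have hNα : (0:ℝ) ≤ (N:ℝ)^α := Real.rpow_nonneg (Nat.cast_nonneg N) _
  rw [Fch_cons, conv_group]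
  calc ∑ a ∈ Icc 1 N, Fch dR t a * (∑ b ∈ Icc 1 (N / a), Vfun (etaF dR q t) b)
      ≤ ∑ a ∈ Icc 1 N, Fch dR t a * (c0 * (N:ℝ)^α * w a) := by
        apply Finset.sum_le_sum
        intro a ha
        rw [Finset.mem_Icc] at ha
        have ha1 : 1 ≤ a := ha.1
        have hapos : (0:ℝ) < (a:ℝ) := by exact_mod_cast ha1
        apply mul_le_mul_of_nonneg_left _ (NN_Fch hd t a)
        calc ∑ b ∈ Icc 1 (N / a), Vfun (etaF dR q t) b
            ≤ c0 * ((N/a : ℕ):ℝ)^α := hVp (N / a)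
          _ ≤ c0 * ((N:ℝ)^α * w a) := by
              apply mul_le_mul_of_nonneg_left _ (le_of_lt hc0pos)
              have hdivle : ((N/a : ℕ):ℝ) ≤ (N:ℝ)/(a:ℝ) := by
                have := Nat.cast_div_le (α := ℝ) (m := N) (n := a)
                exact this
              calc ((N/a : ℕ):ℝ)^α ≤ ((N:ℝ)/(a:ℝ))^α :=
                    Real.rpow_le_rpow (Nat.cast_nonneg _) hdivle (le_of_lt hα)
                _ = (N:ℝ)^α * w a := by
                    show ((N:ℝ)/(a:ℝ))^α = (N:ℝ)^α * (a:ℝ)^(-α)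
                    rw [Real.div_rpow (Nat.cast_nonneg N) (le_of_lt hapos),
                      Real.rpow_neg (le_of_lt hapos)]
                    ring
          _ = c0 * (N:ℝ)^α * w a := by ring
    _ = (c0 * (N:ℝ)^α) * ∑ a ∈ Icc 1 N, Fch dR t a * w a := by
        rw [Finset.mul_sum]
        apply Finset.sum_congr rfl
        intro a _
        ring
    _ ≤ (c0 * (N:ℝ)^α) * (1 / DL dR α t) := by
        apply mul_le_mul_of_nonneg_left (sumF_bound hα hd t hqt hsuft N)
        positivity
    _ = (c0 / DL dR α t) * (N:ℝ)^α := by ring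

end Alpha

/-! ### Extraction of the pointwise recursion for the chain -/

lemma cAF_mul (a b : ℝ) : cAF a * cAF b = cAF (a * b) := by
  ext n
  rw [cAF_mul_apply]
  simp only [cAF_apply]
  split <;> ring

lemma cAF_pow (r : ℝ) (j : ℕ) : cAF r ^ j = cAF (r ^ j) := by
  induction j with
  | zero => rw [pow_zero, pow_zero, cAF_one]
  | succ j ih => rw [pow_succ, pow_succ, ih, cAF_mul]

lemma neg_eq_cAF (f : AF) : -f = cAF (-1) * f := by
  ext n
  rw [cAF_mul_apply]
  show -(f n) = (-1) * f n
  ring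

lemma AF_sum_apply {ι : Type*} (S : Finset ι) (F : ι → AF) (m : ℕ) :
    (∑ i ∈ S, F i) m = ∑ i ∈ S, F i m := by
  induction S using Finset.cons_induction with
  | empty => simp
  | cons i S hi ih =>
    rw [Finset.sum_cons, Finset.sum_cons, ArithmeticFunction.add_apply, ih]

lemma prod_pt {T : Finset ℕ} (hT : ∀ q ∈ T, q ≠ 0) : ∏ q ∈ T, pt q = pt (∏ q ∈ T, q) := by
  induction T using Finset.cons_induction with
  | empty => rw [Finset.prod_empty, Finset.prod_empty, pt_one]
  | cons a X ha ih =>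
    rw [Finset.prod_cons, Finset.prod_cons]
    rw [ih (fun r hr => hT r (Finset.mem_cons_of_mem hr))]
    exact pt_mul_pt (hT a (Finset.mem_cons_self a X))
      (Finset.prod_ne_zero_iff.2 (fun r hr => hT r (Finset.mem_cons_of_mem hr)))

lemma Pch_expand (Q : Finset ℕ) (hQ0 : ∀ q ∈ Q, q ≠ 0) :
    Pch Q.toList = ∑ T ∈ Q.powerset, cAF ((-1:ℝ) ^ T.card) * pt (∏ q ∈ T, q) := by
  have h1 : Pch Q.toList = ∏ q ∈ Q, ((1:AF) - pt q) := by
    rw [Pch]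
    exact Finset.prod_map_toList Q _
  rw [h1]
  have h2 : ∀ q ∈ Q, (1:AF) - pt q = cAF (-1) * pt q + 1 := by
    intro q _
    rw [← neg_eq_cAF]
    ring
  rw [Finset.prod_congr rfl h2, Finset.prod_add]
  apply Finset.sum_congr rfl
  intro T hT
  rw [Finset.mem_powerset] at hT
  rw [Finset.prod_const_one, mul_one, Finset.prod_mul_distrib, Finset.prod_const]
  rw [cAF_pow, prod_pt (fun q hq => hQ0 q (hT hq))]

lemma lam_rec {dR : ℝ} (Q : Finset ℕ) (hQ0 : ∀ q ∈ Q, 2 ≤ q) (m : ℕ) (hm : m ≠ 0) :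
    Fch dR Q.toList m = (if m = 1 then (1:ℝ) else 0)
      + ∑ T ∈ Q.powerset.erase ∅, (if (∏ q ∈ T, q) ∣ m
          then (dR * (-1:ℝ) ^ (T.card + 1)) * Fch dR Q.toList (m / ∏ q ∈ T, q) else 0) := by
  set lam := Fch dR Q.toList with hlam
  have hinv := chain_inv dR Q.toList (fun q hq => hQ0 q (Finset.mem_toList.1 hq))
  have happ : (Mch dR Q.toList * lam) m = (1:AF) m := by rw [hinv]
  have hexp : Mch dR Q.toList * lam
      = cAF dR * (Pch Q.toList * lam) - cAF (dR - 1) * lam := by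
    rw [Mch]; ring
  rw [hexp] at happ
  have hsub : (cAF dR * (Pch Q.toList * lam) - cAF (dR - 1) * lam) m
      = (cAF dR * (Pch Q.toList * lam)) m - (cAF (dR - 1) * lam) m := rfl
  rw [hsub, cAF_mul_apply, cAF_mul_apply] at happ
  -- expand (Pch * lam) m
  have hP0 : ∀ T : Finset ℕ, T ∈ Q.powerset → (∏ q ∈ T, q) ≠ 0 := by
    intro T hT
    rw [Finset.mem_powerset] at hT
    exact Finset.prod_ne_zero_iff.2 (fun q hq => by have := hQ0 q (hT hq); omega)
  have hPl : (Pch Q.toList * lam) m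
      = ∑ T ∈ Q.powerset, (-1:ℝ) ^ T.card
          * (if (∏ q ∈ T, q) ∣ m then lam (m / ∏ q ∈ T, q) else 0) := by
    rw [Pch_expand Q (fun q hq => by have := hQ0 q hq; omega), Finset.sum_mul, AF_sum_apply]
    apply Finset.sum_congr rfl
    intro T hT
    rw [mul_assoc, cAF_mul_apply, pt_mul_apply (hP0 T hT)]
  rw [hPl] at happ
  -- peel off the empty set
  have hsplit : ∑ T ∈ Q.powerset, (-1:ℝ) ^ T.card
          * (if (∏ q ∈ T, q) ∣ m then lam (m / ∏ q ∈ T, q) else 0)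
      = (∑ T ∈ Q.powerset.erase ∅, (-1:ℝ) ^ T.card
          * (if (∏ q ∈ T, q) ∣ m then lam (m / ∏ q ∈ T, q) else 0)) + lam m := by
    rw [← Finset.sum_erase_add Q.powerset _ (Finset.empty_mem_powerset Q)]
    congr 1
    rw [Finset.card_empty, pow_zero, Finset.prod_empty, one_mul]
    rw [if_pos (one_dvd m), Nat.div_one]
  rw [hsplit] at happ
  rw [ArithmeticFunction.one_apply] at happ
  have hgoal : ∑ T ∈ Q.powerset.erase ∅, (if (∏ q ∈ T, q) ∣ m
          then (dR * (-1:ℝ) ^ (T.card + 1)) * lam (m / ∏ q ∈ T, q) else 0)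
      = -dR * ∑ T ∈ Q.powerset.erase ∅, (-1:ℝ) ^ T.card
          * (if (∏ q ∈ T, q) ∣ m then lam (m / ∏ q ∈ T, q) else 0) := by
    rw [Finset.mul_sum]
    apply Finset.sum_congr rfl
    intro T _
    split
    · rw [pow_succ]; ring
    · ring
  rw [hgoal]
  linarith [happ]


/-! ### The representation of a solution in terms of lam -/

def PP (T : Finset ℕ) : ℕ := ∏ q ∈ T, q

def cc (dR : ℝ) (T : Finset ℕ) : ℝ := dR * (-1:ℝ) ^ (T.card + 1)

lemma representation (Q : Finset ℕ) (hQ0 : ∀ q ∈ Q, q ≠ 0) (dR : ℝ) (lam : ℕ → ℝ)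
    (hlam : ∀ m : ℕ, m ≠ 0 → lam m = (if m = 1 then (1:ℝ) else 0)
      + ∑ T ∈ Q.powerset.erase ∅, (if PP T ∣ m then cc dR T * lam (m / PP T) else 0))
    (sn : ℕ → ℝ) (n : ℕ) (hn : 1 ≤ n) :
    sn n = (∑ m ∈ Icc 1 n, lam m * (sn (n / m)
        - ∑ T ∈ Q.powerset.erase ∅, cc dR T * sn (n / m / PP T)))
      + sn 0 * (∑ m ∈ Icc 1 n, lam m *
          ∑ T ∈ (Q.powerset.erase ∅).filter (fun T => n < m * PP T), cc dR T) := by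
  set TT := Q.powerset.erase ∅ with hTT
  have hPpos : ∀ T ∈ TT, 0 < PP T := by
    intro T hT
    rw [hTT, Finset.mem_erase, Finset.mem_powerset] at hT
    apply Nat.pos_of_ne_zero
    exact Finset.prod_ne_zero_iff.2 (fun q hq => hQ0 q (hT.2 hq))
  set S := ∑ m ∈ Icc 1 n, lam m * sn (n / m) with hS
  set A := ∑ p ∈ Icc 1 n ×ˢ TT,
      (if p.1 * PP p.2 ≤ n then lam p.1 * cc dR p.2 * sn (n / (p.1 * PP p.2)) else 0) with hA
  set B := ∑ p ∈ Icc 1 n ×ˢ TT,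
      (if n < p.1 * PP p.2 then lam p.1 * cc dR p.2 * sn 0 else 0) with hB
  set D := ∑ p ∈ Icc 1 n ×ˢ TT,
      (if PP p.2 ∣ p.1 then lam (p.1 / PP p.2) * cc dR p.2 * sn (n / p.1) else 0) with hD
  -- Step 1 : the main sum equals S - (A + B)
  have step1 : ∑ m ∈ Icc 1 n, lam m * (sn (n / m) - ∑ T ∈ TT, cc dR T * sn (n / m / PP T))
      = S - (A + B) := by
    have expand : ∀ m ∈ Icc 1 n,
        lam m * (sn (n / m) - ∑ T ∈ TT, cc dR T * sn (n / m / PP T))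
        = lam m * sn (n / m) - ∑ T ∈ TT,
            ((if m * PP T ≤ n then lam m * cc dR T * sn (n / (m * PP T)) else 0)
              + (if n < m * PP T then lam m * cc dR T * sn 0 else 0)) := by
      intro m _
      rw [mul_sub, Finset.mul_sum]
      congr 1
      apply Finset.sum_congr rfl
      intro T _
      rw [Nat.div_div_eq_div_mul]
      rcases le_or_gt (m * PP T) n with h | h
      · rw [if_pos h, if_neg (by omega)]
        ring
      · rw [if_neg (by omega), if_pos h, Nat.div_eq_of_lt h]
        ring
    rw [Finset.sum_congr rfl expand, Finset.sum_sub_distrib, ← hS]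
    congr 1
    rw [hA, hB, ← Finset.sum_add_distrib, Finset.sum_product]
  -- Step 2 : A = D via the bijection (m, T) ↦ (m * PP T, T)
  have mulcancel : ∀ (m : ℕ) (T : Finset ℕ), T ∈ TT → m * PP T / PP T = m := by
    intro m T hT
    exact Nat.mul_div_cancel m (hPpos T hT)
  have step2 : A = D := by
    rw [hA, hD, ← Finset.sum_filter, ← Finset.sum_filter]
    apply Finset.sum_nbij' (fun p => (p.1 * PP p.2, p.2)) (fun p => (p.1 / PP p.2, p.2))
    · rintro ⟨m, T⟩ hp
      simp only [Finset.mem_filter, Finset.mem_product, Finset.mem_Icc] at hp ⊢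
      obtain ⟨⟨⟨hm1, _⟩, hT⟩, hle⟩ := hp
      have hPp := hPpos T hT
      have hpos : 0 < m * PP T := Nat.mul_pos (by omega) hPp
      exact ⟨⟨⟨by omega, hle⟩, hT⟩, Dvd.intro_left m rfl⟩
    · rintro ⟨r, T⟩ hp
      simp only [Finset.mem_filter, Finset.mem_product, Finset.mem_Icc] at hp ⊢
      obtain ⟨⟨⟨hr1, hr2⟩, hT⟩, hdvd⟩ := hp
      have hPp := hPpos T hT
      have hPler : PP T ≤ r := Nat.le_of_dvd (by omega) hdvd
      have hdiv1 : 1 ≤ r / PP T := (Nat.one_le_div_iff hPp).2 hPler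
      have hdivle : r / PP T ≤ r := Nat.div_le_self r (PP T)
      have hcan : r / PP T * PP T = r := Nat.div_mul_cancel hdvd
      exact ⟨⟨⟨hdiv1, by omega⟩, hT⟩, by omega⟩
    · rintro ⟨m, T⟩ hp
      simp only [Finset.mem_filter, Finset.mem_product, Finset.mem_Icc] at hp
      obtain ⟨⟨⟨hm1, _⟩, hT⟩, _⟩ := hp
      simp only [Prod.mk.injEq]
      exact ⟨mulcancel m T hT, trivial⟩
    · rintro ⟨r, T⟩ hp
      simp only [Finset.mem_filter, Finset.mem_product, Finset.mem_Icc] at hp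
      obtain ⟨⟨⟨hr1, _⟩, hT⟩, hdvd⟩ := hp
      simp only [Prod.mk.injEq]
      exact ⟨Nat.div_mul_cancel hdvd, trivial⟩
    · rintro ⟨m, T⟩ hp
      simp only [Finset.mem_filter, Finset.mem_product, Finset.mem_Icc] at hp
      obtain ⟨⟨⟨hm1, _⟩, hT⟩, _⟩ := hp
      simp only
      rw [mulcancel m T hT]
  -- Step 3 : D = S - sn n
  have step3 : D = S - sn n := by
    rw [hD, Finset.sum_product]
    have inner : ∀ m ∈ Icc 1 n,
        (∑ T ∈ TT, if PP T ∣ m then lam (m / PP T) * cc dR T * sn (n / m) else 0)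
        = (lam m - (if m = 1 then (1:ℝ) else 0)) * sn (n / m) := by
      intro m hm
      rw [Finset.mem_Icc] at hm
      have hm0 : m ≠ 0 := by omega
      have hl := hlam m hm0
      have factor : (∑ T ∈ TT, if PP T ∣ m then lam (m / PP T) * cc dR T * sn (n / m) else 0)
          = (∑ T ∈ TT, if PP T ∣ m then cc dR T * lam (m / PP T) else 0) * sn (n / m) := by
        rw [Finset.sum_mul]
        apply Finset.sum_congr rfl
        intro T _
        split
        · ring
        · rw [zero_mul]
      rw [factor]
      congr 1
      linarith [hl]
    rw [Finset.sum_congr rfl inner]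
    have expand2 : ∀ m ∈ Icc 1 n, (lam m - (if m = 1 then (1:ℝ) else 0)) * sn (n / m)
        = lam m * sn (n / m) - (if m = 1 then sn (n / m) else 0) := by
      intro m _
      split <;> ring
    rw [Finset.sum_congr rfl expand2, Finset.sum_sub_distrib, ← hS]
    congr 1
    rw [Finset.sum_ite_eq' (Icc 1 n) 1 (fun m => sn (n / m))]
    rw [if_pos (Finset.mem_Icc.2 ⟨le_refl 1, hn⟩), Nat.div_one]
  -- Step 4 : B is the boundary term
  have step4 : B = sn 0 * (∑ m ∈ Icc 1 n, lam m *
      ∑ T ∈ TT.filter (fun T => n < m * PP T), cc dR T) := by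
    rw [hB, Finset.sum_product, Finset.mul_sum]
    apply Finset.sum_congr rfl
    intro m _
    rw [Finset.sum_filter, Finset.mul_sum, Finset.mul_sum]
    apply Finset.sum_congr rfl
    intro T _
    split <;> ring
  rw [step1, ← step4, step2, step3]
  ring


/-! ### Suffix positivity -/

section Alpha2

variable {α : ℝ}

lemma PiL_le_one (hα : 0 < α) {t : List ℕ} (hq : ∀ q ∈ t, 2 ≤ q) : PiL α t ≤ 1 := by
  induction t with
  | nil => rw [PiL_nil]
  | cons q t ih =>
    rw [PiL_cons]
    have h1 := factor_pos hα (hq q (List.mem_cons_self))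
    have h2 := factor_lt_one hα (hq q (List.mem_cons_self))
    have h3 := PiL_pos hα (fun r hr => hq r (List.mem_cons_of_mem q hr))
    have h4 := ih (fun r hr => hq r (List.mem_cons_of_mem q hr))
    nlinarith

lemma PiL_lt_one (hα : 0 < α) {t : List ℕ} (hq : ∀ q ∈ t, 2 ≤ q) (hne : t ≠ []) :
    PiL α t < 1 := by
  cases t with
  | nil => exact absurd rfl hne
  | cons q t =>
    rw [PiL_cons]
    have h1 := factor_pos hα (hq q (List.mem_cons_self))
    have h2 := factor_lt_one hα (hq q (List.mem_cons_self))
    have h3 := PiL_pos hα (fun r hr => hq r (List.mem_cons_of_mem q hr))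
    have h4 := PiL_le_one hα (fun r hr => hq r (List.mem_cons_of_mem q hr))
    nlinarith

lemma PiL_append (u v : List ℕ) : PiL α (u ++ v) = PiL α u * PiL α v := by
  rw [PiL, PiL, PiL, List.map_append, List.prod_append]

lemma DL_suffix_pos (hα : 0 < α) {dR : ℝ} (hd : 1 ≤ dR) {l : List ℕ}
    (hl2 : ∀ q ∈ l, 2 ≤ q) (hD : DL dR α l = 0) :
    ∀ t', t' <:+ l → t' ≠ l → 0 < DL dR α t' := by
  intro t' hsuf hne
  obtain ⟨u, hu⟩ := hsuf
  have hu0 : u ≠ [] := by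
    rintro rfl
    exact hne (by simpa using hu)
  have ht2 : ∀ q ∈ t', 2 ≤ q := fun q hq => hl2 q (by rw [← hu]; exact List.mem_append_right u hq)
  have hu2 : ∀ q ∈ u, 2 ≤ q := fun q hq => hl2 q (by rw [← hu]; exact List.mem_append_left t' hq)
  have hprod : PiL α l = PiL α u * PiL α t' := by rw [← hu, PiL_append]
  have h1 : 0 < PiL α u := PiL_pos hα hu2
  have h2 : PiL α u < 1 := PiL_lt_one hα hu2 hu0
  have h3 : 0 < PiL α t' := PiL_pos hα ht2
  have h4 : PiL α l < PiL α t' := by nlinarith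
  have hDl : DL dR α l = dR * PiL α l - (dR - 1) := rfl
  have hDt : DL dR α t' = dR * PiL α t' - (dR - 1) := rfl
  nlinarith

end Alpha2

end SUB

open SUB Finset in
theorem s_upper_bound_aux (Q : Finset ℕ) (hQ : ∀ q ∈ Q, Nat.Prime q)
    (d : ℕ) (hd : 2 ≤ d) (s : ℝ → ℝ)
    (hfloor : ∀ x : ℝ, 0 ≤ x → s x = s (⌊x⌋ : ℤ))
    (hrec : ∀ x : ℝ, 3 ≤ x → s x = d * DOp Q s x)
    (α : ℝ) (hα : 0 < α ∧ ((d : ℝ) - 1) / d = ∏ q ∈ Q, (1 - (q : ℝ) ^ (-α))) :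
    ∃ C : ℝ, 0 < C ∧ ∀ x : ℝ, 1 < x → s x ≤ C * x ^ α := by
  obtain ⟨hα0, hαeq⟩ := hα
  have hdR2' : (2:ℝ) ≤ (d:ℝ) := by exact_mod_cast hd
  set dR := (d : ℝ) with hdR
  have hdR1 : (1:ℝ) ≤ dR := by linarith
  have hdRpos : (0:ℝ) < dR := by linarith
  have hQ2 : ∀ q ∈ Q, 2 ≤ q := fun q hq => (hQ q hq).two_le
  have hQ0 : ∀ q ∈ Q, q ≠ 0 := fun q hq => by have := hQ2 q hq; omega
  -- Q is nonempty
  rcases Q.eq_empty_or_nonempty with rfl | hQne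
  · exfalso
    rw [Finset.prod_empty] at hαeq
    rw [div_eq_one_iff_eq (by positivity)] at hαeq
    linarith
  -- set up the list
  have hl2 : ∀ q ∈ Q.toList, 2 ≤ q := fun q hq => hQ2 q (Finset.mem_toList.1 hq)
  have hPiL : PiL α Q.toList = ∏ q ∈ Q, (1 - (q:ℝ) ^ (-α)) := by
    rw [PiL]
    exact Finset.prod_map_toList Q _
  have hDL0 : DL dR α Q.toList = 0 := by
    rw [DL, hPiL, ← hαeq]
    field_simp
    ring
  have hsufpos := DL_suffix_pos hα0 hdR1 hl2 hDL0
  -- destructure the list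
  rcases hlist : Q.toList with _ | ⟨q0, t0⟩
  · exfalso
    have := Finset.toList_eq_nil.1 hlist
    exact hQne.ne_empty this
  have hq0 : 2 ≤ q0 := hl2 q0 (by rw [hlist]; exact List.mem_cons_self)
  have hqt0 : ∀ r ∈ t0, 2 ≤ r := fun r hr => hl2 r (by rw [hlist]; exact List.mem_cons_of_mem q0 hr)
  have hsuft : ∀ t', t' <:+ t0 → 0 < DL dR α t' := by
    intro t' ht'
    have h1 : t' <:+ Q.toList := by
      rw [hlist]
      exact ht'.trans (List.suffix_cons q0 t0)
    apply hsufpos t' h1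
    intro heq
    have hlen1 : t'.length ≤ t0.length := List.IsSuffix.length_le ht'
    rw [heq, hlist] at hlen1
    simp at hlen1
  have hD0' : 0 ≤ DL dR α (q0 :: t0) := by rw [← hlist, hDL0]
  -- the fundamental nonnegative solution lam
  set lam : ℕ → ℝ := fun m => Fch dR Q.toList m with hlamdef
  have hlamNN : ∀ m, 0 ≤ lam m := fun m => NN_Fch hdR1 Q.toList m
  set c0 := (1 - (2:ℝ) ^ (-α))⁻¹ with hc0def
  have hc0pos : 0 < c0 := by
    have hx1 : (2:ℝ)^(-α) < 1 :=
      Real.rpow_lt_one_of_one_lt_of_neg one_lt_two (by linarith)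
    exact inv_pos.2 (by linarith)
  set Clam := c0 / DL dR α t0 with hClamdef
  have hDt0pos : 0 < DL dR α t0 := hsuft t0 (List.suffix_refl t0)
  have hClampos : 0 < Clam := div_pos hc0pos hDt0pos
  have hLbound : ∀ N : ℕ, ∑ m ∈ Icc 1 N, lam m ≤ Clam * (N:ℝ) ^ α := by
    intro N
    have := sumL_bound (dR := dR) hα0 hdR1 hq0 hqt0 hsuft hD0' N
    rw [hlamdef, hlist]
    exact this
  -- the recursion satisfied by lam
  have hlamrec : ∀ m : ℕ, m ≠ 0 → lam m = (if m = 1 then (1:ℝ) else 0)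
      + ∑ T ∈ Q.powerset.erase ∅, (if PP T ∣ m then cc dR T * lam (m / PP T) else 0) :=
    fun m hm => lam_rec Q hQ2 m hm
  -- the integer shadow of s
  set sn : ℕ → ℝ := fun n => s n with hsndef
  set TT := Q.powerset.erase ∅ with hTT
  set eF : ℕ → ℝ := fun j => sn j - ∑ T ∈ TT, cc dR T * sn (j / PP T) with heFdef
  -- vanishing of eF for j ≥ 3
  have hPpos : ∀ T ∈ TT, 0 < PP T := by
    intro T hT
    rw [hTT, Finset.mem_erase, Finset.mem_powerset] at hT
    exact Nat.pos_of_ne_zero (Finset.prod_ne_zero_iff.2 (fun q hq => hQ0 q (hT.2 hq)))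
  have hsfloor : ∀ T ∈ TT, ∀ j : ℕ, s ((j:ℝ) / ∏ q ∈ T, (q:ℝ)) = sn (j / PP T) := by
    intro T hT j
    have hPc : (∏ q ∈ T, (q:ℝ)) = ((PP T : ℕ) : ℝ) := by
      rw [PP, Nat.cast_prod]
    have hx0 : (0:ℝ) ≤ (j:ℝ) / ((PP T : ℕ) : ℝ) := by positivity
    rw [hPc, hfloor _ hx0, ← natCast_floor_eq_intCast_floor hx0]
    rw [Nat.floor_div_natCast, Nat.floor_natCast]
  have hvanish : ∀ j : ℕ, 3 ≤ j → eF j = 0 := by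
    intro j hj
    have hrecj := hrec (j:ℝ) (by exact_mod_cast hj)
    rw [DOp] at hrecj
    have hexp : (d:ℝ) * ∑ T ∈ Q.powerset.erase ∅,
          (-1:ℝ) ^ (T.card + 1) * s ((j:ℝ) / ∏ q ∈ T, (q:ℝ))
        = ∑ T ∈ TT, cc dR T * sn (j / PP T) := by
      rw [Finset.mul_sum]
      apply Finset.sum_congr rfl
      intro T hT
      rw [hsfloor T hT j, cc]
      ring
    rw [hexp] at hrecj
    rw [heFdef]
    simp only
    rw [← hrecj]
    ring
  -- the constants
  set E := max |eF 1| |eF 2| with hEdef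
  have hE0 : 0 ≤ E := le_trans (abs_nonneg _) (le_max_left _ _)
  have hEbound : ∀ j : ℕ, 1 ≤ j → eF j ≤ E := by
    intro j hj
    rcases Nat.lt_or_ge j 3 with h3 | h3
    · interval_cases j
      · exact le_trans (le_abs_self _) (le_max_left _ _)
      · exact le_trans (le_abs_self _) (le_max_right _ _)
    · rw [hvanish j h3]; exact hE0
  set Kc := ∑ T ∈ TT, |cc dR T| with hKcdef
  have hKc0 : 0 ≤ Kc := Finset.sum_nonneg fun T _ => abs_nonneg _
  -- the main integer bound
  have hmain : ∀ n : ℕ, 1 ≤ n → sn n ≤ (E + |sn 0| * Kc) * (Clam * (n:ℝ) ^ α) := by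
    intro n hn
    have hrep := representation Q hQ0 dR lam hlamrec sn n hn
    rw [← hTT] at hrep
    have hX : ∑ m ∈ Icc 1 n, lam m * (sn (n / m) - ∑ T ∈ TT, cc dR T * sn (n / m / PP T))
        ≤ ∑ m ∈ Icc 1 n, lam m * E := by
      apply Finset.sum_le_sum
      intro m hm
      rw [Finset.mem_Icc] at hm
      apply mul_le_mul_of_nonneg_left _ (hlamNN m)
      have hj : 1 ≤ n / m := (Nat.one_le_div_iff (by omega)).2 hm.2
      exact hEbound (n / m) hj
    have hY : sn 0 * (∑ m ∈ Icc 1 n, lam m *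
          ∑ T ∈ TT.filter (fun T => n < m * PP T), cc dR T)
        ≤ ∑ m ∈ Icc 1 n, |sn 0| * (lam m * Kc) := by
      rw [Finset.mul_sum]
      apply Finset.sum_le_sum
      intro m _
      have hinner : |∑ T ∈ TT.filter (fun T => n < m * PP T), cc dR T| ≤ Kc := by
        calc |∑ T ∈ TT.filter (fun T => n < m * PP T), cc dR T|
            ≤ ∑ T ∈ TT.filter (fun T => n < m * PP T), |cc dR T| :=
              Finset.abs_sum_le_sum_abs _ _
          _ ≤ Kc := by
              rw [hKcdef]
              exact Finset.sum_le_sum_of_subset_of_nonneg (Finset.filter_subset _ _)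
                (fun T _ _ => abs_nonneg _)
      calc sn 0 * (lam m * ∑ T ∈ TT.filter (fun T => n < m * PP T), cc dR T)
          ≤ |sn 0 * (lam m * ∑ T ∈ TT.filter (fun T => n < m * PP T), cc dR T)| :=
            le_abs_self _
        _ = |sn 0| * (|lam m| * |∑ T ∈ TT.filter (fun T => n < m * PP T), cc dR T|) := by
            rw [abs_mul, abs_mul]
        _ ≤ |sn 0| * (lam m * Kc) := by
            apply mul_le_mul_of_nonneg_left _ (abs_nonneg _)
            rw [abs_of_nonneg (hlamNN m)]
            exact mul_le_mul_of_nonneg_left hinner (hlamNN m)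
    calc sn n
        = (∑ m ∈ Icc 1 n, lam m * (sn (n / m) - ∑ T ∈ TT, cc dR T * sn (n / m / PP T)))
          + sn 0 * (∑ m ∈ Icc 1 n, lam m *
              ∑ T ∈ TT.filter (fun T => n < m * PP T), cc dR T) := hrep
      _ ≤ (∑ m ∈ Icc 1 n, lam m * E) + ∑ m ∈ Icc 1 n, |sn 0| * (lam m * Kc) :=
          add_le_add hX hY
      _ = ∑ m ∈ Icc 1 n, (E + |sn 0| * Kc) * lam m := by
          rw [← Finset.sum_add_distrib]
          apply Finset.sum_congr rfl
          intro m _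
          ring
      _ = (E + |sn 0| * Kc) * ∑ m ∈ Icc 1 n, lam m := by rw [← Finset.mul_sum]
      _ ≤ (E + |sn 0| * Kc) * (Clam * (n:ℝ) ^ α) := by
          apply mul_le_mul_of_nonneg_left (hLbound n)
          exact add_nonneg hE0 (mul_nonneg (abs_nonneg _) hKc0)
  -- conclusion
  set A' := (E + |sn 0| * Kc) * Clam with hA'def
  have hA'0 : 0 ≤ A' :=
    mul_nonneg (add_nonneg hE0 (mul_nonneg (abs_nonneg _) hKc0)) (le_of_lt hClampos)
  refine ⟨A' + 1, by linarith, ?_⟩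
  intro x hx
  have hx0 : (0:ℝ) ≤ x := by linarith
  have hx1 : (1:ℝ) ≤ x := by linarith
  set n := ⌊x⌋₊ with hndef
  have hn1 : 1 ≤ n := Nat.le_floor (by exact_mod_cast hx1)
  have hsx : s x = sn n := by
    rw [hfloor x hx0, ← natCast_floor_eq_intCast_floor hx0]
  have hnx : (n:ℝ) ≤ x := Nat.floor_le hx0
  have hrpow : (n:ℝ) ^ α ≤ x ^ α := Real.rpow_le_rpow (Nat.cast_nonneg n) hnx (le_of_lt hα0)
  have hxα : 0 ≤ x ^ α := Real.rpow_nonneg hx0 _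
  calc s x = sn n := hsx
    _ ≤ (E + |sn 0| * Kc) * (Clam * (n:ℝ) ^ α) := hmain n hn1
    _ = A' * (n:ℝ) ^ α := by rw [hA'def]; ring
    _ ≤ A' * x ^ α := mul_le_mul_of_nonneg_left hrpow hA'0
    _ ≤ (A' + 1) * x ^ α := by nlinarith


/-- **Lemma 4.** If `s(x) = s(⌊x⌋)` for `x ≥ 0`,
`s(x) = d·D_Q s(x)` for `x ≥ 3`, `s(x) > 0` for all `x ≥ 0` and
`s(0) < s(1) < s(2)`, then there is a constant `C > 0` with `s(x) ≤ C·x^α` for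
all `x > 1`, where `α = α(Q,d)` is the unique positive root of
`(d-1)/d = ∏_{q ∈ Q} (1 - q^{-x})`. -/
theorem s_upper_bound (Q : Finset ℕ) (hQ : ∀ q ∈ Q, Nat.Prime q)
    (d : ℕ) (hd : 2 ≤ d) (s : ℝ → ℝ)
    (hfloor : ∀ x : ℝ, 0 ≤ x → s x = s (⌊x⌋ : ℤ))
    (hrec : ∀ x : ℝ, 3 ≤ x → s x = d * DOp Q s x)
    (hpos : ∀ x : ℝ, 0 ≤ x → 0 < s x)
    (h01 : s 0 < s 1) (h12 : s 1 < s 2)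
    (α : ℝ) (hα : 0 < α ∧ ((d : ℝ) - 1) / d = ∏ q ∈ Q, (1 - (q : ℝ) ^ (-α))) :
    ∃ C : ℝ, 0 < C ∧ ∀ x : ℝ, 1 < x → s x ≤ C * x ^ α :=
  s_upper_bound_aux Q hQ d hd s hfloor hrec α hα
end SUB
end

section
/- Let Q be a finite set of prime numbers of cardinality at least 2, let d ≥ 2, and let α = α(Q,d) be the unique positive real root of (d−1)/d = ∏_{q∈Q}(1 − q^{−x}). Then the equation (d−1)/d = ∏_{q∈Q}(1 − q^{−z}) has no complex root z with Re(z) = α other than z = α itself; that is, if y is a nonzero real number then ∏_{q∈Q}(1 − q^{−(α+iy)}) ≠ (d−1)/d. -/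
open Complex Finset

lemma eq_abs_of_abs_one_sub (w : ℂ) (h : ‖1 - w‖ = 1 - ‖w‖) :
    w = (‖w‖ : ℂ) := by
  have h2 : ‖1 - w‖ ^ 2 = (1 - ‖w‖) ^ 2 := by rw [h]
  rw [Complex.sq_norm, Complex.normSq_sub, Complex.normSq_one] at h2
  have hmr : (1 * (starRingEnd ℂ) w).re = w.re := by simp
  have hs : Complex.normSq w = ‖w‖ ^ 2 := (Complex.sq_norm w).symm
  have hre : w.re = ‖w‖ := by nlinarith [h2, hs, hmr]
  have hs2 : w.re ^ 2 + w.im ^ 2 = ‖w‖ ^ 2 := by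
    rw [← hs, Complex.normSq_apply]; ring
  have him : w.im = 0 := by nlinarith [hs2, hre]
  apply Complex.ext <;> simp [hre, him]

lemma period_of_eq (q : ℕ) (hq : q.Prime) (α y : ℝ) (hy : y ≠ 0)
    (h : (q:ℂ) ^ (-((α:ℂ) + Complex.I * y)) = (((q:ℝ) ^ (-α) : ℝ) : ℂ)) :
    ∃ n : ℤ, n ≠ 0 ∧ y * Real.log q = 2 * Real.pi * n := by
  have hq1 : (1:ℝ) < q := by exact_mod_cast hq.one_lt
  have hq0R : (0:ℝ) < q := lt_trans one_pos hq1
  have hq0 : (q:ℂ) ≠ 0 := by exact_mod_cast hq0R.ne'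
  have hq0' : (((q:ℕ):ℝ):ℂ) ≠ 0 := by exact_mod_cast hq0R.ne'
  rw [show ((q:ℕ):ℂ) = (((q:ℕ):ℝ):ℂ) by push_cast; ring] at h
  rw [Complex.cpow_def_of_ne_zero hq0', Complex.ofReal_cpow hq0R.le,
    Complex.cpow_def_of_ne_zero hq0', ← Complex.ofReal_log hq0R.le,
    Complex.exp_eq_exp_iff_exists_int] at h
  obtain ⟨n, hn⟩ := h
  have him := congrArg Complex.im hn
  simp only [Complex.mul_im, Complex.add_im, Complex.neg_im, Complex.neg_re,
    Complex.ofReal_re, Complex.ofReal_im, Complex.add_re, Complex.mul_re,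
    Complex.I_re, Complex.I_im, Complex.intCast_re, Complex.intCast_im,
    Complex.ofReal_neg, Complex.re_ofNat, Complex.im_ofNat] at him
  have him' : y * Real.log q = 2 * Real.pi * (-n : ℤ) := by push_cast; nlinarith [him]
  have hlq : Real.log q ≠ 0 := (Real.log_pos hq1).ne'
  refine ⟨-n, ?_, him'⟩
  rintro hn0
  rw [hn0] at him'
  exact mul_ne_zero hy hlq (him'.trans (by push_cast; ring))


/-- **Lemma 5.** For a finite set `Q` of primes with `|Q| ≥ 2` and
`d ≥ 2`, the equation `(d-1)/d = ∏_{q ∈ Q} (1 - q^{-z})` has no complex root on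
the line `Re z = α(Q,d)` other than `z = α(Q,d)` itself. -/
theorem no_root_on_critical_line (Q : Finset ℕ) (hQ : ∀ q ∈ Q, Nat.Prime q)
    (hk : 2 ≤ Q.card) (d : ℕ) (hd : 2 ≤ d) (α : ℝ)
    (hα : 0 < α ∧ ((d : ℝ) - 1) / d = ∏ q ∈ Q, (1 - (q : ℝ) ^ (-α))) :
    ∀ y : ℝ, y ≠ 0 →
      (∏ q ∈ Q, (1 - (q : ℂ) ^ (-((α : ℂ) + Complex.I * (y : ℂ))))) ≠
        ((d : ℂ) - 1) / d := by
  obtain ⟨hα0, hprod⟩ := hα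
  intro y hy h
  set w : ℕ → ℂ := fun q => (q:ℂ) ^ (-((α:ℂ) + Complex.I * (y:ℂ))) with hw
  have hq1 : ∀ q ∈ Q, (1:ℝ) < q := fun q hq => by exact_mod_cast (hQ q hq).one_lt
  have hq0R : ∀ q ∈ Q, (0:ℝ) < q := fun q hq => lt_trans one_pos (hq1 q hq)
  have habs : ∀ q ∈ Q, ‖w q‖ = (q:ℝ) ^ (-α) := by
    intro q hq
    rw [hw]
    simp only
    rw [show ((q:ℕ):ℂ) = (((q:ℕ):ℝ):ℂ) by push_cast; ring,
      Complex.norm_cpow_eq_rpow_re_of_pos (hq0R q hq)]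
    norm_num
  have hpos : ∀ q ∈ Q, (0:ℝ) < 1 - (q:ℝ) ^ (-α) := by
    intro q hq
    have := Real.rpow_lt_one_of_one_lt_of_neg (hq1 q hq) (neg_neg_of_pos hα0)
    linarith
  have hge : ∀ q ∈ Q, 1 - (q:ℝ) ^ (-α) ≤ ‖1 - w q‖ := by
    intro q hq
    have := norm_sub_norm_le (1:ℂ) (w q)
    simp only [norm_one] at this
    rw [habs q hq] at this
    exact this
  have hd2 : (2:ℝ) ≤ d := by exact_mod_cast hd
  have habs_prod : ∏ q ∈ Q, ‖1 - w q‖ = ((d:ℝ) - 1) / d := by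
    rw [← Complex.norm_prod, h]
    rw [show ((d:ℂ) - 1) / d = ((((d:ℝ) - 1) / d : ℝ) : ℂ) by push_cast; ring]
    rw [Complex.norm_real, Real.norm_eq_abs]
    exact abs_of_nonneg (div_nonneg (by linarith) (by linarith))
  have heq : ∀ q ∈ Q, ‖1 - w q‖ = 1 - (q:ℝ) ^ (-α) := by
    by_contra hcon
    push_neg at hcon
    obtain ⟨q, hq, hne⟩ := hcon
    have hlt := Finset.prod_lt_prod (f := fun q : ℕ => 1 - (q:ℝ) ^ (-α))
      (g := fun q : ℕ => ‖1 - w q‖) hpos hge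
      ⟨q, hq, lt_of_le_of_ne (hge q hq) (Ne.symm hne)⟩
    rw [habs_prod, ← hprod] at hlt
    exact lt_irrefl _ hlt
  have hperiod : ∀ q ∈ Q, ∃ n : ℤ, n ≠ 0 ∧ y * Real.log q = 2 * Real.pi * n := by
    intro q hq
    have h1 : ‖1 - w q‖ = 1 - ‖w q‖ := by
      rw [heq q hq, habs q hq]
    have h2 := eq_abs_of_abs_one_sub (w q) h1
    rw [habs q hq] at h2
    exact period_of_eq q (hQ q hq) α y hy h2
  obtain ⟨p, hp, q, hq, hpq⟩ := Finset.one_lt_card.mp (lt_of_lt_of_le one_lt_two hk)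
  obtain ⟨n, hn0, hn⟩ := hperiod p hp
  obtain ⟨m, hm0, hm⟩ := hperiod q hq
  have hlp : (0:ℝ) < Real.log p := Real.log_pos (hq1 p hp)
  have hlq : (0:ℝ) < Real.log q := Real.log_pos (hq1 q hq)
  have hkey : (m:ℝ) * Real.log p = (n:ℝ) * Real.log q := by
    have h1 : (m:ℝ) * (y * Real.log p) = (n:ℝ) * (y * Real.log q) := by
      rw [hn, hm]; ring
    have h2 : y * ((m:ℝ) * Real.log p - (n:ℝ) * Real.log q) = 0 := by linarith
    rcases mul_eq_zero.mp h2 with h3 | h3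
    · exact absurd h3 hy
    · linarith
  have habseq : (m.natAbs : ℝ) * Real.log p = (n.natAbs : ℝ) * Real.log q := by
    have := congrArg (|·|) hkey
    simp only [abs_mul, abs_of_pos hlp, abs_of_pos hlq] at this
    rw [Nat.cast_natAbs, Nat.cast_natAbs]
    push_cast
    exact this
  have hlogpow : Real.log ((p:ℝ) ^ m.natAbs) = Real.log ((q:ℝ) ^ n.natAbs) := by
    rw [Real.log_pow, Real.log_pow]; exact_mod_cast habseq
  have hppos : (0:ℝ) < (p:ℝ) ^ m.natAbs := pow_pos (hq0R p hp) _
  have hqpos : (0:ℝ) < (q:ℝ) ^ n.natAbs := pow_pos (hq0R q hq) _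
  have hpowR : (p:ℝ) ^ m.natAbs = (q:ℝ) ^ n.natAbs := by
    rw [← Real.exp_log hppos, ← Real.exp_log hqpos, hlogpow]
  have hpow : p ^ m.natAbs = q ^ n.natAbs := by exact_mod_cast hpowR
  have hdvd : p ∣ q ^ n.natAbs := hpow ▸ dvd_pow_self p (Int.natAbs_ne_zero.mpr hm0)
  have := (Nat.prime_dvd_prime_iff_eq (hQ p hp) (hQ q hq)).mp
    ((hQ p hp).dvd_of_dvd_pow hdvd)
  exact hpq this
end
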